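/- arXiv:2104.10755 — 5 statements merged into one kernel-verified Lean document; each statement's English description precedes it below -/
import Mathlib

section
/- Let n ≥ 2 be an integer and let S be a nonempty subset of {1, …, ⌊n/2⌋}. If the circulant graph Circ(n,S) is a nut graph, then n/2 ∉ S (i.e., every element of S is strictly smaller than n/2), the number of odd elements of S equals the number of even elements of S, and consequently, writing t for this common number, t > 0 and Circ(n,S) is 4t-regular. -/
open Finset Polynomial

/-- The circulant graph `Circ(n, S)` on the vertex set `Fin n` (identified with `ℤ/nℤ`):
distinct vertices `i` and `j` are adjacent iff `i - j ≡ ±s (mod n)` for some `s ∈ S`. -/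
def circ (n : ℕ) (S : Finset ℕ) : SimpleGraph (Fin n) where
  Adj i j := i ≠ j ∧ ∃ s ∈ S,
      ((i.val : ZMod n) - (j.val : ZMod n) = (s : ZMod n) ∨
        (j.val : ZMod n) - (i.val : ZMod n) = (s : ZMod n))
  symm := by
    constructor
    rintro i j ⟨hij, s, hs, h⟩
    exact ⟨hij.symm, s, hs, h.symm⟩
  loopless := by
    constructor
    rintro i ⟨h, -⟩
    exact h rfl

open Classical in
/-- The adjacency matrix (over `ℚ`) of a graph on `Fin n`. -/
noncomputable def adjMat {n : ℕ} (G : SimpleGraph (Fin n)) :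
    Matrix (Fin n) (Fin n) ℚ :=
  Matrix.of fun i j => if G.Adj i j then 1 else 0

/-- A graph on at least two vertices is a nut graph if the kernel of its rational
adjacency matrix is one-dimensional, spanned by a vector having no zero entries. -/
def IsNutGraph {n : ℕ} (G : SimpleGraph (Fin n)) : Prop :=
  2 ≤ n ∧ ∃ v : Fin n → ℚ, (∀ i, v i ≠ 0) ∧ (adjMat G).mulVec v = 0 ∧
    ∀ w : Fin n → ℚ, (adjMat G).mulVec w = 0 → ∃ c : ℚ, w = c • v

open Classical in
/-- The degree of a vertex of a graph on `Fin n`. -/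
noncomputable def degOf {n : ℕ} (G : SimpleGraph (Fin n)) (v : Fin n) : ℕ :=
  (Finset.univ.filter fun w => G.Adj v w).card

/-- A graph is `d`-regular if every vertex has degree `d`. -/
def IsRegularGraph {n : ℕ} (G : SimpleGraph (Fin n)) (d : ℕ) : Prop :=
  ∀ v, degOf G v = d

/-- The eigenvalue polynomial `P(y) = ∑_{k=1}^{n-1} a_k y^k`, where `a_k = 1` iff
`k ∈ S` or `n - k ∈ S`. -/
noncomputable def Pval (n : ℕ) (S : Finset ℕ) (y : ℂ) : ℂ :=
  ∑ k ∈ Finset.Ico 1 n, (if k ∈ S ∨ n - k ∈ S then (1 : ℂ) else 0) * y ^ k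

/-- `ω = e^{2πi/n}`. -/
noncomputable def omegaC (n : ℕ) : ℂ :=
  Complex.exp (2 * (Real.pi : ℂ) * Complex.I / (n : ℂ))

/-- The generator set `S_t = {1, …, 2t+1} \ {t}`. -/
def St (t : ℕ) : Finset ℕ := (Finset.Icc 1 (2 * t + 1)).erase t

/-- The polynomial `Q_t(y) = y^{4t+3} − y^{3t+2} + y^{3t+1} − y^{2t+2} + y^{2t+1}
− y^{t+2} + y^{t+1} − 1` over `ℤ`. -/
noncomputable def Qt (t : ℕ) : Polynomial ℤ :=
  X ^ (4 * t + 3) - X ^ (3 * t + 2) + X ^ (3 * t + 1) - X ^ (2 * t + 2)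
    + X ^ (2 * t + 1) - X ^ (t + 2) + X ^ (t + 1) - 1


lemma circ_val_cast {n : ℕ} (i k : Fin n) :
    (((i + k).val : ℕ) : ZMod n) = (i.val : ZMod n) + (k.val : ZMod n) := by
  rw [Fin.val_add, ZMod.natCast_mod, Nat.cast_add]

lemma circ_adj_add {n : ℕ} {S : Finset ℕ} (i j k : Fin n) :
    (circ n S).Adj (i + k) (j + k) ↔ (circ n S).Adj i j := by
  have hne : (i + k ≠ j + k) ↔ i ≠ j :=
    not_congr ⟨fun h => add_right_cancel h, fun h => by rw [h]⟩
  show (_ ∧ _) ↔ (_ ∧ _)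
  rw [circ_val_cast i k, circ_val_cast j k,
    show ((i.val:ZMod n)+k.val) - ((j.val:ZMod n)+k.val) = (i.val:ZMod n) - j.val from by ring,
    show ((j.val:ZMod n)+k.val) - ((i.val:ZMod n)+k.val) = (j.val:ZMod n) - i.val from by ring,
    hne]

lemma zmod_nat_inj {n a b : ℕ} (hn : 0 < n) (ha : a < n) (hb : b < n)
    (h : (a : ZMod n) = b) : a = b := by
  haveI : NeZero n := ⟨by omega⟩
  have := congrArg ZMod.val h
  rwa [ZMod.val_cast_of_lt ha, ZMod.val_cast_of_lt hb] at this

lemma zmod_neg_cast {n a : ℕ} (h : a ≤ n) : ((n - a : ℕ) : ZMod n) = -(a : ZMod n) := by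
  rw [Nat.cast_sub h, ZMod.natCast_self, zero_sub]

lemma adjMat_apply' {n : ℕ} (G : SimpleGraph (Fin n)) [DecidableRel G.Adj] (i j : Fin n) :
    adjMat G i j = if G.Adj i j then 1 else 0 := by
  unfold adjMat; simp only [Matrix.of_apply]; congr 1

lemma mulVec_apply' {n : ℕ} (M : Matrix (Fin n) (Fin n) ℚ) (v : Fin n → ℚ) (i : Fin n) :
    M.mulVec v i = ∑ j, M i j * v j := rfl

/-- If `Circ(n,S)` is a nut graph, then every element of `S` is
strictly smaller than `n/2`, the number of odd elements of `S` equals the number of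
even elements of `S`, and for this common number `t` we have `t > 0` and `Circ(n,S)`
is `4t`-regular. -/
theorem circulant_nut_equally_many_even_odd
    (n : ℕ) (hn : 2 ≤ n) (S : Finset ℕ) (hS : S.Nonempty)
    (hSsub : S ⊆ Finset.Icc 1 (n / 2))
    (hnut : IsNutGraph (circ n S)) :
    (∀ s ∈ S, 2 * s < n) ∧
    (S.filter fun s => Odd s).card = (S.filter fun s => Even s).card ∧
    0 < (S.filter fun s => Odd s).card ∧
    IsRegularGraph (circ n S) (4 * (S.filter fun s => Odd s).card) := by
  classical
  obtain ⟨hn2, v, hv0, hAv, huniq⟩ := hnut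
  haveI : NeZero n := ⟨by omega⟩
  have hAv' : ∀ i : Fin n, ∑ j, (if (circ n S).Adj i j then (1:ℚ) else 0) * v j = 0 := by
    intro i
    have h := congrFun hAv i
    rw [mulVec_apply'] at h
    simp only [adjMat_apply', Pi.zero_apply] at h
    exact h
  -- the shifted vector is in the kernel
  have hwker : (adjMat (circ n S)).mulVec (fun j => v (j + 1)) = 0 := by
    funext i
    rw [mulVec_apply', Pi.zero_apply]
    have h2 := congrFun hAv (i + 1)
    rw [mulVec_apply', Pi.zero_apply] at h2
    rw [← Equiv.sum_comp (Equiv.addRight (1 : Fin n))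
      (fun j => adjMat (circ n S) (i+1) j * v j)] at h2
    simp only [Equiv.coe_addRight] at h2
    rw [← h2]
    refine Finset.sum_congr rfl fun j _ => ?_
    congr 1
    rw [adjMat_apply', adjMat_apply', circ_adj_add]
  obtain ⟨c, hc⟩ := huniq _ hwker
  have hcv : ∀ j : Fin n, v (j + 1) = c * v j := by
    intro j
    have := congrFun hc j
    simpa using this
  set v0 := v ⟨0, by omega⟩ with hv0def
  have hpow : ∀ m (hm : m < n), v ⟨m, hm⟩ = c ^ m * v0 := by
    intro m
    induction m with
    | zero => intro hm; simp [hv0def]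
    | succ k ih =>
      intro hm
      have hk : k < n := by omega
      have he : (⟨k, hk⟩ : Fin n) + 1 = ⟨k+1, hm⟩ := by
        apply Fin.ext
        simp only [Fin.val_add, Fin.val_one', Fin.val_mk]
        rw [Nat.mod_eq_of_lt (show 1 < n by omega)]
        exact Nat.mod_eq_of_lt hm
      rw [← he, hcv, ih hk]
      ring
  have hv00 : v0 ≠ 0 := hv0 _
  have hcn : c ^ n = 1 := by
    have hlt : n - 1 < n := by omega
    have hn1 : n - 1 + 1 = n := by omega
    have he : (⟨n-1, hlt⟩ : Fin n) + 1 = ⟨0, by omega⟩ := by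
      apply Fin.ext
      simp only [Fin.val_add, Fin.val_one', Fin.val_mk]
      rw [Nat.mod_eq_of_lt (show 1 < n by omega), hn1, Nat.mod_self]
    have h1 : v0 = c * (c ^ (n-1) * v0) := by
      have h0 : v0 = c * v ⟨n-1, hlt⟩ := by
        conv_lhs => rw [hv0def, ← he]
        exact hcv _
      rwa [hpow _ hlt] at h0
    have hcc : c ^ n = c * c ^ (n - 1) := by
      conv_lhs => rw [← hn1]
      rw [pow_succ]
      ring
    have h3 : (c ^ n - 1) * v0 = 0 := by
      rw [hcc]
      calc (c * c ^ (n-1) - 1) * v0 = c * (c ^ (n-1) * v0) - v0 := by ring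
        _ = v0 - v0 := by rw [← h1]
        _ = 0 := sub_self v0
    rcases mul_eq_zero.mp h3 with h | h
    · linarith
    · exact absurd h hv00
  have hc1 : c = 1 ∨ c = -1 := by
    have habs : |c| = 1 := by
      by_contra hne
      rcases lt_or_gt_of_ne hne with h | h
      · have := pow_lt_one₀ (abs_nonneg c) h (by omega : n ≠ 0)
        rw [← abs_pow, hcn] at this
        simp at this
      · have := one_lt_pow₀ h (by omega : n ≠ 0)
        rw [← abs_pow, hcn] at this
        simp at this
    rcases (abs_eq (by norm_num : (0:ℚ) ≤ 1)).mp habs with h | h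
    · exact Or.inl h
    · exact Or.inr h
  -- a neighbour of 0
  obtain ⟨s0, hs0⟩ := hS
  have hs0' := Finset.mem_Icc.mp (hSsub hs0)
  have hs0lt : s0 < n := by omega
  have hadjs0 : (circ n S).Adj 0 ⟨s0, hs0lt⟩ := by
    refine ⟨?_, s0, hs0, Or.inr ?_⟩
    · intro h
      have := congrArg Fin.val h
      simp only [Fin.val_zero] at this
      omega
    · show (((⟨s0, hs0lt⟩ : Fin n).val : ℕ) : ZMod n) - (((0:Fin n).val : ℕ) : ZMod n) = s0
      simp
  -- rule out c = 1
  have hcneg : c = -1 := by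
    rcases hc1 with h1 | h1
    · exfalso
      have hconst : ∀ j : Fin n, v j = v0 := by
        intro j
        have := hpow j.val j.isLt
        rw [h1, one_pow, one_mul] at this
        simpa using this
      have hrow := hAv' 0
      have heq : ∑ j, (if (circ n S).Adj 0 j then (1:ℚ) else 0) * v j
          = (∑ j, (if (circ n S).Adj 0 j then (1:ℚ) else 0)) * v0 := by
        rw [Finset.sum_mul]
        exact Finset.sum_congr rfl fun j _ => by rw [hconst j]
      rw [heq] at hrow
      rcases mul_eq_zero.mp hrow with h | h
      · have hnonneg : ∀ j ∈ Finset.univ, (0:ℚ) ≤ if (circ n S).Adj 0 j then (1:ℚ) else 0 :=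
          fun j _ => by split <;> norm_num
        have := (Finset.sum_eq_zero_iff_of_nonneg hnonneg).mp h ⟨s0, hs0lt⟩ (Finset.mem_univ _)
        rw [if_pos hadjs0] at this
        norm_num at this
      · exact hv00 h
    · exact h1
  have hEvenN : Even n := by
    rcases Nat.even_or_odd n with h | h
    · exact h
    · exfalso
      rw [hcneg, h.neg_one_pow] at hcn
      norm_num at hcn
  obtain ⟨k, hk⟩ := hEvenN
  have hvj : ∀ j : Fin n, v j = ((-1:ℚ)) ^ (j.val) * v0 := by
    intro j
    have := hpow j.val j.isLt
    rw [hcneg] at this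
    simpa using this
  -- row-0 alternating-sum equation
  have hsum0 : ∑ j, (if (circ n S).Adj 0 j then ((-1:ℚ))^(j.val) else 0) = 0 := by
    have hrow := hAv' 0
    have heq : ∑ j, (if (circ n S).Adj 0 j then (1:ℚ) else 0) * v j
        = (∑ j, (if (circ n S).Adj 0 j then ((-1:ℚ))^(j.val) else 0)) * v0 := by
      rw [Finset.sum_mul]
      refine Finset.sum_congr rfl fun j _ => ?_
      rw [hvj j]
      split <;> ring
    rw [heq] at hrow
    rcases mul_eq_zero.mp hrow with h | h
    · exact h
    · exact absurd h hv00
  -- characterize neighbours of 0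
  have hadj0 : ∀ j : Fin n, (circ n S).Adj 0 j ↔ ∃ s ∈ S, j.val = s ∨ j.val = n - s := by
    intro j
    constructor
    · rintro ⟨hne0, s, hs, h | h⟩
      · obtain ⟨h1, h2⟩ := Finset.mem_Icc.mp (hSsub hs)
        refine ⟨s, hs, Or.inr ?_⟩
        have h0 : (((0:Fin n).val : ℕ) : ZMod n) = 0 := by simp
        rw [h0, zero_sub] at h
        by_cases hj : j.val = 0
        · exfalso
          rw [hj] at h
          have hz : ((0:ℕ) : ZMod n) = (s : ZMod n) := by simpa using h
          have := zmod_nat_inj (by omega) (by omega) (by omega) hz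
          omega
        · have hz : ((n - j.val : ℕ) : ZMod n) = (s : ZMod n) := by
            rw [zmod_neg_cast (le_of_lt j.isLt), h]
          have hlt := j.isLt
          have := zmod_nat_inj (by omega) (by omega) (by omega) hz
          omega
      · obtain ⟨h1, h2⟩ := Finset.mem_Icc.mp (hSsub hs)
        refine ⟨s, hs, Or.inl ?_⟩
        have hz : ((j.val : ℕ) : ZMod n) = (s : ZMod n) := by simpa using h
        exact zmod_nat_inj (by omega) j.isLt (by omega) hz
    · rintro ⟨s, hs, hcase⟩
      obtain ⟨h1, h2⟩ := Finset.mem_Icc.mp (hSsub hs)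
      rcases hcase with h | h
      · refine ⟨?_, s, hs, Or.inr ?_⟩
        · intro he
          have := congrArg Fin.val he
          simp only [Fin.val_zero] at this
          omega
        · show ((j.val : ℕ) : ZMod n) - (((0:Fin n).val : ℕ) : ZMod n) = s
          simp [h]
      · refine ⟨?_, s, hs, Or.inl ?_⟩
        · intro he
          have := congrArg Fin.val he
          simp only [Fin.val_zero] at this
          omega
        · show (((0:Fin n).val : ℕ) : ZMod n) - ((j.val : ℕ) : ZMod n) = s
          have hz : ((j.val : ℕ) : ZMod n) = -(s : ZMod n) := by
            rw [h, zmod_neg_cast (by omega : s ≤ n)]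
          rw [hz]
          simp
  set N : Finset (Fin n) := Finset.univ.filter (fun j => (circ n S).Adj 0 j) with hNdef
  set T : Finset ℕ := S ∪ S.image (fun s => n - s) with hTdef
  have hNT : N.image Fin.val = T := by
    ext m
    simp only [hNdef, hTdef, Finset.mem_image, Finset.mem_filter, Finset.mem_union,
      Finset.mem_univ, true_and]
    constructor
    · rintro ⟨j, hj, rfl⟩
      rcases (hadj0 j).mp hj with ⟨s, hs, h | h⟩
      · left; rwa [h]
      · right; exact ⟨s, hs, by omega⟩
    · intro hm
      have hmlt : m < n := by
        rcases hm with hm | hm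
        · have := Finset.mem_Icc.mp (hSsub hm); omega
        · obtain ⟨s, hs, rfl⟩ := hm
          have := Finset.mem_Icc.mp (hSsub hs); omega
      refine ⟨⟨m, hmlt⟩, (hadj0 _).mpr ?_, rfl⟩
      rcases hm with hm | hm
      · exact ⟨m, hm, Or.inl rfl⟩
      · obtain ⟨s, hs, rfl⟩ := hm
        exact ⟨s, hs, Or.inr rfl⟩
  have hsumT : ∑ m ∈ T, ((-1:ℚ))^m = 0 := by
    rw [← hNT, Finset.sum_image (fun a _ b _ h => Fin.val_injective h)]
    calc ∑ j ∈ N, ((-1:ℚ))^(j.val)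
        = ∑ j, if (circ n S).Adj 0 j then ((-1:ℚ))^(j.val) else 0 := Finset.sum_filter _ _
      _ = 0 := hsum0
  have hinjS : ∀ a ∈ S, ∀ b ∈ S, n - a = n - b → a = b := by
    intro a ha b hb h
    have h1 := Finset.mem_Icc.mp (hSsub ha)
    have h2 := Finset.mem_Icc.mp (hSsub hb)
    omega
  have hparpow : ∀ a b : ℕ, a % 2 = b % 2 → ((-1:ℚ))^a = (-1)^b := by
    intro a b h
    rcases Nat.even_or_odd a with ha | ha
    · have hb : Even b := Nat.even_iff.mpr (by rw [← h]; exact Nat.even_iff.mp ha)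
      rw [ha.neg_one_pow, hb.neg_one_pow]
    · have hb : Odd b := Nat.odd_iff.mpr (by rw [← h]; exact Nat.odd_iff.mp ha)
      rw [ha.neg_one_pow, hb.neg_one_pow]
  have hsumS' : ∑ m ∈ S.image (fun s => n - s), ((-1:ℚ))^m = ∑ s ∈ S, ((-1:ℚ))^s := by
    rw [Finset.sum_image hinjS]
    refine Finset.sum_congr rfl fun s hs => ?_
    have h1 := Finset.mem_Icc.mp (hSsub hs)
    exact hparpow (n - s) s (by omega)
  have hintsub : ∀ x ∈ S ∩ S.image (fun s => n - s), x = k := by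
    intro x hx
    rw [Finset.mem_inter] at hx
    obtain ⟨hx1, hx2⟩ := hx
    obtain ⟨s, hs, heq⟩ := Finset.mem_image.mp hx2
    have p1 := Finset.mem_Icc.mp (hSsub hx1)
    have p2 := Finset.mem_Icc.mp (hSsub hs)
    omega
  have hkey : ∑ m ∈ T, ((-1:ℚ))^m + ∑ m ∈ S ∩ S.image (fun s => n - s), ((-1:ℚ))^m
      = ∑ m ∈ S, ((-1:ℚ))^m + ∑ m ∈ S.image (fun s => n - s), ((-1:ℚ))^m := by
    rw [hTdef]
    exact Finset.sum_union_inter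
  rw [hsumT, hsumS', zero_add] at hkey
  set O := (S.filter fun s => Odd s).card with hO
  set E := (S.filter fun s => Even s).card with hEc
  have hEO : ∑ s ∈ S, ((-1:ℚ))^s = (E:ℚ) - (O:ℚ) := by
    rw [← Finset.sum_filter_add_sum_filter_not S (fun s => Even s)]
    have h1 : ∑ s ∈ S.filter (fun s => Even s), ((-1:ℚ))^s = (E:ℚ) := by
      rw [Finset.sum_congr rfl (fun s hs => (Finset.mem_filter.mp hs).2.neg_one_pow),
        Finset.sum_const, nsmul_eq_mul, mul_one]
    have h2 : ∑ s ∈ S.filter (fun s => ¬ Even s), ((-1:ℚ))^s = -(O:ℚ) := by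
      have hfe : S.filter (fun s => ¬ Even s) = S.filter (fun s => Odd s) :=
        Finset.filter_congr (fun s _ => Nat.not_even_iff_odd)
      rw [hfe, Finset.sum_congr rfl (fun s hs => Odd.neg_one_pow (Finset.mem_filter.mp hs).2),
        Finset.sum_const, nsmul_eq_mul, mul_neg_one]
    rw [h1, h2]
    ring
  have hhalf : n / 2 = k := by omega
  have hns : n / 2 ∉ S := by
    intro hmem
    have hkS : k ∈ S := by rwa [hhalf] at hmem
    have hkim : k ∈ S.image (fun s => n - s) := Finset.mem_image.mpr ⟨k, hkS, by omega⟩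
    have hint : S ∩ S.image (fun s => n - s) = {k} := by
      apply Finset.Subset.antisymm
      · intro x hx
        rw [Finset.mem_singleton]
        exact hintsub x hx
      · intro x hx
        rw [Finset.mem_singleton] at hx
        subst hx
        exact Finset.mem_inter.mpr ⟨hkS, hkim⟩
    rw [hint, Finset.sum_singleton, hEO] at hkey
    have hz : ((-1:ℤ))^k = (E:ℤ) - O + ((E:ℤ) - O) := by exact_mod_cast hkey
    rcases Nat.even_or_odd k with h | h
    · rw [h.neg_one_pow] at hz; omega
    · rw [h.neg_one_pow] at hz; omega
  have hint0 : S ∩ S.image (fun s => n - s) = ∅ := by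
    rw [Finset.eq_empty_iff_forall_notMem]
    intro x hx
    have hxk := hintsub x hx
    subst hxk
    apply hns
    rw [hhalf]
    exact (Finset.mem_inter.mp hx).1
  rw [hint0, Finset.sum_empty, hEO] at hkey
  have hEOeq : E = O := by
    have hz : (0:ℤ) = (E:ℤ) - O + ((E:ℤ) - O) := by exact_mod_cast hkey
    omega
  have hcardsplit : O + E = S.card := by
    rw [hO, hEc,
      show (S.filter fun s => Even s) = S.filter (fun s => ¬ Odd s) from
        Finset.filter_congr (fun s _ => Nat.not_odd_iff_even.symm)]
    exact Finset.card_filter_add_card_filter_not _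
  have hpos : 0 < O := by
    have := Finset.card_pos.mpr ⟨s0, hs0⟩
    omega
  have hcardN : N.card = 4 * O := by
    have h1 : N.card = T.card := by
      rw [← hNT, Finset.card_image_of_injective _ Fin.val_injective]
    have h2 : T.card = S.card + (S.image fun s => n - s).card := by
      rw [hTdef]
      exact Finset.card_union_of_disjoint (Finset.disjoint_iff_inter_eq_empty.mpr hint0)
    have h3 : (S.image fun s => n - s).card = S.card :=
      Finset.card_image_of_injOn (fun a ha b hb h => hinjS a ha b hb h)
    omega
  refine ⟨?_, hEOeq.symm, hpos, ?_⟩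
  · intro s hs
    have h1 := Finset.mem_Icc.mp (hSsub hs)
    have : s ≠ n / 2 := fun h => hns (h ▸ hs)
    omega
  · intro u
    have hbij : (Finset.univ.filter fun w => (circ n S).Adj u w).card = N.card := by
      rw [hNdef]
      symm
      apply Finset.card_bij (fun j _ => j + u)
      · intro a ha
        rw [Finset.mem_filter] at ha ⊢
        refine ⟨Finset.mem_univ _, ?_⟩
        have h := (circ_adj_add 0 a u).mpr ha.2
        rwa [zero_add] at h
      · intro a _ b _ h
        exact add_right_cancel h
      · intro b hb
        rw [Finset.mem_filter] at hb
        refine ⟨b - u, ?_, sub_add_cancel b u⟩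
        rw [Finset.mem_filter]
        refine ⟨Finset.mem_univ _, ?_⟩
        have h : (circ n S).Adj (0 + u) ((b - u) + u) ↔ (circ n S).Adj 0 (b - u) :=
          circ_adj_add 0 (b - u) u
        rw [zero_add, sub_add_cancel] at h
        exact h.mp hb.2
    have hdeg : degOf (circ n S) u
        = (Finset.univ.filter fun w => (circ n S).Adj u w).card := by
      unfold degOf
      congr
    rw [hdeg, hbij, hcardN]
end

section
/- Let n be an even integer, n ≥ 4, and let S ⊆ {1, …, n/2 − 1} contain equally many odd and even elements (say t ≥ 1 of each). Then the circulant graph Circ(n,S) is a nut graph if and only if P(ω^j) ≠ 0 for every j ∈ {1, …, n/2 − 1}. -/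
open Finset Polynomial

lemma omega_prim' {n : ℕ} (hn : 0 < n) : IsPrimitiveRoot (omegaC n) n :=
  Complex.isPrimitiveRoot_exp n hn.ne'

lemma omega_pow_n {n : ℕ} (hn : 0 < n) : omegaC n ^ n = 1 :=
  (omega_prim' hn).pow_eq_one

lemma omega_pow_mod {n : ℕ} (hn : 0 < n) (a : ℕ) : omegaC n ^ a = omegaC n ^ (a % n) := by
  conv_lhs => rw [← Nat.div_add_mod a n]
  rw [pow_add, pow_mul, omega_pow_n hn, one_pow, one_mul]

lemma omega_pow_congr {n : ℕ} (hn : 0 < n) {a b : ℕ} (h : a % n = b % n) :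
    omegaC n ^ a = omegaC n ^ b := by
  rw [omega_pow_mod hn a, omega_pow_mod hn b, h]

lemma omega_half' {n : ℕ} (hn : 4 ≤ n) (he : Even n) : omegaC n ^ (n / 2) = -1 := by
  have hn0 : 0 < n := by omega
  obtain ⟨m, hm⟩ := he
  have h2 : 2 * (n / 2) = n := by omega
  have hsq : (omegaC n ^ (n / 2)) ^ 2 = 1 := by
    rw [← pow_mul, mul_comm, h2, omega_pow_n hn0]
  have hne : omegaC n ^ (n / 2) ≠ 1 :=
    (omega_prim' hn0).pow_ne_one_of_pos_of_lt (by omega) (by omega)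
  have : (omegaC n ^ (n / 2) - 1) * (omegaC n ^ (n / 2) + 1) = 0 := by
    ring_nf
    rw [← hsq]; ring
  rcases mul_eq_zero.1 this with h | h
  · exact absurd (by linear_combination h) hne
  · linear_combination h

lemma omega_conj' {n : ℕ} (hn : 0 < n) (j : ℕ) :
    (starRingEnd ℂ) (omegaC n ^ j) = (omegaC n ^ j)⁻¹ := by
  have : (starRingEnd ℂ) (omegaC n) = (omegaC n)⁻¹ := by
    rw [omegaC, ← Complex.exp_conj, ← Complex.exp_neg]
    congr 1
    have : ((n:ℂ)) ≠ 0 := by exact_mod_cast hn.ne'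
    rw [map_div₀]
    simp [Complex.conj_I, map_ofNat]
    ring
  rw [map_pow, this, inv_pow]

lemma omega_pow_ne_zero {n : ℕ} (hn : 0 < n) (j : ℕ) : omegaC n ^ j ≠ 0 := by
  intro h
  have := omega_pow_n hn
  have : omegaC n ≠ 0 := by
    intro h0; rw [h0] at this; simp [zero_pow hn.ne'] at this
  exact pow_ne_zero j this h

lemma omega_inv' {n : ℕ} (hn : 0 < n) {j : ℕ} (hj : j ≤ n) :
    (omegaC n ^ j)⁻¹ = omegaC n ^ (n - j) := by
  have : omegaC n ^ j * omegaC n ^ (n - j) = 1 := by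
    rw [← pow_add, Nat.add_sub_cancel' hj, omega_pow_n hn]
  exact inv_eq_of_mul_eq_one_right this

open Classical in
noncomputable def bC (n : ℕ) (S : Finset ℕ) (z : ZMod n) : ℂ :=
  if ∃ s ∈ S, z = (s : ZMod n) ∨ -z = (s : ZMod n) then 1 else 0

lemma natCast_zmod_eq_zero_iff {n s : ℕ} (hs1 : 1 ≤ s) (hs2 : s < n) :
    (s : ZMod n) ≠ 0 := by
  intro h
  rw [ZMod.natCast_eq_zero_iff] at h
  exact absurd (Nat.le_of_dvd (by omega) h) (by omega)

noncomputable abbrev AC (n : ℕ) (S : Finset ℕ) : Matrix (Fin n) (Fin n) ℂ :=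
  (adjMat (circ n S)).map (algebraMap ℚ ℂ)

lemma adj_entry {n : ℕ} (hn : 4 ≤ n) {S : Finset ℕ} (hS : S ⊆ Finset.Icc 1 (n / 2 - 1))
    (i j : Fin n) :
    AC n S i j = bC n S ((i.val : ZMod n) - (j.val : ZMod n)) := by
  classical
  rw [AC, adjMat, bC]
  simp only [Matrix.map_apply, Matrix.of_apply]
  rw [apply_ite (algebraMap ℚ ℂ), map_one, map_zero]
  congr 1
  simp only [eq_iff_iff]
  constructor
  · rintro ⟨-, s, hs, h⟩
    exact ⟨s, hs, by rwa [neg_sub]⟩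
  · rintro ⟨s, hs, h⟩
    have hs' := hS hs
    simp only [Finset.mem_Icc] at hs'
    have hsne : (s : ZMod n) ≠ 0 := natCast_zmod_eq_zero_iff hs'.1 (by omega)
    refine ⟨?_, s, hs, by rwa [neg_sub] at h⟩
    rintro rfl
    simp only [sub_self, neg_zero] at h
    rcases h with h | h <;> exact hsne h.symm

lemma bC_neg {n : ℕ} (S : Finset ℕ) (z : ZMod n) : bC n S (-z) = bC n S z := by
  classical
  rw [bC, bC]
  congr 1
  simp only [eq_iff_iff, neg_neg]
  constructor <;> · rintro ⟨s, hs, h⟩; exact ⟨s, hs, h.symm⟩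

lemma natCast_zmod_inj {n a b : ℕ} (ha : a < n) (hb : b < n) (h : (a : ZMod n) = b) :
    a = b := by
  have := congrArg ZMod.val h
  rwa [ZMod.val_cast_of_lt ha, ZMod.val_cast_of_lt hb] at this

lemma bC_indicator {n : ℕ} (hn : 4 ≤ n) {S : Finset ℕ} (hS : S ⊆ Finset.Icc 1 (n / 2 - 1))
    {k : ℕ} (hk1 : 1 ≤ k) (hk2 : k < n) :
    bC n S ((k : ℕ) : ZMod n) = if k ∈ S ∨ n - k ∈ S then 1 else 0 := by
  classical
  have hnk : ((n - k : ℕ) : ZMod n) = -(k : ZMod n) := by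
    have : ((n - k : ℕ) : ZMod n) + (k : ZMod n) = ((n : ℕ) : ZMod n) := by
      rw [← Nat.cast_add, Nat.sub_add_cancel hk2.le]
    rw [ZMod.natCast_self] at this
    linear_combination this
  rw [bC]
  congr 1
  simp only [eq_iff_iff]
  constructor
  · rintro ⟨s, hs, h⟩
    have hs' := hS hs
    simp only [Finset.mem_Icc] at hs'
    have hsn : s < n := by omega
    rcases h with h | h
    · exact Or.inl (natCast_zmod_inj hk2 hsn h ▸ hs)
    · have : ((n - k : ℕ) : ZMod n) = (s : ZMod n) := by rw [hnk, h]
      have := natCast_zmod_inj (by omega) hsn this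
      exact Or.inr (this ▸ hs)
  · rintro (h | h)
    · exact ⟨k, h, Or.inl rfl⟩
    · exact ⟨n - k, h, Or.inr (by rw [hnk])⟩


lemma bC_zero {n : ℕ} (hn : 4 ≤ n) {S : Finset ℕ} (hS : S ⊆ Finset.Icc 1 (n / 2 - 1)) :
    bC n S 0 = 0 := by
  classical
  rw [bC, if_neg]
  rintro ⟨s, hs, h⟩
  have hs' := hS hs
  simp only [Finset.mem_Icc] at hs'
  have : (s : ZMod n) ≠ 0 := natCast_zmod_eq_zero_iff hs'.1 (by omega)
  simp only [neg_zero] at h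
  rcases h with h | h <;> exact this h.symm

lemma sum_bC {n : ℕ} (hn : 4 ≤ n) {S : Finset ℕ} (hS : S ⊆ Finset.Icc 1 (n / 2 - 1))
    (j : Fin n) :
    ∑ d : Fin n, bC n S ((d.val : ℕ) : ZMod n) * omegaC n ^ (d.val * j.val)
      = Pval n S (omegaC n ^ j.val) := by
  classical
  rw [Fin.sum_univ_eq_sum_range (fun k => bC n S ((k : ℕ) : ZMod n) * omegaC n ^ (k * j.val)) n]
  rw [Finset.range_eq_Ico, Finset.sum_eq_sum_Ico_succ_bot (by omega : 0 < n)]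
  rw [Nat.cast_zero, bC_zero hn hS, zero_mul, zero_add, Pval]
  refine Finset.sum_congr rfl fun k hk => ?_
  simp only [Finset.mem_Ico] at hk
  rw [bC_indicator hn hS hk.1 hk.2, mul_comm k j.val, pow_mul]

lemma eig {n : ℕ} (hn : 4 ≤ n) {S : Finset ℕ} (hS : S ⊆ Finset.Icc 1 (n / 2 - 1)) (j : Fin n) :
    (AC n S).mulVec (fun i => omegaC n ^ (i.val * j.val))
      = fun i => Pval n S (omegaC n ^ j.val) * omegaC n ^ (i.val * j.val) := by
  classical
  haveI : NeZero n := ⟨by omega⟩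
  have hn0 : 0 < n := by omega
  funext i
  show ∑ k, AC n S i k * omegaC n ^ (k.val * j.val) = _
  have step1 : ∀ k, AC n S i k * omegaC n ^ (k.val * j.val)
      = bC n S ((i.val : ZMod n) - (k.val : ZMod n)) * omegaC n ^ (k.val * j.val) := by
    intro k; rw [adj_entry hn hS]
  simp only [step1]
  rw [← Equiv.sum_comp (Equiv.addLeft i)
    (fun k => bC n S ((i.val : ZMod n) - (k.val : ZMod n)) * omegaC n ^ (k.val * j.val))]
  have step2 : ∀ d : Fin n,
      bC n S ((i.val : ZMod n) - (((Equiv.addLeft i) d).val : ZMod n))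
        * omegaC n ^ (((Equiv.addLeft i) d).val * j.val)
      = bC n S ((d.val : ℕ) : ZMod n) * omegaC n ^ (d.val * j.val) * omegaC n ^ (i.val * j.val) := by
    intro d
    have hval : ((i + d : Fin n).val) = (i.val + d.val) % n := Fin.val_add i d
    have hcast : (((i + d : Fin n).val : ℕ) : ZMod n) = ((i.val : ZMod n) + (d.val : ZMod n)) := by
      rw [hval, ZMod.natCast_mod, Nat.cast_add]
    have hbc : (i.val : ZMod n) - (((i + d : Fin n).val : ℕ) : ZMod n) = -((d.val : ℕ) : ZMod n) := by
      rw [hcast]; ring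
    have hpow : omegaC n ^ ((i + d : Fin n).val * j.val)
        = omegaC n ^ (d.val * j.val) * omegaC n ^ (i.val * j.val) := by
      rw [← pow_add]
      apply omega_pow_congr hn0
      rw [hval, Nat.mod_mul_mod]
      congr 1
      ring
    show bC n S ((i.val : ZMod n) - (((i + d : Fin n).val : ℕ) : ZMod n))
        * omegaC n ^ ((i + d : Fin n).val * j.val) = _
    rw [hbc, bC_neg, hpow, mul_assoc]
  simp only [step2]
  rw [← Finset.sum_mul, sum_bC hn hS]

lemma Pval_one_ne {n : ℕ} (hn : 4 ≤ n) {S : Finset ℕ} (hS : S ⊆ Finset.Icc 1 (n / 2 - 1))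
    (hne : S.Nonempty) : Pval n S 1 ≠ 0 := by
  classical
  rw [Pval]
  simp only [one_pow, mul_one]
  rw [Finset.sum_boole]
  rw [Nat.cast_ne_zero]
  obtain ⟨s, hs⟩ := hne
  have hs' := hS hs
  simp only [Finset.mem_Icc] at hs'
  refine Finset.card_ne_zero_of_mem (a := s) ?_
  simp only [Finset.mem_filter, Finset.mem_Ico]
  exact ⟨⟨hs'.1, by omega⟩, Or.inl hs⟩

lemma Pval_neg_one {n : ℕ} (hn : 4 ≤ n) (he : Even n) {S : Finset ℕ}
    (hS : S ⊆ Finset.Icc 1 (n / 2 - 1)) {t : ℕ}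
    (hodd : (S.filter fun s => Odd s).card = t)
    (heven : (S.filter fun s => Even s).card = t) :
    Pval n S (-1) = 0 := by
  classical
  rw [Pval]
  have : ∀ k ∈ Finset.Ico 1 n,
      (if k ∈ S ∨ n - k ∈ S then (1:ℂ) else 0) * (-1) ^ k
      = if k ∈ S ∨ n - k ∈ S then (-1:ℂ) ^ k else 0 := by
    intro k _; split <;> simp
  rw [Finset.sum_congr rfl this, ← Finset.sum_filter]
  have hsn : ∀ s ∈ S, 1 ≤ s ∧ s ≤ n / 2 - 1 := by
    intro s hs; have := hS hs; simpa using this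
  have hT : (Finset.Ico 1 n).filter (fun k => k ∈ S ∨ n - k ∈ S)
      = S ∪ S.image (fun s => n - s) := by
    ext k
    simp only [Finset.mem_filter, Finset.mem_Ico, Finset.mem_union, Finset.mem_image]
    constructor
    · rintro ⟨⟨h1, h2⟩, h | h⟩
      · exact Or.inl h
      · exact Or.inr ⟨n - k, h, by omega⟩
    · rintro (h | ⟨s, hs, rfl⟩)
      · have := hsn k h; exact ⟨⟨this.1, by omega⟩, Or.inl h⟩
      · have := hsn s hs
        refine ⟨⟨by omega, by omega⟩, Or.inr ?_⟩
        rw [show n - (n - s) = s by omega]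
        exact hs
  rw [hT]
  have hdisj : Disjoint S (S.image fun s => n - s) := by
    rw [Finset.disjoint_left]
    rintro a ha hb
    simp only [Finset.mem_image] at hb
    obtain ⟨s, hs, rfl⟩ := hb
    have h1 := hsn s hs
    have h2 := hsn _ ha
    omega
  rw [Finset.sum_union hdisj]
  rw [Finset.sum_image (by intro a ha b hb h; have := hsn a ha; have := hsn b hb; beta_reduce at h; omega)]
  have hcongr : ∀ s ∈ S, ((-1:ℂ)) ^ (n - s) = (-1) ^ s := by
    intro s hs
    have h1 := hsn s hs
    have hpar : Even (n - s) ↔ Even s := by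
      rw [Nat.even_sub (by omega : s ≤ n)]
      obtain ⟨m, hm⟩ := he
      constructor
      · intro h; exact h.mp (by exact ⟨m, hm⟩)
      · intro h; exact iff_of_true ⟨m, hm⟩ h
    rcases Nat.even_or_odd s with h | h
    · rw [h.neg_one_pow, (hpar.mpr h).neg_one_pow]
    · have : Odd (n - s) :=
        Nat.not_even_iff_odd.mp (fun hc => Nat.not_even_iff_odd.mpr h (hpar.mp hc))
      rw [h.neg_one_pow, this.neg_one_pow]
  rw [Finset.sum_congr rfl hcongr]
  have hsplit : ∑ s ∈ S, ((-1:ℂ)) ^ s = 0 := by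
    rw [← Finset.sum_filter_add_sum_filter_not S (fun s => Even s)]
    have e1 : ∀ s ∈ S.filter (fun s => Even s), ((-1:ℂ)) ^ s = 1 := by
      intro s hs; simp only [Finset.mem_filter] at hs; exact hs.2.neg_one_pow
    have e2 : ∀ s ∈ S.filter (fun s => ¬ Even s), ((-1:ℂ)) ^ s = -1 := by
      intro s hs; simp only [Finset.mem_filter] at hs
      exact (Nat.not_even_iff_odd.mp hs.2).neg_one_pow
    rw [Finset.sum_congr rfl e1, Finset.sum_congr rfl e2]
    rw [Finset.sum_const, Finset.sum_const]
    have hcard : (S.filter fun s => ¬ Even s) = (S.filter fun s => Odd s) := by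
      ext s; simp [Nat.not_even_iff_odd]
    rw [hcard, hodd]
    have : (S.filter fun s => Even s).card = t := heven
    rw [this]
    simp
  rw [hsplit]
  simp


lemma Pval_conj (n : ℕ) (S : Finset ℕ) (y : ℂ) :
    (starRingEnd ℂ) (Pval n S y) = Pval n S ((starRingEnd ℂ) y) := by
  classical
  rw [Pval, Pval, map_sum]
  refine Finset.sum_congr rfl fun k _ => ?_
  rw [map_mul, map_pow, apply_ite (starRingEnd ℂ), map_one, map_zero]

lemma Pval_omega_sub {n : ℕ} (hn : 0 < n) (S : Finset ℕ) {j : ℕ} (hj : j ≤ n) :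
    Pval n S (omegaC n ^ (n - j)) = (starRingEnd ℂ) (Pval n S (omegaC n ^ j)) := by
  rw [Pval_conj, omega_conj' hn, omega_inv' hn hj]

noncomputable def Fmat (n : ℕ) : Matrix (Fin n) (Fin n) ℂ :=
  Matrix.of fun i j => omegaC n ^ (i.val * j.val)

lemma Fmat_det_ne_zero {n : ℕ} (hn : 0 < n) : (Fmat n).det ≠ 0 := by
  have hF : Fmat n = Matrix.vandermonde (fun i : Fin n => omegaC n ^ (i.val)) := by
    ext i j
    rw [Fmat, Matrix.vandermonde]
    simp [← pow_mul]
  rw [hF, Ne, Matrix.det_vandermonde_eq_zero_iff]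
  rintro ⟨i, j, hij, hne⟩
  exact hne (Fin.ext ((omega_prim' hn).pow_inj i.isLt j.isLt hij))

lemma ker_decomp {n : ℕ} (hn : 4 ≤ n) {S : Finset ℕ} (hS : S ⊆ Finset.Icc 1 (n / 2 - 1))
    (w : Fin n → ℂ) (hw : (AC n S).mulVec w = 0) :
    ∃ c : Fin n → ℂ, (∀ j : Fin n, Pval n S (omegaC n ^ j.val) ≠ 0 → c j = 0) ∧
      ∀ i : Fin n, w i = ∑ j : Fin n, c j * omegaC n ^ (i.val * j.val) := by
  classical
  have hn0 : 0 < n := by omega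
  have hdet : IsUnit (Fmat n).det := isUnit_iff_ne_zero.mpr (Fmat_det_ne_zero hn0)
  set F := Fmat n with hFdef
  set D : Matrix (Fin n) (Fin n) ℂ :=
    Matrix.diagonal (fun j : Fin n => Pval n S (omegaC n ^ j.val)) with hDdef
  have hAF : AC n S * F = F * D := by
    ext i j
    rw [Matrix.mul_apply, Matrix.mul_diagonal]
    have := congrFun (eig hn hS j) i
    simp only [Matrix.mulVec, dotProduct] at this
    rw [show ∑ k, AC n S i k * F k j = ∑ k, AC n S i k * omegaC n ^ (k.val * j.val) from rfl,
      this]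
    rw [hFdef, Fmat]
    simp only [Matrix.of_apply]
    ring
  set c : Fin n → ℂ := F⁻¹.mulVec w with hcdef
  have hFc : F.mulVec c = w := by
    rw [hcdef, Matrix.mulVec_mulVec, Matrix.mul_nonsing_inv _ hdet, Matrix.one_mulVec]
  have hDc : D.mulVec c = 0 := by
    have h1 : F.mulVec (D.mulVec c) = 0 := by
      rw [Matrix.mulVec_mulVec, ← hAF, ← Matrix.mulVec_mulVec, hFc, hw]
    have cancel : ∀ x : Fin n → ℂ, F⁻¹.mulVec (F.mulVec x) = x := by
      intro x
      rw [Matrix.mulVec_mulVec, Matrix.nonsing_inv_mul _ hdet, Matrix.one_mulVec]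
    have h2 := congrArg F⁻¹.mulVec h1
    rwa [cancel, Matrix.mulVec_zero] at h2
  refine ⟨c, ?_, ?_⟩
  · intro j hj
    have := congrFun hDc j
    rw [Matrix.mulVec_diagonal] at this
    simp only [Pi.zero_apply] at this
    exact (mul_eq_zero.mp this).resolve_left hj
  · intro i
    have := congrFun hFc i
    simp only [Matrix.mulVec, dotProduct] at this
    rw [← this]
    refine Finset.sum_congr rfl fun j _ => ?_
    rw [hFdef, Fmat]
    simp only [Matrix.of_apply]
    ring

lemma map_mulVec_cast {n : ℕ} (A : Matrix (Fin n) (Fin n) ℚ) (w : Fin n → ℚ) (i : Fin n) :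
    ((A.mulVec w i : ℚ) : ℂ) = (A.map (algebraMap ℚ ℂ)).mulVec (fun k => ((w k : ℚ) : ℂ)) i := by
  simp only [Matrix.mulVec, dotProduct, Matrix.map_apply]
  push_cast
  rfl

lemma rat_dual_sep (z : ℂ) (h : ∀ φ : ℂ →ₗ[ℚ] ℚ, φ z = 0) : z = 0 := by
  by_contra hz
  have B := Module.Basis.ofVectorSpace ℚ ℂ
  have hrepr : B.repr z ≠ 0 := by
    intro hc
    apply hz
    have : B.repr z = B.repr 0 := by rw [hc, map_zero]
    exact B.repr.injective this
  obtain ⟨b, hb⟩ := Finsupp.ne_iff.mp hrepr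
  exact hb (by simpa using h (B.coord b))

lemma phi_ker {n : ℕ} (A : Matrix (Fin n) (Fin n) ℚ) (w : Fin n → ℂ)
    (hw : (A.map (algebraMap ℚ ℂ)).mulVec w = 0) (φ : ℂ →ₗ[ℚ] ℚ) :
    A.mulVec (fun i => φ (w i)) = 0 := by
  funext i
  have h0 := congrFun hw i
  simp only [Matrix.mulVec, dotProduct, Matrix.map_apply, Pi.zero_apply] at h0 ⊢
  have : ∀ k, A i k * φ (w k) = φ ((algebraMap ℚ ℂ) (A i k) * w k) := by
    intro k
    rw [show (algebraMap ℚ ℂ) (A i k) * w k = (A i k) • (w k) by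
      rw [Algebra.smul_def]]
    rw [map_smul]
    rfl
  simp only [this]
  rw [← map_sum, h0, map_zero]


/-- If `n ≥ 4` is even and `S ⊆ {1,…,n/2−1}` has equally many odd
and even elements (`t ≥ 1` of each), then `Circ(n,S)` is a nut graph if and only if
`P(ω^j) ≠ 0` for every `j ∈ {1,…,n/2−1}`. -/
theorem circulant_nut_iff_no_other_zero_eigenvalue
    (n : ℕ) (hn : 4 ≤ n) (hneven : Even n) (S : Finset ℕ)
    (hSsub : S ⊆ Finset.Icc 1 (n / 2 - 1)) (t : ℕ) (ht : 1 ≤ t)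
    (hodd : (S.filter fun s => Odd s).card = t)
    (heven : (S.filter fun s => Even s).card = t) :
    IsNutGraph (circ n S) ↔
      ∀ j, 1 ≤ j → j ≤ n / 2 - 1 → Pval n S (omegaC n ^ j) ≠ 0 := by
  classical
  have hn0 : 0 < n := by omega
  obtain ⟨m, hm⟩ := id hneven
  have hSne : S.Nonempty := by
    have hpos : 0 < (S.filter fun s => Odd s).card := by omega
    obtain ⟨s, hs⟩ := Finset.card_pos.mp hpos
    exact ⟨s, (Finset.mem_filter.mp hs).1⟩
  have hP1 : Pval n S 1 ≠ 0 := Pval_one_ne hn hSsub hSne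
  have hPhalf : Pval n S (omegaC n ^ (n / 2)) = 0 := by
    rw [omega_half' hn hneven]
    exact Pval_neg_one hn hneven hSsub hodd heven
  set vq : Fin n → ℚ := fun i => (-1 : ℚ) ^ (i.val) with hvq
  have half : Fin n := ⟨n / 2, by omega⟩
  -- vq is in the rational kernel
  have hxy : (fun i : Fin n => ((vq i : ℚ) : ℂ))
      = (fun i : Fin n => omegaC n ^ (i.val * ((⟨n / 2, by omega⟩ : Fin n)).val)) := by
    funext i
    show ((vq i : ℚ) : ℂ) = omegaC n ^ (i.val * (n / 2))
    simp only [hvq]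
    rw [mul_comm, pow_mul, omega_half' hn hneven]
    push_cast
    ring
  have hvqC : (AC n S).mulVec (fun i => ((vq i : ℚ) : ℂ)) = 0 := by
    rw [hxy, eig hn hSsub]
    funext i
    show Pval n S (omegaC n ^ ((⟨n / 2, by omega⟩ : Fin n)).val) * _ = 0
    rw [show ((⟨n / 2, by omega⟩ : Fin n)).val = n / 2 from rfl, hPhalf, zero_mul]
  have hvqker : (adjMat (circ n S)).mulVec vq = 0 := by
    funext i
    have h1 := map_mulVec_cast (adjMat (circ n S)) vq i
    rw [hvqC] at h1
    simp only [Pi.zero_apply] at h1 ⊢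
    exact_mod_cast h1
  constructor
  · -- nut → no other zero eigenvalue
    rintro ⟨hn2, v, hvnz, hvker, hvspan⟩ j hj1 hj2 hP0
    obtain ⟨cv, hcv⟩ := hvspan vq hvqker
    have hvq0 : vq ⟨0, hn0⟩ = 1 := by simp [hvq]
    have hcvne : cv ≠ 0 := by
      intro hc
      rw [hc] at hcv
      have := congrFun hcv ⟨0, hn0⟩
      rw [hvq0] at this
      simp at this
    have hspan' : ∀ u : Fin n → ℚ, (adjMat (circ n S)).mulVec u = 0 →
        ∃ e : ℚ, ∀ i, u i = e * vq i := by
      intro u hu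
      obtain ⟨d, hd⟩ := hvspan u hu
      refine ⟨d / cv, fun i => ?_⟩
      have h1 := congrFun hcv i
      have h2 := congrFun hd i
      simp only [Pi.smul_apply, smul_eq_mul] at h1 h2
      rw [h2, h1, ← mul_assoc, div_mul_cancel₀ d hcvne]
    set x : Fin n → ℂ := fun i => omegaC n ^ (i.val * j) with hx
    have hxker : (AC n S).mulVec x = 0 := by
      have := eig hn hSsub (j := ⟨j, by omega⟩)
      rw [hx]
      rw [show (fun i : Fin n => omegaC n ^ (i.val * j))
          = (fun i : Fin n => omegaC n ^ (i.val * ((⟨j, by omega⟩ : Fin n)).val)) from rfl,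
        this]
      funext i
      show Pval n S (omegaC n ^ ((⟨j, by omega⟩ : Fin n)).val) * _ = 0
      rw [show ((⟨j, by omega⟩ : Fin n)).val = j from rfl, hP0, zero_mul]
    have hkey : x ⟨1, by omega⟩ + x ⟨0, hn0⟩ = 0 := by
      apply rat_dual_sep
      intro φ
      have hφk := phi_ker (adjMat (circ n S)) x hxker φ
      obtain ⟨e, he⟩ := hspan' _ hφk
      have h1 := he ⟨1, by omega⟩
      have h0 := he ⟨0, hn0⟩
      simp only [hvq] at h1 h0
      rw [map_add, h1, h0]
      norm_num
    have hωj : omegaC n ^ j = -1 := by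
      have h0 : x ⟨0, hn0⟩ = 1 := by rw [hx]; simp
      have h1 : x ⟨1, by omega⟩ = omegaC n ^ j := by rw [hx]; simp
      rw [h0, h1] at hkey
      linear_combination hkey
    have : j = n / 2 := by
      refine (omega_prim' hn0).pow_inj (by omega) (by omega) ?_
      rw [hωj, omega_half' hn hneven]
    omega
  · -- no other zero eigenvalue → nut
    intro h
    have hPne : ∀ j : Fin n, j.val ≠ n / 2 → Pval n S (omegaC n ^ j.val) ≠ 0 := by
      intro j hj
      rcases Nat.lt_or_ge j.val (n / 2) with hlt | hge
      · rcases Nat.eq_zero_or_pos j.val with h0 | hpos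
        · rw [h0, pow_zero]; exact hP1
        · exact h j.val hpos (by omega)
      · have hlt2 : n / 2 < j.val := by omega
        have hjn : j.val < n := j.isLt
        have hsub := Pval_omega_sub hn0 S (j := n - j.val) (by omega)
        rw [show n - (n - j.val) = j.val by omega] at hsub
        intro hc
        rw [hc] at hsub
        have h2 : (starRingEnd ℂ) (Pval n S (omegaC n ^ (n - j.val))) = 0 := hsub.symm
        have : Pval n S (omegaC n ^ (n - j.val)) = 0 := by
          have h3 := congrArg (starRingEnd ℂ) h2
          rwa [Complex.conj_conj, map_zero] at h3
        exact h (n - j.val) (by omega) (by omega) this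
    refine ⟨by omega, vq, fun i => by simp [hvq], hvqker, fun w hw => ?_⟩
    have hwC : (AC n S).mulVec (fun i => ((w i : ℚ) : ℂ)) = 0 := by
      funext i
      have h1 := map_mulVec_cast (adjMat (circ n S)) w i
      rw [hw] at h1
      simp only [Pi.zero_apply] at h1
      rw [← h1]
      simp
    obtain ⟨c, hc0, hcw⟩ := ker_decomp hn hSsub _ hwC
    set hf : Fin n := ⟨n / 2, by omega⟩ with hhf
    have hcz : ∀ jj : Fin n, jj ≠ hf → c jj = 0 := by
      intro jj hjj
      refine hc0 jj (hPne jj fun hv => hjj (Fin.ext (by rw [hv])))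
    have hwi : ∀ i : Fin n, ((w i : ℚ) : ℂ) = c hf * omegaC n ^ (i.val * (n / 2)) := by
      intro i
      rw [hcw i]
      exact Finset.sum_eq_single_of_mem hf (Finset.mem_univ hf)
        (fun jj _ hjj => by rw [hcz jj hjj, zero_mul])
    have hch : c hf = ((w ⟨0, hn0⟩ : ℚ) : ℂ) := by
      have := hwi ⟨0, hn0⟩
      simp at this
      rw [this]
    refine ⟨w ⟨0, hn0⟩, funext fun i => ?_⟩
    have h1 := hwi i
    rw [hch] at h1
    rw [mul_comm i.val (n / 2), pow_mul, omega_half' hn hneven] at h1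
    have : ((w i : ℚ) : ℂ) = (((w ⟨0, hn0⟩ * (-1) ^ (i.val) : ℚ)) : ℂ) := by
      rw [h1]; push_cast; ring
    have h2 := Rat.cast_injective (α := ℂ) this
    rw [h2]
    simp [hvq, mul_comm]
end

section
/- Let n, x, t be positive integers such that n is even and n ≥ 2x + 4t, and let G = Circ(n, {x, x+1, …, x+2t−1}). Then G is a nut graph if and only if gcd(n/2, t) = 1 and gcd(n/2, 2x + 2t − 1) = 1. -/
open Finset Polynomial

def toFin (n : ℕ) [NeZero n] (z : ZMod n) : Fin n := ⟨z.val, ZMod.val_lt z⟩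

lemma toFin_natCast {n : ℕ} [NeZero n] (i : Fin n) : toFin n ((i.val : ℕ) : ZMod n) = i := by
  ext
  simp [toFin, ZMod.val_natCast, Nat.mod_eq_of_lt i.isLt]

lemma natCast_toFin {n : ℕ} [NeZero n] (z : ZMod n) : (((toFin n z).val : ℕ) : ZMod n) = z :=
  ZMod.natCast_rightInverse z

lemma circ_mulVec (n x t : ℕ) [NeZero n] (hx : 0 < x) (hst : 2*x + 4*t ≤ n) (ht : 0 < t)
    (w : Fin n → ℚ) (i : Fin n) :
    (adjMat (circ n (Finset.Ico x (x + 2*t)))).mulVec w i =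
      ∑ s ∈ Finset.Ico x (x + 2*t),
        (w (toFin n ((i.val : ZMod n) + (s : ZMod n))) +
         w (toFin n ((i.val : ZMod n) - (s : ZMod n)))) := by
  classical
  set I : ZMod n := (i.val : ZMod n) with hI
  -- basic facts about elements of S
  have hmem : ∀ s ∈ Finset.Ico x (x + 2*t), x ≤ s ∧ s < x + 2*t := by
    intro s hs; simpa [Finset.mem_Ico] using hs
  have hcastinj : ∀ s ∈ Finset.Ico x (x + 2*t), ∀ s' ∈ Finset.Ico x (x + 2*t),
      (s : ZMod n) = (s' : ZMod n) → s = s' := by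
    intro s hs s' hs' h
    have h1 := (hmem s hs); have h2 := (hmem s' hs')
    have := congrArg ZMod.val h
    rwa [ZMod.val_natCast, ZMod.val_natCast, Nat.mod_eq_of_lt (by omega),
      Nat.mod_eq_of_lt (by omega)] at this
  have hsum_ne : ∀ s ∈ Finset.Ico x (x + 2*t), ∀ s' ∈ Finset.Ico x (x + 2*t),
      I + (s : ZMod n) ≠ I - (s' : ZMod n) := by
    intro s hs s' hs' h
    have h1 := (hmem s hs); have h2 := (hmem s' hs')
    have : ((s + s' : ℕ) : ZMod n) = 0 := by
      push_cast
      linear_combination h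
    rw [ZMod.natCast_eq_zero_iff] at this
    have := Nat.le_of_dvd (by omega) this
    omega
  have hne0 : ∀ s ∈ Finset.Ico x (x + 2*t), (s : ZMod n) ≠ 0 := by
    intro s hs h
    have h1 := (hmem s hs)
    rw [ZMod.natCast_eq_zero_iff] at h
    have := Nat.le_of_dvd (by omega) h
    omega
  have hcond : ∀ j : Fin n,
      (if (circ n (Finset.Ico x (x + 2*t))).Adj i j then (1:ℚ) else 0) =
      ∑ s ∈ Finset.Ico x (x + 2*t),
        ((if (j.val : ZMod n) = I + (s : ZMod n) then (1:ℚ) else 0) +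
         (if (j.val : ZMod n) = I - (s : ZMod n) then (1:ℚ) else 0)) := by
    intro j
    set J : ZMod n := (j.val : ZMod n) with hJ
    by_cases hadj : (circ n (Finset.Ico x (x + 2*t))).Adj i j
    · obtain ⟨hne, s₀, hs₀, hcase⟩ := hadj
      rw [if_pos ⟨hne, s₀, hs₀, hcase⟩]
      rcases hcase with hc | hc
      · -- I - J = s₀, i.e. J = I - s₀
        have hJeq : J = I - (s₀ : ZMod n) := by linear_combination -hc
        rw [Finset.sum_eq_single_of_mem s₀ hs₀]
        · rw [if_neg, if_pos hJeq]
          · ring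
          · rw [hJeq]; exact fun h => hsum_ne s₀ hs₀ s₀ hs₀ h.symm
        · intro s hs hss
          rw [if_neg, if_neg]
          · ring
          · rw [hJeq]; intro h
            exact hss (hcastinj s₀ hs₀ s hs (by linear_combination -h)).symm
          · rw [hJeq]; intro h
            exact hsum_ne s hs s₀ hs₀ h.symm
      · -- J - I = s₀, i.e. J = I + s₀
        have hJeq : J = I + (s₀ : ZMod n) := by linear_combination hc
        rw [Finset.sum_eq_single_of_mem s₀ hs₀]
        · rw [if_pos hJeq, if_neg]
          · ring
          · rw [hJeq]; exact hsum_ne s₀ hs₀ s₀ hs₀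
        · intro s hs hss
          rw [if_neg, if_neg]
          · ring
          · rw [hJeq]; intro h
            exact hsum_ne s₀ hs₀ s hs h
          · rw [hJeq]; intro h
            exact hss (hcastinj s₀ hs₀ s hs (by linear_combination h)).symm
    · rw [if_neg hadj]
      symm
      apply Finset.sum_eq_zero
      intro s hs
      rw [if_neg, if_neg]
      · ring
      · intro h
        apply hadj
        refine ⟨?_, s, hs, Or.inl (by linear_combination -h)⟩
        intro hij
        apply hne0 s hs
        have hIJ : I = J := by rw [hI, hJ, hij]
        linear_combination h + hIJ
      · intro h
        apply hadj
        refine ⟨?_, s, hs, Or.inr (by linear_combination h)⟩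
        intro hij
        apply hne0 s hs
        have hIJ : I = J := by rw [hI, hJ, hij]
        linear_combination -h - hIJ
  have hpick : ∀ (a : ZMod n), (∑ j : Fin n, (if (j.val : ZMod n) = a then (1:ℚ) else 0) * w j)
      = w (toFin n a) := by
    intro a
    have hiff : ∀ j : Fin n, ((j.val : ZMod n) = a) ↔ j = toFin n a := by
      intro j
      constructor
      · intro h; rw [← toFin_natCast j, h]
      · intro h; rw [h, natCast_toFin]
    simp only [hiff]
    rw [Finset.sum_eq_single_of_mem (toFin n a) (Finset.mem_univ _)]
    · rw [if_pos rfl, one_mul]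
    · intro b _ hb; rw [if_neg hb, zero_mul]
  calc (adjMat (circ n (Finset.Ico x (x + 2*t)))).mulVec w i
      = ∑ j : Fin n, (if (circ n (Finset.Ico x (x + 2*t))).Adj i j then (1:ℚ) else 0) * w j := by
        rfl
    _ = ∑ j : Fin n, (∑ s ∈ Finset.Ico x (x + 2*t),
        ((if (j.val : ZMod n) = I + (s : ZMod n) then (1:ℚ) else 0) +
         (if (j.val : ZMod n) = I - (s : ZMod n) then (1:ℚ) else 0))) * w j := by
        refine Finset.sum_congr rfl fun j _ => ?_
        rw [hcond j]
    _ = ∑ s ∈ Finset.Ico x (x + 2*t), (∑ j : Fin n,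
        ((if (j.val : ZMod n) = I + (s : ZMod n) then (1:ℚ) else 0) * w j +
         (if (j.val : ZMod n) = I - (s : ZMod n) then (1:ℚ) else 0) * w j)) := by
        rw [Finset.sum_comm]
        refine Finset.sum_congr rfl fun j _ => ?_
        rw [Finset.sum_mul]
        refine Finset.sum_congr rfl fun s _ => ?_
        ring
    _ = ∑ s ∈ Finset.Ico x (x + 2*t),
        (w (toFin n (I + (s : ZMod n))) + w (toFin n (I - (s : ZMod n)))) := by
        refine Finset.sum_congr rfl fun s _ => ?_
        rw [Finset.sum_add_distrib, hpick, hpick]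



lemma pow_mod_cancel {ζ : ℂ} {n : ℕ} (h : ζ^n = 1) (a : ℕ) : ζ^(a % n) = ζ^a := by
  conv_rhs => rw [← Nat.mod_add_div a n]
  rw [pow_add, pow_mul, h, one_pow, mul_one]

lemma mu_ne_zero (x t : ℕ) (hx : 0 < x) (ht : 0 < t) (ζ : ℂ) (hζ0 : ζ ≠ 0)
    (h2t : ζ^(2*t) ≠ 1) (hr : ζ^(2*x+2*t-1) ≠ -1) :
    ∑ s ∈ Finset.Ico x (x+2*t), (ζ^s + (ζ^s)⁻¹) ≠ 0 := by
  set G : ℂ := ∑ u ∈ Finset.range (2*t), ζ^u with hG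
  have hGmul : G * (ζ - 1) = ζ^(2*t) - 1 := geom_sum_mul ζ (2*t)
  have hGne : G ≠ 0 := by
    intro h
    apply h2t
    have := hGmul
    rw [h, zero_mul] at this
    linear_combination -this
  have key : (∑ s ∈ Finset.Ico x (x+2*t), (ζ^s + (ζ^s)⁻¹)) * ζ^(x + 2*t - 1)
      = (ζ^(2*x+2*t-1) + 1) * G := by
    rw [Finset.sum_mul, Finset.sum_Ico_eq_sum_range]
    have h2t' : x + 2*t - x = 2*t := by omega
    rw [h2t']
    have hterm : ∀ u ∈ Finset.range (2*t),
        (ζ^(x+u) + (ζ^(x+u))⁻¹) * ζ^(x + 2*t - 1)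
          = ζ^(2*x+2*t-1) * ζ^u + ζ^(2*t - 1 - u) := by
      intro u hu
      have hu' : u < 2*t := Finset.mem_range.mp hu
      have e1 : ζ^(x+u) * ζ^(x + 2*t - 1) = ζ^(2*x+2*t-1) * ζ^u := by
        rw [← pow_add, ← pow_add]
        congr 1
        omega
      have e2 : (ζ^(x+u))⁻¹ * ζ^(x + 2*t - 1) = ζ^(2*t - 1 - u) := by
        rw [inv_mul_eq_iff_eq_mul₀ (pow_ne_zero _ hζ0), ← pow_add]
        congr 1
        omega
      rw [add_mul, e1, e2]
    rw [Finset.sum_congr rfl hterm, Finset.sum_add_distrib, ← Finset.mul_sum, ← hG]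
    have : ∑ u ∈ Finset.range (2*t), ζ^(2*t - 1 - u) = G := by
      rw [hG]
      exact Finset.sum_range_reflect (fun u => ζ^u) (2*t)
    rw [this]
    ring
  intro hsum0
  rw [hsum0, zero_mul] at key
  rcases mul_eq_zero.mp key.symm with h | h
  · exact hr (by linear_combination h)
  · exact hGne h

lemma hat_mul_eq_zero (n x t : ℕ) [NeZero n] (W : ZMod n → ℚ)
    (hker : ∀ I : ZMod n,
      ∑ s ∈ Finset.Ico x (x+2*t), (W (I + (s:ZMod n)) + W (I - (s:ZMod n))) = 0)
    (ζ : ℂ) (hζn : ζ^n = 1) :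
    (∑ s ∈ Finset.Ico x (x+2*t), (ζ^s + (ζ^s)⁻¹))
      * (∑ z : ZMod n, (W z : ℂ) * ζ^(z.val)) = 0 := by
  have hn0 : n ≠ 0 := NeZero.ne n
  have hζ0 : ζ ≠ 0 := by
    intro h
    rw [h, zero_pow hn0] at hζn
    exact zero_ne_one hζn
  have hχs : ∀ s : ℕ, ζ^(((s : ZMod n)).val) = ζ^s := by
    intro s
    rw [ZMod.val_natCast, pow_mod_cancel hζn]
  have hχ : ∀ a b : ZMod n, ζ^((a+b).val) = ζ^(a.val) * ζ^(b.val) := by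
    intro a b
    rw [ZMod.val_add, pow_mod_cancel hζn, pow_add]
  set Wh : ℂ := ∑ z : ZMod n, (W z : ℂ) * ζ^(z.val) with hWh
  have h0 : ∑ z : ZMod n, (ζ^(z.val) *
      ((∑ s ∈ Finset.Ico x (x+2*t), (W (z + (s:ZMod n)) + W (z - (s:ZMod n))) : ℚ) : ℂ)) = 0 := by
    apply Finset.sum_eq_zero
    intro z _
    rw [hker z]
    simp
  have hA : ∀ s : ℕ, ∑ z : ZMod n, ζ^(z.val) * ((W (z + (s:ZMod n)) : ℚ) : ℂ)
      = (ζ^s)⁻¹ * Wh := by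
    intro s
    have := Equiv.sum_comp (Equiv.subRight ((s:ZMod n)))
      (fun z : ZMod n => ζ^(z.val) * ((W (z + (s:ZMod n)) : ℚ) : ℂ))
    rw [← this]
    simp only [Equiv.subRight_apply, sub_add_cancel]
    rw [hWh, Finset.mul_sum]
    apply Finset.sum_congr rfl
    intro z _
    have hz : ζ^(z.val) = ζ^((z - (s:ZMod n)).val) * ζ^s := by
      rw [← hχs s, ← hχ]
      congr 2
      ring
    rw [hz]
    field_simp
  have hB : ∀ s : ℕ, ∑ z : ZMod n, ζ^(z.val) * ((W (z - (s:ZMod n)) : ℚ) : ℂ)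
      = ζ^s * Wh := by
    intro s
    have := Equiv.sum_comp (Equiv.addRight ((s:ZMod n)))
      (fun z : ZMod n => ζ^(z.val) * ((W (z - (s:ZMod n)) : ℚ) : ℂ))
    rw [← this]
    simp only [Equiv.coe_addRight, add_sub_cancel_right]
    rw [hWh, Finset.mul_sum]
    apply Finset.sum_congr rfl
    intro z _
    rw [hχ, hχs]
    ring
  calc (∑ s ∈ Finset.Ico x (x+2*t), (ζ^s + (ζ^s)⁻¹)) * Wh
      = ∑ s ∈ Finset.Ico x (x+2*t), ((ζ^s)⁻¹ * Wh + ζ^s * Wh) := by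
        rw [Finset.sum_mul]
        apply Finset.sum_congr rfl
        intro s _
        ring
    _ = ∑ s ∈ Finset.Ico x (x+2*t), ((∑ z : ZMod n, ζ^(z.val) * ((W (z + (s:ZMod n)) : ℚ) : ℂ))
          + (∑ z : ZMod n, ζ^(z.val) * ((W (z - (s:ZMod n)) : ℚ) : ℂ))) := by
        apply Finset.sum_congr rfl
        intro s _
        rw [hA s, hB s]
    _ = ∑ z : ZMod n, (ζ^(z.val) *
          ((∑ s ∈ Finset.Ico x (x+2*t), (W (z + (s:ZMod n)) + W (z - (s:ZMod n))) : ℚ) : ℂ)) := by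
        have e1 : ∀ s : ℕ, (∑ z : ZMod n, ζ^(z.val) * ((W (z + (s:ZMod n)) : ℚ) : ℂ))
            + (∑ z : ZMod n, ζ^(z.val) * ((W (z - (s:ZMod n)) : ℚ) : ℂ))
            = ∑ z : ZMod n, (ζ^(z.val) * ((W (z + (s:ZMod n)) : ℚ) : ℂ)
                + ζ^(z.val) * ((W (z - (s:ZMod n)) : ℚ) : ℂ)) :=
          fun s => (Finset.sum_add_distrib).symm
        simp only [e1]
        rw [Finset.sum_comm]
        apply Finset.sum_congr rfl
        intro z _
        push_cast
        rw [Finset.mul_sum]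
        apply Finset.sum_congr rfl
        intro s _
        ring
    _ = 0 := h0




lemma omega_pow_m {n m : ℕ} (hm : n = 2*m) (hmpos : 0 < m) {ω : ℂ}
    (hprim : IsPrimitiveRoot ω n) : ω^m = -1 := by
  have hωn : ω^n = 1 := hprim.pow_eq_one
  have h2 : (ω^m)^2 = 1 := by
    rw [← pow_mul]
    rw [show m * 2 = n by omega]
    exact hωn
  have hne1 : ω^m ≠ 1 := by
    intro h
    have := (hprim.pow_eq_one_iff_dvd m).mp h
    have := Nat.le_of_dvd hmpos this
    omega
  have : (ω^m - 1) * (ω^m + 1) = 0 := by linear_combination h2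
  rcases mul_eq_zero.mp this with h | h
  · exact absurd (by linear_combination h) hne1
  · linear_combination h

lemma inversion (n m : ℕ) [NeZero n] (hm : n = 2*m) (hmpos : 0 < m) (ω : ℂ)
    (hprim : IsPrimitiveRoot ω n) (W : ZMod n → ℚ)
    (hhat : ∀ j, j < n → j ≠ m → ∑ z : ZMod n, (W z : ℂ) * (ω^j)^(z.val) = 0) :
    ∀ k : ZMod n, W k = (-1)^(k.val) * W 0 := by
  have hn0 : n ≠ 0 := NeZero.ne n
  have hωn : ω^n = 1 := hprim.pow_eq_one
  have hω0 : ω ≠ 0 := by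
    intro h
    rw [h, zero_pow hn0] at hωn
    exact zero_ne_one hωn
  have hωm : ω^m = -1 := omega_pow_m hm hmpos hprim
  -- main identity over ℂ
  have main : ∀ k : ZMod n, (n : ℂ) * ((W k : ℚ) : ℂ)
      = (-1)^(k.val) * ∑ z : ZMod n, (W z : ℂ) * (ω^m)^(z.val) := by
    intro k
    set β : ℂ := (ω^(k.val))⁻¹ with hβ
    set T : ℂ := ∑ j ∈ Finset.range n, (∑ z : ZMod n, (W z : ℂ) * (ω^j)^(z.val)) * β^j with hT
    have hT1 : T = (∑ z : ZMod n, (W z : ℂ) * (ω^m)^(z.val)) * β^m := by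
      rw [hT]
      rw [Finset.sum_eq_single_of_mem m (Finset.mem_range.mpr (by omega))]
      intro j hj hjm
      rw [hhat j (Finset.mem_range.mp hj) hjm, zero_mul]
    have hT2 : T = (n : ℂ) * ((W k : ℚ) : ℂ) := by
      rw [hT]
      have swap : ∑ j ∈ Finset.range n, (∑ z : ZMod n, (W z : ℂ) * (ω^j)^(z.val)) * β^j
          = ∑ z : ZMod n, (W z : ℂ) * (∑ j ∈ Finset.range n, (ω^(z.val) * β)^j) := by
        simp only [Finset.sum_mul]
        rw [Finset.sum_comm]
        apply Finset.sum_congr rfl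
        intro z _
        rw [Finset.mul_sum]
        apply Finset.sum_congr rfl
        intro j _
        rw [mul_pow, pow_right_comm]
        ring
      rw [swap]
      have hgeom : ∀ z : ZMod n, (∑ j ∈ Finset.range n, (ω^(z.val) * β)^j)
          = if z = k then (n : ℂ) else 0 := by
        intro z
        by_cases hzk : z = k
        · subst hzk
          rw [if_pos rfl, hβ, mul_inv_cancel₀ (pow_ne_zero _ hω0)]
          simp
        · rw [if_neg hzk]
          set η : ℂ := ω^(z.val) * β with hη
          have hηn : η^n = 1 := by
            rw [hη, mul_pow, hβ, inv_pow, ← pow_mul, ← pow_mul, mul_comm z.val n, mul_comm k.val n,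
              pow_mul, pow_mul, hωn, one_pow, one_pow, inv_one, mul_one]
          have hηne : η ≠ 1 := by
            intro h
            have : ω^(z.val) = ω^(k.val) := by
              rw [hη, hβ] at h
              field_simp at h
              exact h
            have := hprim.pow_inj (ZMod.val_lt z) (ZMod.val_lt k) this
            exact hzk (ZMod.val_injective n this)
          have := geom_sum_mul η n
          rw [hηn, sub_self] at this
          rcases mul_eq_zero.mp this with h | h
          · exact h
          · exact absurd (by linear_combination h) hηne
      rw [Finset.sum_congr rfl (fun z _ => by rw [hgeom z])]
      rw [Finset.sum_eq_single_of_mem k (Finset.mem_univ k)]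
      · rw [if_pos rfl]; ring
      · intro z _ hz
        rw [if_neg hz, mul_zero]
    have hβm : β^m = (-1)^(k.val) := by
      rw [hβ, inv_pow, ← pow_mul, mul_comm k.val m, pow_mul, hωm]
      rw [inv_eq_of_mul_eq_one_right]
      rw [← mul_pow]
      norm_num
    rw [← hT2, hT1, hβm]
    ring
  -- conclude over ℚ
  intro k
  set SS : ℂ := ∑ z : ZMod n, (W z : ℂ) * (ω^m)^(z.val) with hSS
  have h0 := main 0
  have hk := main k
  rw [ZMod.val_zero, pow_zero, one_mul] at h0
  rw [← h0] at hk
  have hn0' : (n : ℂ) ≠ 0 := Nat.cast_ne_zero.mpr hn0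
  have : ((W k : ℚ) : ℂ) = (((-1)^(k.val) * W 0 : ℚ) : ℂ) := by
    push_cast
    apply mul_left_cancel₀ hn0'
    rw [hk]
    ring
  exact_mod_cast this



lemma sum_range_mul_periodic_zero (g : ℕ → ℚ) (P : ℕ) (hP : 0 < P)
    (hper : ∀ a, g (a + P) = g a)
    (hzero : ∀ c, ∑ l ∈ Finset.range P, g (c + l) = 0) (c N : ℕ) :
    ∑ l ∈ Finset.range (P * N), g (c + l) = 0 := by
  induction N with
  | zero => simp
  | succ N ih =>
    rw [Nat.mul_succ, Finset.sum_range_add, ih, zero_add]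
    have : ∀ l, g (c + (P * N + l)) = g ((c + P * N) + l) := fun l => by
      congr 1; omega
    simp only [this]
    exact hzero _

lemma sum_range_shift_zero (g : ℕ → ℚ) (P : ℕ) (hP : 0 < P)
    (hper : ∀ a, g (a + P) = g a) (hzero : ∑ l ∈ Finset.range P, g l = 0) (c : ℕ) :
    ∑ l ∈ Finset.range P, g (c + l) = 0 := by
  induction c with
  | zero => simpa using hzero
  | succ c ih =>
    have key : ∑ l ∈ Finset.range P, g (c + (l + 1)) = ∑ l ∈ Finset.range P, g (c + l) := by
      have h1 := Finset.sum_range_succ' (fun l => g (c + l)) P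
      have h2 := Finset.sum_range_succ (fun l => g (c + l)) P
      have h3 : g (c + P) = g (c + 0) := by
        rw [show c + P = c + 0 + P by omega, hper]
      rw [h2, h3] at h1
      linarith [h1]
    have : ∀ l, g (c + 1 + l) = g (c + (l + 1)) := fun l => by congr 1; omega
    simp only [this]
    rw [key]
    exact ih

lemma sum_Ico_period_zero (g : ℕ → ℚ) (P x T : ℕ) (hP : 0 < P) (hPT : P ∣ 2*T)
    (hper : ∀ a, g (a + P) = g a) (hzero : ∑ l ∈ Finset.range P, g l = 0) (c : ℕ) :
    ∑ s ∈ Finset.Ico x (x + 2*T), g (c + s) = 0 := by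
  rw [Finset.sum_Ico_eq_sum_range]
  have h1 : x + 2*T - x = 2*T := by omega
  rw [h1]
  obtain ⟨N, hN⟩ := hPT
  have h3 : ∀ l, g (c + (x + l)) = g ((c + x) + l) := fun l => by congr 1; omega
  simp only [h3]
  rw [hN]
  exact sum_range_mul_periodic_zero g P hP hper
    (sum_range_shift_zero g P hP hper hzero) _ _

lemma sum_Ico_reflect (f : ℕ → ℚ) (x t : ℕ) :
    ∑ s ∈ Finset.Ico x (x + 2*t), f (2*x + 2*t - 1 - s)
      = ∑ s ∈ Finset.Ico x (x + 2*t), f s := by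
  rcases Nat.eq_zero_or_pos t with ht | ht
  · simp [ht]
  apply Finset.sum_nbij' (i := fun s => 2*x + 2*t - 1 - s) (j := fun s => 2*x + 2*t - 1 - s)
  · intro a ha
    simp only [Finset.mem_Ico] at ha ⊢
    omega
  · intro a ha
    simp only [Finset.mem_Ico] at ha ⊢
    omega
  · intro a ha
    simp only [Finset.mem_Ico] at ha
    omega
  · intro a ha
    simp only [Finset.mem_Ico] at ha
    omega
  · intros
    rfl

-- case 1 profile function facts
lemma g1_per (P : ℕ) (a : ℕ) :
    (if (a + P) % P = 0 then (1:ℚ) else if (a + P) % P = 1 then -1 else 0)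
      = (if a % P = 0 then (1:ℚ) else if a % P = 1 then -1 else 0) := by
  rw [Nat.add_mod_right]

lemma g1_sum (P : ℕ) (hP : 2 ≤ P) :
    ∑ l ∈ Finset.range P, (if l % P = 0 then (1:ℚ) else if l % P = 1 then -1 else 0) = 0 := by
  have key : ∀ l ∈ Finset.range P,
      (if l % P = 0 then (1:ℚ) else if l % P = 1 then -1 else 0)
        = (if l = 0 then (1:ℚ) else 0) + (if l = 1 then (-1:ℚ) else 0) := by
    intro l hl
    rw [Nat.mod_eq_of_lt (Finset.mem_range.mp hl)]
    by_cases h0 : l = 0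
    · simp [h0]
    · by_cases h1 : l = 1
      · simp [h1]
      · simp [h0, h1]
  rw [Finset.sum_congr rfl key, Finset.sum_add_distrib,
    Finset.sum_ite_eq' (Finset.range P) 0 (fun _ => (1:ℚ)),
    Finset.sum_ite_eq' (Finset.range P) 1 (fun _ => (-1:ℚ))]
  simp only [Finset.mem_range]
  rw [if_pos (by omega), if_pos (by omega)]
  ring

-- case 2 profile antiperiodicity
lemma h2_anti (e : ℕ) (he : 0 < e) (a : ℕ) :
    (if (a + e) % (2*e) = 0 then (1:ℚ) else if (a + e) % (2*e) = e then -1 else 0)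
      = - (if a % (2*e) = 0 then (1:ℚ) else if a % (2*e) = e then -1 else 0) := by
  have hb : a % (2*e) < 2*e := Nat.mod_lt _ (by omega)
  have hkey : (a + e) % (2*e) = (a % (2*e) + e) % (2*e) := by
    conv_lhs => rw [Nat.add_mod, Nat.mod_eq_of_lt (show e < 2*e by omega)]
  set b := a % (2*e) with hbdef
  rw [hkey]
  by_cases h0 : b = 0
  · rw [h0, zero_add, Nat.mod_eq_of_lt (by omega), if_neg he.ne', if_pos rfl, if_pos rfl]
  · by_cases hee : b = e
    · rw [hee, show (e + e) % (2*e) = 0 from by rw [show e + e = 2*e by omega, Nat.mod_self],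
        if_pos rfl, if_neg he.ne', if_pos rfl]
      ring
    · by_cases hlt : b + e < 2*e
      · rw [Nat.mod_eq_of_lt hlt, if_neg (by omega), if_neg (by omega), if_neg h0, if_neg hee]
        ring
      · have hmod : (b + e) % (2*e) = b - e := by
          rw [Nat.mod_eq_sub_mod (by omega), show b + e - 2*e = b - e by omega,
            Nat.mod_eq_of_lt (by omega)]
        rw [hmod, if_neg (by omega), if_neg (by omega), if_neg h0, if_neg hee]
        ring

lemma h2_per (e : ℕ) (he : 0 < e) (a k : ℕ) :
    (if (a + 2*e*k) % (2*e) = 0 then (1:ℚ) else if (a + 2*e*k) % (2*e) = e then -1 else 0)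
      = (if a % (2*e) = 0 then (1:ℚ) else if a % (2*e) = e then -1 else 0) := by
  rw [Nat.add_mul_mod_self_left]


lemma dvd_bounded {m j : ℕ} (hm : 0 < m) (h : m ∣ j) (h1 : j ≠ 0) (h2 : j < 2*m) : j = m := by
  obtain ⟨c, rfl⟩ := h
  have hc : c = 1 := by
    rcases c with _ | _ | c
    · omega
    · rfl
    · exfalso
      have : m * 2 ≤ m * (c + 1 + 1) := Nat.mul_le_mul_left m (by omega)
      omega
  rw [hc, mul_one]

lemma val_add_natCast' {n : ℕ} [NeZero n] (I : ZMod n) (s : ℕ) :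
    (I + (s : ZMod n)).val = (I.val + s) % n := by
  rw [ZMod.val_add, ZMod.val_natCast]
  conv_rhs => rw [Nat.add_mod, Nat.mod_eq_of_lt (ZMod.val_lt I)]

lemma val_sub_natCast' {n : ℕ} [NeZero n] (I : ZMod n) (s : ℕ) (h1 : s ≤ n) :
    (I - (s : ZMod n)).val = (I.val + (n - s)) % n := by
  have h2 : (((n - s : ℕ) : ZMod n)) = - (s : ZMod n) := by
    have h3 : ((n - s : ℕ) : ZMod n) = ((n : ℕ) : ZMod n) - (s : ZMod n) := by
      rw [Nat.cast_sub h1]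
    rw [h3, ZMod.natCast_self, zero_sub]
  rw [sub_eq_add_neg, ← h2, val_add_natCast']

lemma neg_one_pow_mod {n : ℕ} (hn : Even n) (a : ℕ) : ((-1:ℚ))^(a % n) = (-1)^a := by
  conv_rhs => rw [← Nat.mod_add_div a n]
  rw [pow_add, pow_mul, hn.neg_one_pow, one_pow, mul_one]

lemma neg_one_pow_sub (n s : ℕ) (hn : Even n) (hs : s ≤ n) : ((-1:ℚ))^(n - s) = (-1)^s := by
  have h1 : ((-1:ℚ))^(n - s) * (-1)^s = 1 := by
    rw [← pow_add, show n - s + s = n by omega, hn.neg_one_pow]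
  have h2 : ((-1:ℚ))^s * (-1)^s = 1 := by
    rw [← pow_add, ← two_mul, (even_two_mul s).neg_one_pow]
  exact mul_right_cancel₀ (pow_ne_zero s (by norm_num)) (h1.trans h2.symm)

lemma neg_one_sum_Ico (x t : ℕ) : ∑ s ∈ Finset.Ico x (x+2*t), ((-1:ℚ))^s = 0 := by
  rw [Finset.sum_Ico_eq_sum_range, show x + 2*t - x = 2*t by omega]
  simp only [pow_add]
  rw [← Finset.mul_sum, neg_one_geom_sum, if_pos (even_two_mul t), mul_zero]

/-- For positive integers `n, x, t` with `n` even and `n ≥ 2x + 4t`,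
the circulant graph `Circ(n, {x, x+1, …, x+2t−1})` is a nut graph if and only if
`gcd(n/2, t) = 1` and `gcd(n/2, 2x + 2t − 1) = 1`. -/
theorem circulant_nut_consecutive_generators
    (n x t : ℕ) (hn : 0 < n) (hx : 0 < x) (ht : 0 < t)
    (hneven : Even n) (hbig : 2 * x + 4 * t ≤ n) :
    IsNutGraph (circ n (Finset.Ico x (x + 2 * t))) ↔
      Nat.gcd (n / 2) t = 1 ∧ Nat.gcd (n / 2) (2 * x + 2 * t - 1) = 1 := by
  haveI : NeZero n := ⟨hn.ne'⟩
  obtain ⟨m', hm'⟩ := id hneven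
  set m : ℕ := n / 2 with hmdef
  have hm : n = 2 * m := by omega
  have hmpos : 0 < m := by omega
  constructor
  · -- nut → gcd conditions
    rintro ⟨h2n, v, hv0, hvker, huniq⟩
    by_contra hcon
    have hnonprop : ∀ (w : Fin n → ℚ) (i₀ i₁ : Fin n), w i₀ = 0 → w i₁ = 1 →
        (adjMat (circ n (Finset.Ico x (x + 2*t)))).mulVec w = 0 → False := by
      intro w i0 i1 h0 h1 hker
      obtain ⟨c, hc⟩ := huniq w hker
      have hc0 : c = 0 := by
        have h2 := congrFun hc i0
        rw [h0] at h2
        have h3 : c * v i0 = 0 := by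
          rw [← smul_eq_mul, ← Pi.smul_apply, ← h2]
        rcases mul_eq_zero.mp h3 with h | h
        · exact h
        · exact absurd h (hv0 i0)
      rw [hc0] at hc
      have h4 := congrFun hc i1
      rw [h1] at h4
      simp at h4
    by_cases hgt : Nat.gcd m t = 1
    · -- second gcd fails : case of gcd(m, 2x+2t-1) = e > 1
      have hgr : Nat.gcd m (2*x+2*t-1) ≠ 1 := by
        intro h; exact hcon ⟨hgt, h⟩
      set r : ℕ := 2*x+2*t-1 with hrdef
      set e : ℕ := Nat.gcd m r with hedef
      have hem : e ∣ m := Nat.gcd_dvd_left _ _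
      have her : e ∣ r := Nat.gcd_dvd_right _ _
      have hepos : 0 < e := Nat.gcd_pos_of_pos_left r hmpos
      have hrodd : r % 2 = 1 := by omega
      have heodd : e % 2 = 1 := by
        by_contra hcontra
        have h2e : 2 ∣ e := by omega
        have h2r : 2 ∣ r := h2e.trans her
        omega
      have he3 : 3 ≤ e := by
        have : e ≠ 1 := hgr
        omega
      have hPn : 2*e ∣ n := by
        rw [hm]; exact mul_dvd_mul_left 2 hem
      have hrn : r < n := by omega
      -- n - r = 2*e*M + e for some M
      have hM : ∃ M, n - r = 2*e*M + e := by
        obtain ⟨A, hA⟩ := hPn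
        obtain ⟨q, hq⟩ := her
        have hqodd : q % 2 = 1 := by
          by_contra hcontra
          have h2q : 2 ∣ q := by omega
          obtain ⟨u, hu⟩ := h2q
          have h2r : 2 ∣ r := by
            rw [hq, hu]
            exact ⟨e*u, by ring⟩
          omega
        obtain ⟨u, hu⟩ : ∃ u, q = 2*u + 1 := ⟨q / 2, by omega⟩
        have hr_eq : r = 2*e*u + e := by rw [hq, hu]; ring
        have h1 : 2*e*u + e < 2*e*A := by rw [← hr_eq, ← hA]; exact hrn
        have h2 : 2*e*u < 2*e*A := by omega
        have hAu : u < A := Nat.lt_of_mul_lt_mul_left h2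
        obtain ⟨B, hB⟩ : ∃ B, A = B + u + 1 := ⟨A - u - 1, by omega⟩
        refine ⟨B, ?_⟩
        apply Nat.sub_eq_of_eq_add
        rw [hA, hr_eq, hB]
        ring
      obtain ⟨M, hMeq⟩ := hM
      -- the rational kernel vector
      set w : Fin n → ℚ := fun i =>
        if i.val % (2*e) = 0 then (1:ℚ) else if i.val % (2*e) = e then -1 else 0 with hwdef
      have hQmod : ∀ a : ℕ,
          (if (a % n) % (2*e) = 0 then (1:ℚ) else if (a % n) % (2*e) = e then -1 else 0)
          = (if a % (2*e) = 0 then (1:ℚ) else if a % (2*e) = e then -1 else 0) := by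
        intro a
        rw [Nat.mod_mod_of_dvd a hPn]
      have hker : (adjMat (circ n (Finset.Ico x (x + 2*t)))).mulVec w = 0 := by
        funext i
        rw [circ_mulVec n x t hx hbig ht]
        set I : ZMod n := (i.val : ZMod n) with hIdef
        have hterm : ∀ s ∈ Finset.Ico x (x + 2*t),
            (w (toFin n (I + (s:ZMod n))) + w (toFin n (I - (s:ZMod n))))
            = ((if (I.val + s) % (2*e) = 0 then (1:ℚ) else if (I.val + s) % (2*e) = e then -1 else 0)
              + (if (I.val + (n - s)) % (2*e) = 0 then (1:ℚ)
                  else if (I.val + (n - s)) % (2*e) = e then -1 else 0)) := by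
          intro s hs
          simp only [Finset.mem_Ico] at hs
          have hsn : s ≤ n := by omega
          have hwtf : ∀ z : ZMod n, w (toFin n z)
              = (if z.val % (2*e) = 0 then (1:ℚ) else if z.val % (2*e) = e then -1 else 0) :=
            fun z => rfl
          rw [hwtf, hwtf, val_add_natCast', val_sub_natCast' I s hsn, hQmod, hQmod]
        rw [Finset.sum_congr rfl hterm, Finset.sum_add_distrib]
        have hsum2 : ∑ s ∈ Finset.Ico x (x + 2*t),
            (if (I.val + (n - s)) % (2*e) = 0 then (1:ℚ)
              else if (I.val + (n - s)) % (2*e) = e then -1 else 0)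
            = ∑ s ∈ Finset.Ico x (x + 2*t),
            (if (I.val + (n - r) + s) % (2*e) = 0 then (1:ℚ)
              else if (I.val + (n - r) + s) % (2*e) = e then -1 else 0) := by
          rw [← sum_Ico_reflect (fun u => if (I.val + (n - r) + u) % (2*e) = 0 then (1:ℚ)
              else if (I.val + (n - r) + u) % (2*e) = e then -1 else 0) x t]
          apply Finset.sum_congr rfl
          intro s hs
          simp only [Finset.mem_Ico] at hs
          have harg : I.val + (n - s) = I.val + (n - r) + (2*x+2*t-1 - s) := by omega
          rw [harg]
        rw [hsum2]
        rw [← Finset.sum_add_distrib]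
        apply Finset.sum_eq_zero
        intro s hs
        have hshift : I.val + (n - r) + s = (I.val + s + e) + 2*e*M := by
          rw [hMeq]; ring
        rw [hshift, h2_per e hepos (I.val + s + e) M,
          show I.val + s + e = (I.val + s) + e from rfl,
          h2_anti e hepos (I.val + s)]
        ring
      apply hnonprop w ⟨1, by omega⟩ ⟨0, by omega⟩ ?_ ?_ hker
      · show (if 1 % (2*e) = 0 then (1:ℚ) else if 1 % (2*e) = e then -1 else 0) = 0
        rw [Nat.mod_eq_of_lt (show 1 < 2*e by omega), if_neg (by omega), if_neg (by omega)]
      · show (if 0 % (2*e) = 0 then (1:ℚ) else if 0 % (2*e) = e then -1 else 0) = 1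
        rw [Nat.zero_mod, if_pos rfl]
    · -- first gcd fails : d = gcd(m,t) > 1
      set d : ℕ := Nat.gcd m t with hddef
      have hdm : d ∣ m := Nat.gcd_dvd_left _ _
      have hdt : d ∣ t := Nat.gcd_dvd_right _ _
      have hdpos : 0 < d := Nat.gcd_pos_of_pos_left t hmpos
      have hd2 : 2 ≤ d := by
        have : d ≠ 1 := hgt
        omega
      have hPn : 2*d ∣ n := by
        rw [hm]; exact mul_dvd_mul_left 2 hdm
      have hPt : 2*d ∣ 2*t := mul_dvd_mul_left 2 hdt
      set w : Fin n → ℚ := fun i =>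
        if i.val % (2*d) = 0 then (1:ℚ) else if i.val % (2*d) = 1 then -1 else 0 with hwdef
      have hQmod : ∀ a : ℕ,
          (if (a % n) % (2*d) = 0 then (1:ℚ) else if (a % n) % (2*d) = 1 then -1 else 0)
          = (if a % (2*d) = 0 then (1:ℚ) else if a % (2*d) = 1 then -1 else 0) := by
        intro a
        rw [Nat.mod_mod_of_dvd a hPn]
      have hper : ∀ a : ℕ,
          (if (a + 2*d) % (2*d) = 0 then (1:ℚ) else if (a + 2*d) % (2*d) = 1 then -1 else 0)
          = (if a % (2*d) = 0 then (1:ℚ) else if a % (2*d) = 1 then -1 else 0) :=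
        fun a => g1_per (2*d) a
      have hzero : ∑ l ∈ Finset.range (2*d),
          (if l % (2*d) = 0 then (1:ℚ) else if l % (2*d) = 1 then -1 else 0) = 0 :=
        g1_sum (2*d) (by omega)
      have hker : (adjMat (circ n (Finset.Ico x (x + 2*t)))).mulVec w = 0 := by
        funext i
        rw [circ_mulVec n x t hx hbig ht]
        set I : ZMod n := (i.val : ZMod n) with hIdef
        set r : ℕ := 2*x+2*t-1 with hrdef
        have hterm : ∀ s ∈ Finset.Ico x (x + 2*t),
            (w (toFin n (I + (s:ZMod n))) + w (toFin n (I - (s:ZMod n))))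
            = ((if (I.val + s) % (2*d) = 0 then (1:ℚ) else if (I.val + s) % (2*d) = 1 then -1 else 0)
              + (if (I.val + (n - s)) % (2*d) = 0 then (1:ℚ)
                  else if (I.val + (n - s)) % (2*d) = 1 then -1 else 0)) := by
          intro s hs
          simp only [Finset.mem_Ico] at hs
          have hsn : s ≤ n := by omega
          have hwtf : ∀ z : ZMod n, w (toFin n z)
              = (if z.val % (2*d) = 0 then (1:ℚ) else if z.val % (2*d) = 1 then -1 else 0) :=
            fun z => rfl
          rw [hwtf, hwtf, val_add_natCast', val_sub_natCast' I s hsn, hQmod, hQmod]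
        rw [Finset.sum_congr rfl hterm, Finset.sum_add_distrib]
        have hsum1 : ∑ s ∈ Finset.Ico x (x + 2*t),
            (if (I.val + s) % (2*d) = 0 then (1:ℚ) else if (I.val + s) % (2*d) = 1 then -1 else 0)
            = 0 :=
          sum_Ico_period_zero _ (2*d) x t (by omega) hPt hper hzero I.val
        have hsum2 : ∑ s ∈ Finset.Ico x (x + 2*t),
            (if (I.val + (n - s)) % (2*d) = 0 then (1:ℚ)
              else if (I.val + (n - s)) % (2*d) = 1 then -1 else 0) = 0 := by
          have hstep : ∑ s ∈ Finset.Ico x (x + 2*t),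
              (if (I.val + (n - s)) % (2*d) = 0 then (1:ℚ)
                else if (I.val + (n - s)) % (2*d) = 1 then -1 else 0)
              = ∑ s ∈ Finset.Ico x (x + 2*t),
              (if (I.val + (n - r) + s) % (2*d) = 0 then (1:ℚ)
                else if (I.val + (n - r) + s) % (2*d) = 1 then -1 else 0) := by
            rw [← sum_Ico_reflect (fun u => if (I.val + (n - r) + u) % (2*d) = 0 then (1:ℚ)
                else if (I.val + (n - r) + u) % (2*d) = 1 then -1 else 0) x t]
            apply Finset.sum_congr rfl
            intro s hs
            simp only [Finset.mem_Ico] at hs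
            have harg : I.val + (n - s) = I.val + (n - r) + (2*x+2*t-1 - s) := by omega
            rw [harg]
          rw [hstep]
          exact sum_Ico_period_zero _ (2*d) x t (by omega) hPt hper hzero (I.val + (n - r))
        rw [hsum1, hsum2]
        simp
      apply hnonprop w ⟨2, by omega⟩ ⟨0, by omega⟩ ?_ ?_ hker
      · show (if 2 % (2*d) = 0 then (1:ℚ) else if 2 % (2*d) = 1 then -1 else 0) = 0
        rw [Nat.mod_eq_of_lt (show 2 < 2*d by omega), if_neg (by omega), if_neg (by omega)]
      · show (if 0 % (2*d) = 0 then (1:ℚ) else if 0 % (2*d) = 1 then -1 else 0) = 1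
        rw [Nat.zero_mod, if_pos rfl]
  · -- gcd conditions → nut
    rintro ⟨hg1, hg2⟩
    set r : ℕ := 2*x+2*t-1 with hrdef
    obtain ⟨ω, hprim⟩ : ∃ ω : ℂ, IsPrimitiveRoot ω n :=
      ⟨_, Complex.isPrimitiveRoot_exp n hn.ne'⟩
    have hωn : ω^n = 1 := hprim.pow_eq_one
    have hω0 : ω ≠ 0 := by
      intro h
      rw [h, zero_pow hn.ne'] at hωn
      exact zero_ne_one hωn
    -- nonvanishing of eigenvalue factors
    have hmu : ∀ j, j < n → j ≠ m →
        (∑ s ∈ Finset.Ico x (x+2*t), ((ω^j)^s + ((ω^j)^s)⁻¹)) ≠ 0 := by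
      intro j hj hjm
      by_cases hj0 : j = 0
      · subst hj0
        intro h
        rw [pow_zero] at h
        have hone : ∀ s ∈ Finset.Ico x (x+2*t), ((1:ℂ)^s + ((1:ℂ)^s)⁻¹) = 2 := by
          intro s _; norm_num
        rw [Finset.sum_congr rfl hone, Finset.sum_const, Nat.card_Ico,
          show x + 2*t - x = 2*t by omega, nsmul_eq_mul] at h
        have ht' : ((2*t : ℕ) : ℂ) ≠ 0 := Nat.cast_ne_zero.mpr (by omega)
        rcases mul_eq_zero.mp h with h | h
        · exact ht' h
        · norm_num at h
      · apply mu_ne_zero x t hx ht (ω^j) (pow_ne_zero j hω0)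
        · -- (ω^j)^(2t) ≠ 1
          intro h'
          rw [← pow_mul] at h'
          have hdvd := (hprim.pow_eq_one_iff_dvd _).mp h'
          obtain ⟨c, hc⟩ := hdvd
          rw [hm] at hc
          have h2 : 2*(t*j) = 2*(m*c) := by
            calc 2*(t*j) = j*(2*t) := by ring
              _ = 2*m*c := hc
              _ = 2*(m*c) := by ring
          have h3 : t*j = m*c := Nat.eq_of_mul_eq_mul_left (by norm_num) h2
          have h4 : m ∣ t*j := Dvd.intro c h3.symm
          have h5 : m ∣ j := Nat.Coprime.dvd_of_dvd_mul_left hg1 h4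
          exact hjm (dvd_bounded hmpos h5 hj0 (by omega))
        · -- (ω^j)^r ≠ -1
          intro h'
          have h'' : ω^(j*r*2) = 1 := by
            rw [pow_mul, pow_mul, h']
            norm_num
          have hdvd := (hprim.pow_eq_one_iff_dvd _).mp h''
          obtain ⟨c, hc⟩ := hdvd
          rw [hm] at hc
          have h2 : 2*(j*r) = 2*(m*c) := by
            calc 2*(j*r) = j*r*2 := by ring
              _ = 2*m*c := hc
              _ = 2*(m*c) := by ring
          have h3 : j*r = m*c := Nat.eq_of_mul_eq_mul_left (by norm_num) h2
          have h4 : m ∣ j*r := Dvd.intro c h3.symm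
          have h5 : m ∣ j := Nat.Coprime.dvd_of_dvd_mul_right hg2 h4
          exact hjm (dvd_bounded hmpos h5 hj0 (by omega))
    refine ⟨by omega, fun i => ((-1:ℚ))^(i.val), fun i => by simp, ?_, ?_⟩
    · -- the alternating vector is in the kernel
      funext i
      rw [circ_mulVec n x t hx hbig ht]
      set I : ZMod n := (i.val : ZMod n) with hIdef
      have hterm : ∀ s ∈ Finset.Ico x (x + 2*t),
          (((-1:ℚ))^((toFin n (I + (s:ZMod n))).val)
            + ((-1:ℚ))^((toFin n (I - (s:ZMod n))).val))
          = 2 * ((-1:ℚ))^(I.val) * ((-1:ℚ))^s := by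
        intro s hs
        simp only [Finset.mem_Ico] at hs
        have hsn : s ≤ n := by omega
        show ((-1:ℚ))^((I + (s:ZMod n)).val) + ((-1:ℚ))^((I - (s:ZMod n)).val) = _
        rw [val_add_natCast', val_sub_natCast' I s hsn,
          neg_one_pow_mod hneven, neg_one_pow_mod hneven,
          pow_add, pow_add, neg_one_pow_sub n s hneven hsn]
        ring
      rw [Finset.sum_congr rfl hterm, ← Finset.mul_sum, neg_one_sum_Ico x t, mul_zero]
      simp
    · -- uniqueness
      intro w hw
      set W : ZMod n → ℚ := fun z => w (toFin n z) with hW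
      have hker : ∀ I : ZMod n,
          ∑ s ∈ Finset.Ico x (x+2*t), (W (I + (s:ZMod n)) + W (I - (s:ZMod n))) = 0 := by
        intro I
        have h := congrFun hw (toFin n I)
        rw [circ_mulVec n x t hx hbig ht, natCast_toFin] at h
        simpa using h
      have hhat : ∀ j, j < n → j ≠ m →
          ∑ z : ZMod n, (W z : ℂ) * (ω^j)^(z.val) = 0 := by
        intro j hj hjm
        have hz := hat_mul_eq_zero n x t W hker (ω^j)
          (by rw [← pow_mul, mul_comm, pow_mul, hωn, one_pow])
        rcases mul_eq_zero.mp hz with h | h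
        · exact absurd h (hmu j hj hjm)
        · exact h
      have hWval := inversion n m hm hmpos ω hprim W hhat
      refine ⟨W 0, ?_⟩
      funext i
      have h1 : w i = W ((i.val : ZMod n)) := by
        rw [hW]
        simp only
        rw [toFin_natCast]
      have h2 : ((i.val : ZMod n)).val = i.val := by
        rw [ZMod.val_natCast, Nat.mod_eq_of_lt i.isLt]
      rw [h1, hWval, h2]
      simp only [Pi.smul_apply, smul_eq_mul]
      ring
end

section
/- For every even integer n ≥ 16, the circulant graph Circ(n, {1, 2, 4, 5, 6, 7}) is a nut graph. -/
open Finset Polynomial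

namespace CircNutAux

open Polynomial

noncomputable def Rpoly : Polynomial ℚ :=
  X ^ 12 - X ^ 11 + 2 * X ^ 10 - 2 * X ^ 9 + 2 * X ^ 8 - X ^ 7 + X ^ 6 - X ^ 5
    + 2 * X ^ 4 - 2 * X ^ 3 + 2 * X ^ 2 - X + 1

lemma Rpoly_natDegree : Rpoly.natDegree = 12 := by
  unfold Rpoly
  compute_degree!

lemma Rpoly_ne_zero : Rpoly ≠ 0 := by
  intro h
  have := Rpoly_natDegree
  rw [h] at this
  simp at this

lemma Rpoly_aeval (z : ℂ)
    (h : z ^ 12 - z ^ 11 + 2 * z ^ 10 - 2 * z ^ 9 + 2 * z ^ 8 - z ^ 7 + z ^ 6 - z ^ 5 + 2 * z ^ 4 - 2 * z ^ 3 + 2 * z ^ 2 - z + 1 = 0) :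
    Polynomial.aeval z Rpoly = 0 := by
  simp only [Rpoly, map_add, map_sub, map_mul, map_pow, map_ofNat, aeval_X, map_one]
  push_cast
  linear_combination h

lemma totient_aux : ∀ n : ℕ, n ≤ 2 * n.totient ^ 2 ∧ (¬ 2 ∣ n → n ≤ n.totient ^ 2) := by
  intro n
  induction n using Nat.recOnPosPrimePosCoprime with
  | prime_pow p k hp hk =>
      rcases Nat.exists_eq_add_of_le hp.two_le with ⟨m, hm⟩
      have htot : (p ^ k).totient = p ^ (k - 1) * (p - 1) := Nat.totient_prime_pow hp hk
      rcases Nat.exists_eq_add_of_le hk with ⟨l, hl⟩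
      have hl' : k = l + 1 := by omega
      subst hl'
      simp only [htot, Nat.add_sub_cancel]
      rcases Nat.eq_or_lt_of_le hp.two_le with h2 | h3
      · -- p = 2
        constructor
        · rw [← h2]
          have : (2:ℕ) ^ (l+1) ≤ 2 ^ (2*l+1) := Nat.pow_le_pow_right (by norm_num) (by omega)
          calc (2:ℕ)^(l+1) ≤ 2^(2*l+1) := this
            _ = 2 * (2^l * (2-1))^2 := by ring
        · intro hodd
          exfalso
          exact hodd (by rw [← h2]; exact dvd_pow_self 2 (by omega))
      · -- p ≥ 3
        have hp3 : 3 ≤ p := h3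
        have key : p ^ (l+1) ≤ (p ^ l * (p - 1)) ^ 2 := by
          have h1 : p + 1 ≤ (p-1)^2 := by
            rcases Nat.exists_eq_add_of_le hp3 with ⟨q, hq⟩
            subst hq
            simp [Nat.add_sub_cancel]
            nlinarith
          calc p ^ (l+1) = p ^ l * p := by ring
            _ ≤ (p^l)^2 * (p-1)^2 := by
                have e1 : p ^ l ≤ (p ^ l) ^ 2 := Nat.le_self_pow (by norm_num) _
                have e2 : p ≤ (p-1)^2 := by omega
                exact Nat.mul_le_mul e1 e2
            _ = (p ^ l * (p-1))^2 := by ring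
        exact ⟨key.trans (by omega), fun _ => key⟩
  | zero => simp
  | one => simp
  | coprime a b ha hb hab Ha Hb =>
      have htot : (a*b).totient = a.totient * b.totient := Nat.totient_mul hab
      have hodd : ¬ 2 ∣ a ∨ ¬ 2 ∣ b := by
        by_contra hcon
        push_neg at hcon
        have := Nat.Coprime.eq_one_of_dvd (Nat.Coprime.coprime_dvd_left hcon.1 hab) hcon.2
        omega
      constructor
      · rcases hodd with h | h
        · have h1 := Ha.2 h
          have h2 := Hb.1
          calc a * b ≤ a.totient^2 * (2 * b.totient^2) := Nat.mul_le_mul h1 h2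
            _ = 2 * (a*b).totient^2 := by rw [htot]; ring
        · have h1 := Ha.1
          have h2 := Hb.2 h
          calc a * b ≤ (2 * a.totient^2) * b.totient^2 := Nat.mul_le_mul h1 h2
            _ = 2 * (a*b).totient^2 := by rw [htot]; ring
      · intro h
        have h1 := Ha.2 (fun hd => h (Dvd.dvd.mul_right hd b))
        have h2 := Hb.2 (fun hd => h (Dvd.dvd.mul_left hd a))
        calc a * b ≤ a.totient^2 * b.totient^2 := Nat.mul_le_mul h1 h2
          _ = (a*b).totient^2 := by rw [htot]; ring
lemma cert3 (z : ℂ) (h1 : z ^ 3 = 1)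
    (h2 : z ^ 12 - z ^ 11 + 2 * z ^ 10 - 2 * z ^ 9 + 2 * z ^ 8 - z ^ 7 + z ^ 6 - z ^ 5 + 2 * z ^ 4 - 2 * z ^ 3 + 2 * z ^ 2 - z + 1 = 0) : False := by
  have h : (1 : ℂ) = 0 := by
    linear_combination (((-1 : ℂ)/9) + ((2 : ℂ)/9) * z + ((2 : ℂ)/9) * z ^ 2) * h2 + (((-10 : ℂ)/9) + ((1 : ℂ)/3) * z + ((-2 : ℂ)/9) * z ^ 2 + ((-2 : ℂ)/3) * z ^ 3 + ((1 : ℂ)/9) * z ^ 4 + ((-1 : ℂ)/9) * z ^ 5 + ((-5 : ℂ)/9) * z ^ 6 + ((2 : ℂ)/9) * z ^ 7 + ((-1 : ℂ)/3) * z ^ 8 + ((-1 : ℂ)/9) * z ^ 9 + ((-2 : ℂ)/9) * z ^ 11) * h1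
  exact one_ne_zero h

lemma cert4 (z : ℂ) (h1 : z ^ 4 = 1)
    (h2 : z ^ 12 - z ^ 11 + 2 * z ^ 10 - 2 * z ^ 9 + 2 * z ^ 8 - z ^ 7 + z ^ 6 - z ^ 5 + 2 * z ^ 4 - 2 * z ^ 3 + 2 * z ^ 2 - z + 1 = 0) : False := by
  have h : (1 : ℂ) = 0 := by
    linear_combination (((34 : ℂ)/57) + ((4 : ℂ)/57) * z + ((-23 : ℂ)/57) * z ^ 2 + ((4 : ℂ)/57) * z ^ 3) * h2 + (((-23 : ℂ)/57) + ((-10 : ℂ)/19) * z + ((41 : ℂ)/57) * z ^ 2 + ((-11 : ℂ)/19) * z ^ 3 + ((-13 : ℂ)/57) * z ^ 4 + ((-2 : ℂ)/57) * z ^ 5 + ((17 : ℂ)/57) * z ^ 6 + ((-32 : ℂ)/57) * z ^ 7 + ((8 : ℂ)/19) * z ^ 8 + ((-35 : ℂ)/57) * z ^ 9 + ((9 : ℂ)/19) * z ^ 10 + ((-4 : ℂ)/57) * z ^ 11) * h1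
  exact one_ne_zero h

lemma cert5 (z : ℂ) (h1 : z ^ 5 = 1)
    (h2 : z ^ 12 - z ^ 11 + 2 * z ^ 10 - 2 * z ^ 9 + 2 * z ^ 8 - z ^ 7 + z ^ 6 - z ^ 5 + 2 * z ^ 4 - 2 * z ^ 3 + 2 * z ^ 2 - z + 1 = 0) : False := by
  have h : (1 : ℂ) = 0 := by
    linear_combination (((2 : ℂ)/3) + ((-4 : ℂ)/3) * z + ((-4 : ℂ)/3) * z ^ 2 + ((2 : ℂ)/3) * z ^ 3 + ((5 : ℂ)/3) * z ^ 4) * h2 + (((-1 : ℂ)/3) + (-2) * z + ((4 : ℂ)/3) * z ^ 2 + (-2) * z ^ 3 + ((7 : ℂ)/3) * z ^ 4 + ((-4 : ℂ)/3) * z ^ 5 + ((-2 : ℂ)/3) * z ^ 6 + ((-4 : ℂ)/3) * z ^ 7 + (2) * z ^ 8 + ((-4 : ℂ)/3) * z ^ 9 + (1) * z ^ 10 + ((-5 : ℂ)/3) * z ^ 11) * h1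
  exact one_ne_zero h

lemma cert6 (z : ℂ) (h1 : z ^ 6 = 1)
    (h2 : z ^ 12 - z ^ 11 + 2 * z ^ 10 - 2 * z ^ 9 + 2 * z ^ 8 - z ^ 7 + z ^ 6 - z ^ 5 + 2 * z ^ 4 - 2 * z ^ 3 + 2 * z ^ 2 - z + 1 = 0) : False := by
  have h : (1 : ℂ) = 0 := by
    linear_combination (((49 : ℂ)/171) + ((46 : ℂ)/171) * z + ((-8 : ℂ)/171) * z ^ 2 + ((-68 : ℂ)/171) * z ^ 3 + ((-8 : ℂ)/171) * z ^ 4 + ((46 : ℂ)/171) * z ^ 5) * h2 + (((-122 : ℂ)/171) + ((-1 : ℂ)/57) * z + ((44 : ℂ)/171) * z ^ 2 + ((-22 : ℂ)/57) * z ^ 3 + ((50 : ℂ)/171) * z ^ 4 + ((-23 : ℂ)/171) * z ^ 5 + ((-61 : ℂ)/171) * z ^ 6 + ((-26 : ℂ)/171) * z ^ 7 + ((16 : ℂ)/57) * z ^ 8 + ((-32 : ℂ)/171) * z ^ 9 + ((6 : ℂ)/19) * z ^ 10 + ((-46 : ℂ)/171) * z ^ 11) * h1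
  exact one_ne_zero h

lemma cert7 (z : ℂ) (h1 : z ^ 7 = 1)
    (h2 : z ^ 12 - z ^ 11 + 2 * z ^ 10 - 2 * z ^ 9 + 2 * z ^ 8 - z ^ 7 + z ^ 6 - z ^ 5 + 2 * z ^ 4 - 2 * z ^ 3 + 2 * z ^ 2 - z + 1 = 0) : False := by
  have h : (1 : ℂ) = 0 := by
    linear_combination (((1 : ℂ)/3) + ((1 : ℂ)/3) * z + ((1 : ℂ)/3) * z ^ 2 + ((1 : ℂ)/3) * z ^ 3 + ((-2 : ℂ)/3) * z ^ 4 + ((-2 : ℂ)/3) * z ^ 5 + ((1 : ℂ)/3) * z ^ 6) * h2 + (((-2 : ℂ)/3) + ((2 : ℂ)/3) * z ^ 2 + ((-1 : ℂ)/3) * z ^ 4 + ((1 : ℂ)/3) * z ^ 5 + ((-1 : ℂ)/3) * z ^ 6 + ((-2 : ℂ)/3) * z ^ 7 + (1) * z ^ 8 + ((-2 : ℂ)/3) * z ^ 9 + (1) * z ^ 10 + ((-1 : ℂ)/3) * z ^ 11) * h1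
  exact one_ne_zero h

lemma cert8 (z : ℂ) (h1 : z ^ 8 = 1)
    (h2 : z ^ 12 - z ^ 11 + 2 * z ^ 10 - 2 * z ^ 9 + 2 * z ^ 8 - z ^ 7 + z ^ 6 - z ^ 5 + 2 * z ^ 4 - 2 * z ^ 3 + 2 * z ^ 2 - z + 1 = 0) : False := by
  have h : (1 : ℂ) = 0 := by
    linear_combination (((17 : ℂ)/57) + ((-55 : ℂ)/57) * z + ((-97 : ℂ)/57) * z ^ 2 + ((-55 : ℂ)/57) * z ^ 3 + ((17 : ℂ)/57) * z ^ 4 + ((59 : ℂ)/57) * z ^ 5 + ((74 : ℂ)/57) * z ^ 6 + ((59 : ℂ)/57) * z ^ 7) * h2 + (((-40 : ℂ)/57) + ((-24 : ℂ)/19) * z + ((-8 : ℂ)/57) * z ^ 2 + ((-34 : ℂ)/19) * z ^ 3 + ((22 : ℂ)/57) * z ^ 4 + ((-1 : ℂ)/57) * z ^ 5 + ((37 : ℂ)/57) * z ^ 6 + ((-16 : ℂ)/57) * z ^ 7 + ((4 : ℂ)/19) * z ^ 8 + ((-103 : ℂ)/57) * z ^ 9 + ((-5 : ℂ)/19) *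 z ^ 10 + ((-59 : ℂ)/57) * z ^ 11) * h1
  exact one_ne_zero h

lemma cert9 (z : ℂ) (h1 : z ^ 9 = 1)
    (h2 : z ^ 12 - z ^ 11 + 2 * z ^ 10 - 2 * z ^ 9 + 2 * z ^ 8 - z ^ 7 + z ^ 6 - z ^ 5 + 2 * z ^ 4 - 2 * z ^ 3 + 2 * z ^ 2 - z + 1 = 0) : False := by
  have h : (1 : ℂ) = 0 := by
    linear_combination (((8 : ℂ)/27) + ((11 : ℂ)/27) * z + ((-7 : ℂ)/27) * z ^ 2 + ((-19 : ℂ)/27) * z ^ 3 + ((-7 : ℂ)/27) * z ^ 4 + ((11 : ℂ)/27) * z ^ 5 + ((8 : ℂ)/27) * z ^ 6 + ((2 : ℂ)/27) * z ^ 7 + ((2 : ℂ)/27) * z ^ 8) * h2 + (((-19 : ℂ)/27) + ((1 : ℂ)/9) * z + ((-2 : ℂ)/27) * z ^ 2 + ((-2 : ℂ)/9) * z ^ 3 + ((-8 : ℂ)/27) * z ^ 4 + ((8 : ℂ)/27) * z ^ 5 + ((4 : ℂ)/27) * z ^ 6 + ((2 : ℂ)/27) * z ^ 7 + ((-1 :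 ℂ)/9) * z ^ 8 + ((-10 : ℂ)/27) * z ^ 9 + ((-2 : ℂ)/27) * z ^ 11) * h1
  exact one_ne_zero h

lemma cert10 (z : ℂ) (h1 : z ^ 10 = 1)
    (h2 : z ^ 12 - z ^ 11 + 2 * z ^ 10 - 2 * z ^ 9 + 2 * z ^ 8 - z ^ 7 + z ^ 6 - z ^ 5 + 2 * z ^ 4 - 2 * z ^ 3 + 2 * z ^ 2 - z + 1 = 0) : False := by
  have h : (1 : ℂ) = 0 := by
    linear_combination (((25 : ℂ)/57) + ((-44 : ℂ)/57) * z + ((-32 : ℂ)/57) * z ^ 2 + ((13 : ℂ)/57) * z ^ 3 + ((25 : ℂ)/57) * z ^ 4 + ((13 : ℂ)/57) * z ^ 5 + ((-32 : ℂ)/57) * z ^ 6 + ((-44 : ℂ)/57) * z ^ 7 + ((25 : ℂ)/57) * z ^ 8 + ((70 : ℂ)/57) * z ^ 9) * h2 + (((-32 : ℂ)/57) + ((-23 : ℂ)/19) * z + ((62 : ℂ)/57) * z ^ 2 + ((-31 : ℂ)/19) * z ^ 3 + ((86 : ℂ)/57) * z ^ 4 + ((-35 : ℂ)/57) * z ^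 5 + ((-16 : ℂ)/57) * z ^ 6 + ((-47 : ℂ)/57) * z ^ 7 + ((26 : ℂ)/19) * z ^ 8 + ((-71 : ℂ)/57) * z ^ 9 + ((15 : ℂ)/19) * z ^ 10 + ((-70 : ℂ)/57) * z ^ 11) * h1
  exact one_ne_zero h

lemma cert11 (z : ℂ) (h1 : z ^ 11 = 1)
    (h2 : z ^ 12 - z ^ 11 + 2 * z ^ 10 - 2 * z ^ 9 + 2 * z ^ 8 - z ^ 7 + z ^ 6 - z ^ 5 + 2 * z ^ 4 - 2 * z ^ 3 + 2 * z ^ 2 - z + 1 = 0) : False := by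
  have h : (1 : ℂ) = 0 := by
    linear_combination (((65 : ℂ)/129) + ((-4 : ℂ)/129) * z + ((-37 : ℂ)/129) * z ^ 2 + ((5 : ℂ)/129) * z ^ 3 + ((2 : ℂ)/129) * z ^ 4 + ((-19 : ℂ)/129) * z ^ 5 + ((2 : ℂ)/129) * z ^ 6 + ((5 : ℂ)/129) * z ^ 7 + ((-37 : ℂ)/129) * z ^ 8 + ((-4 : ℂ)/129) * z ^ 9 + ((65 : ℂ)/129) * z ^ 10) * h2 + (((-64 : ℂ)/129) + ((-23 : ℂ)/43) * z + ((97 : ℂ)/129) * z ^ 2 + ((-32 : ℂ)/43) * z ^ 3 + ((61 : ℂ)/129) * z ^ 4 + ((-10 : ℂ)/129) * z ^ 5 + ((10 : ℂ)/129) * z ^ 6 + ((-61 : ℂ)/129) * z ^ 7 + ((32 : ℂ)/43) * z ^ 8 + ((-97 : ℂ)/129) * z ^ 9 + ((23 : ℂ)/43) * z ^ 10 + ((-65 : ℂ)/129) * z ^ 11) * h1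
  exact one_ne_zero h

lemma cert12 (z : ℂ) (h1 : z ^ 12 = 1)
    (h2 : z ^ 12 - z ^ 11 + 2 * z ^ 10 - 2 * z ^ 9 + 2 * z ^ 8 - z ^ 7 + z ^ 6 - z ^ 5 + 2 * z ^ 4 - 2 * z ^ 3 + 2 * z ^ 2 - z + 1 = 0) : False := by
  have h : (1 : ℂ) = 0 := by
    linear_combination (((110 : ℂ)/171) + ((23 : ℂ)/171) * z + ((-4 : ℂ)/171) * z ^ 2 + ((-34 : ℂ)/171) * z ^ 3 + ((-4 : ℂ)/171) * z ^ 4 + ((23 : ℂ)/171) * z ^ 5 + ((-61 : ℂ)/171) * z ^ 6 + ((23 : ℂ)/171) * z ^ 7 + ((-4 : ℂ)/171) * z ^ 8 + ((-34 : ℂ)/171) * z ^ 9 + ((-4 : ℂ)/171) * z ^ 10 + ((23 : ℂ)/171) * z ^ 11) * h2 + (((-61 : ℂ)/171) + ((-29 : ℂ)/57) * z + ((193 : ℂ)/171) * z ^ 2 + ((-68 : ℂ)/57) * z ^ 3 + ((196 : ℂ)/171) * z ^ 4 + ((-97 : ℂ)/171) * z ^ 5 + ((55 : ℂ)/171) *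 z ^ 6 + ((-13 : ℂ)/171) * z ^ 7 + ((8 : ℂ)/57) * z ^ 8 + ((-16 : ℂ)/171) * z ^ 9 + ((3 : ℂ)/19) * z ^ 10 + ((-23 : ℂ)/171) * z ^ 11) * h1
  exact one_ne_zero h

lemma cert13 (z : ℂ) (h1 : z ^ 13 = 1)
    (h2 : z ^ 12 - z ^ 11 + 2 * z ^ 10 - 2 * z ^ 9 + 2 * z ^ 8 - z ^ 7 + z ^ 6 - z ^ 5 + 2 * z ^ 4 - 2 * z ^ 3 + 2 * z ^ 2 - z + 1 = 0) : False := by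
  have h : (1 : ℂ) = 0 := by
    linear_combination (((71 : ℂ)/159) + ((71 : ℂ)/159) * z + ((26 : ℂ)/159) * z ^ 2 + ((-31 : ℂ)/159) * z ^ 3 + ((-37 : ℂ)/159) * z ^ 4 + ((23 : ℂ)/159) * z ^ 5 + ((-1 : ℂ)/159) * z ^ 6 + ((-49 : ℂ)/159) * z ^ 7 + ((-1 : ℂ)/159) * z ^ 8 + ((23 : ℂ)/159) * z ^ 9 + ((-37 : ℂ)/159) * z ^ 10 + ((-31 : ℂ)/159) * z ^ 11 + ((26 : ℂ)/159) * z ^ 12) * h2 + (((-88 : ℂ)/159) + ((97 : ℂ)/159) * z ^ 2 + ((-19 : ℂ)/53) * z ^ 3 + ((46 : ℂ)/159) * z ^ 4 + ((17 : ℂ)/159) * z ^ 5 + ((16 : ℂ)/159) * z ^ 6 + ((-16 : ℂ)/159) * z ^ 7 + ((18 : ℂ)/53) * z ^ 8 + ((-46 : ℂ)/159) * z ^ 9 + ((19 : ℂ)/53) * z ^ 10 + ((-26 : ℂ)/159) * z ^ 11) * h1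
  exact one_ne_zero h

lemma cert14 (z : ℂ) (h1 : z ^ 14 = 1)
    (h2 : z ^ 12 - z ^ 11 + 2 * z ^ 10 - 2 * z ^ 9 + 2 * z ^ 8 - z ^ 7 + z ^ 6 - z ^ 5 + 2 * z ^ 4 - 2 * z ^ 3 + 2 * z ^ 2 - z + 1 = 0) : False := by
  have h : (1 : ℂ) = 0 := by
    linear_combination (((26 : ℂ)/57) + ((50 : ℂ)/57) * z + ((26 : ℂ)/57) * z ^ 2 + ((-7 : ℂ)/57) * z ^ 3 + ((-31 : ℂ)/57) * z ^ 4 + ((-7 : ℂ)/57) * z ^ 5 + ((26 : ℂ)/57) * z ^ 6 + ((-7 : ℂ)/57) * z ^ 7 + ((-31 : ℂ)/57) * z ^ 8 + ((-7 : ℂ)/57) * z ^ 9 + ((26 : ℂ)/57) * z ^ 10 + ((-7 : ℂ)/57) * z ^ 11 + ((-31 : ℂ)/57) * z ^ 12 + ((-7 : ℂ)/57) * z ^ 13) * h2 + (((-31 : ℂ)/57) + ((8 : ℂ)/19) * z + ((28 : ℂ)/57) * z ^ 2 + ((5 : ℂ)/19) * z ^ 3 + ((-20 : ℂ)/57) *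 z ^ 4 + ((32 : ℂ)/57) * z ^ 5 + ((13 : ℂ)/57) * z ^ 6 + ((-1 : ℂ)/57) * z ^ 7 + ((5 : ℂ)/19) * z ^ 8 + ((-10 : ℂ)/57) * z ^ 9 + ((8 : ℂ)/19) * z ^ 10 + ((7 : ℂ)/57) * z ^ 11) * h1
  exact one_ne_zero h

lemma cert15 (z : ℂ) (h1 : z ^ 15 = 1)
    (h2 : z ^ 12 - z ^ 11 + 2 * z ^ 10 - 2 * z ^ 9 + 2 * z ^ 8 - z ^ 7 + z ^ 6 - z ^ 5 + 2 * z ^ 4 - 2 * z ^ 3 + 2 * z ^ 2 - z + 1 = 0) : False := by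
  have h : (1 : ℂ) = 0 := by
    linear_combination (((7 : ℂ)/9) + ((4 : ℂ)/9) * z + ((4 : ℂ)/9) * z ^ 2 + ((7 : ℂ)/9) * z ^ 3 + ((4 : ℂ)/9) * z ^ 4 + ((-5 : ℂ)/9) * z ^ 5 + ((-11 : ℂ)/9) * z ^ 6 + ((-5 : ℂ)/9) * z ^ 7 + ((4 : ℂ)/9) * z ^ 8 + ((7 : ℂ)/9) * z ^ 9 + ((4 : ℂ)/9) * z ^ 10 + ((-5 : ℂ)/9) * z ^ 11 + ((-11 : ℂ)/9) * z ^ 12 + ((-5 : ℂ)/9) * z ^ 13 + ((4 : ℂ)/9) * z ^ 14) * h2 + (((-2 : ℂ)/9) + ((-1 : ℂ)/3) * z + ((14 : ℂ)/9) * z ^ 2 + ((-1 : ℂ)/3) * z ^ 3 + ((11 : ℂ)/9) * z ^ 4 + ((-2 : ℂ)/9) * z ^ 5 + ((-1 : ℂ)/9) * z ^ 6 + ((-5 : ℂ)/9) * z ^ 7 + ((4 : ℂ)/3) * z ^ 8 + ((-2 : ℂ)/9) * z ^ 9 + (1) * z ^ 10 + ((-4 : ℂ)/9) * z ^ 11)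 * h1
  exact one_ne_zero h

lemma cert16 (z : ℂ) (h1 : z ^ 16 = 1)
    (h2 : z ^ 12 - z ^ 11 + 2 * z ^ 10 - 2 * z ^ 9 + 2 * z ^ 8 - z ^ 7 + z ^ 6 - z ^ 5 + 2 * z ^ 4 - 2 * z ^ 3 + 2 * z ^ 2 - z + 1 = 0) : False := by
  have h : (1 : ℂ) = 0 := by
    linear_combination (((37 : ℂ)/57) + ((1 : ℂ)/57) * z + ((-20 : ℂ)/57) * z ^ 2 + ((1 : ℂ)/57) * z ^ 3 + ((37 : ℂ)/57) * z ^ 4 + ((58 : ℂ)/57) * z ^ 5 + ((37 : ℂ)/57) * z ^ 6 + ((1 : ℂ)/57) * z ^ 7 + ((-20 : ℂ)/57) * z ^ 8 + ((-56 : ℂ)/57) * z ^ 9 + ((-77 : ℂ)/57) * z ^ 10 + ((-56 : ℂ)/57) * z ^ 11 + ((-20 : ℂ)/57) * z ^ 12 + ((1 : ℂ)/57) * z ^ 13 + ((37 : ℂ)/57) * z ^ 14 + ((58 : ℂ)/57) * z ^ 15) * h2 + (((-20 : ℂ)/57) + ((-12 : ℂ)/19) * z + ((53 : ℂ)/57)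 * z ^ 2 + ((-17 : ℂ)/19) * z ^ 3 + ((68 : ℂ)/57) * z ^ 4 + ((28 : ℂ)/57) * z ^ 5 + ((47 : ℂ)/57) * z ^ 6 + ((-8 : ℂ)/57) * z ^ 7 + ((21 : ℂ)/19) * z ^ 8 + ((-80 : ℂ)/57) * z ^ 9 + ((7 : ℂ)/19) * z ^ 10 + ((-58 : ℂ)/57) * z ^ 11) * h1
  exact one_ne_zero h

lemma cert18 (z : ℂ) (h1 : z ^ 18 = 1)
    (h2 : z ^ 12 - z ^ 11 + 2 * z ^ 10 - 2 * z ^ 9 + 2 * z ^ 8 - z ^ 7 + z ^ 6 - z ^ 5 + 2 * z ^ 4 - 2 * z ^ 3 + 2 * z ^ 2 - z + 1 = 0) : False := by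
  have h : (1 : ℂ) = 0 := by
    linear_combination (((49 : ℂ)/513) + ((-125 : ℂ)/513) * z + ((-350 : ℂ)/513) * z ^ 2 + ((-410 : ℂ)/513) * z ^ 3 + ((-350 : ℂ)/513) * z ^ 4 + ((-125 : ℂ)/513) * z ^ 5 + ((49 : ℂ)/513) * z ^ 6 + ((46 : ℂ)/513) * z ^ 7 + ((-8 : ℂ)/513) * z ^ 8 + ((103 : ℂ)/513) * z ^ 9 + ((334 : ℂ)/513) * z ^ 10 + ((217 : ℂ)/513) * z ^ 11 + ((49 : ℂ)/513) * z ^ 12 + ((217 : ℂ)/513) * z ^ 13 + ((334 : ℂ)/513) * z ^ 14 + ((103 : ℂ)/513) * z ^ 15 + ((-8 : ℂ)/513) * z ^ 16 + ((46 : ℂ)/513) * z ^ 17) * h2 + (((-464 : ℂ)/513) + ((-58 : ℂ)/171) * z + ((-127 : ℂ)/513) * z ^ 2 + ((-136 : ℂ)/171) * z ^ 3 + ((-292 : ℂ)/513) * z ^ 4 + ((-194 : ℂ)/513) * z ^ 5 + ((-232 : ℂ)/513) * z ^ 6 + ((-197 : ℂ)/513) * z ^ 7 + ((-41 : ℂ)/171)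 * z ^ 8 + ((-203 : ℂ)/513) * z ^ 9 + ((2 : ℂ)/19) * z ^ 10 + ((-46 : ℂ)/513) * z ^ 11) * h1
  exact one_ne_zero h

lemma cert20 (z : ℂ) (h1 : z ^ 20 = 1)
    (h2 : z ^ 12 - z ^ 11 + 2 * z ^ 10 - 2 * z ^ 9 + 2 * z ^ 8 - z ^ 7 + z ^ 6 - z ^ 5 + 2 * z ^ 4 - 2 * z ^ 3 + 2 * z ^ 2 - z + 1 = 0) : False := by
  have h : (1 : ℂ) = 0 := by
    linear_combination (((20 : ℂ)/57) + ((-1 : ℂ)/3) * z + ((-28 : ℂ)/57) * z ^ 2 + ((-7 : ℂ)/57) * z ^ 3 + ((2 : ℂ)/57) * z ^ 4 + ((-7 : ℂ)/57) * z ^ 5 + ((-28 : ℂ)/57) * z ^ 6 + ((-1 : ℂ)/3) * z ^ 7 + ((20 : ℂ)/57) * z ^ 8 + ((35 : ℂ)/57) * z ^ 9 + ((5 : ℂ)/57) * z ^ 10 + ((-25 : ℂ)/57) * z ^ 11 + ((-4 : ℂ)/57) * z ^ 12 + ((20 : ℂ)/57) * z ^ 13 + ((23 : ℂ)/57) * z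 ^ 14 + ((20 : ℂ)/57) * z ^ 15 + ((-4 : ℂ)/57) * z ^ 16 + ((-25 : ℂ)/57) * z ^ 17 + ((5 : ℂ)/57) * z ^ 18 + ((35 : ℂ)/57) * z ^ 19) * h2 + (((-37 : ℂ)/57) + ((-13 : ℂ)/19) * z + ((31 : ℂ)/57) * z ^ 2 + (-1) * z ^ 3 + ((31 : ℂ)/57) * z ^ 4 + ((-25 : ℂ)/57) * z ^ 5 + ((-20 : ℂ)/57) * z ^ 6 + ((-34 : ℂ)/57) * z ^ 7 + ((13 : ℂ)/19) * z ^ 8 + ((-40 : ℂ)/57) * z ^ 9 + ((10 : ℂ)/19) * z ^ 10 + ((-35 : ℂ)/57) * z ^ 11) * h1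
  exact one_ne_zero h

lemma cert21 (z : ℂ) (h1 : z ^ 21 = 1)
    (h2 : z ^ 12 - z ^ 11 + 2 * z ^ 10 - 2 * z ^ 9 + 2 * z ^ 8 - z ^ 7 + z ^ 6 - z ^ 5 + 2 * z ^ 4 - 2 * z ^ 3 + 2 * z ^ 2 - z + 1 = 0) : False := by
  have h : (1 : ℂ) = 0 := by
    linear_combination (((124 : ℂ)/369) + ((31 : ℂ)/369) * z + ((-86 : ℂ)/369) * z ^ 2 + ((-65 : ℂ)/369) * z ^ 3 + ((-77 : ℂ)/369) * z ^ 4 + ((-77 : ℂ)/369) * z ^ 5 + ((-65 : ℂ)/369) * z ^ 6 + ((-86 : ℂ)/369) * z ^ 7 + ((31 : ℂ)/369) * z ^ 8 + ((124 : ℂ)/369) * z ^ 9 + ((121 : ℂ)/369) * z ^ 10 + ((-59 : ℂ)/369) * z ^ 11 + ((-110 : ℂ)/369) * z ^ 12 + ((67 : ℂ)/369) * z ^ 13 + ((85 : ℂ)/369) * z ^ 14 + ((61 : ℂ)/369) * z ^ 15 + ((85 : ℂ)/369) * z ^ 16 + ((67 : ℂ)/369) * z ^ 17 + ((-110 : ℂ)/369)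 * z ^ 18 + ((-59 : ℂ)/369) * z ^ 19 + ((121 : ℂ)/369) * z ^ 20) * h2 + (((-245 : ℂ)/369) + ((-31 : ℂ)/123) * z + ((131 : ℂ)/369) * z ^ 2 + ((-55 : ℂ)/123) * z ^ 3 + ((2 : ℂ)/369) * z ^ 4 + ((-20 : ℂ)/369) * z ^ 5 + ((-91 : ℂ)/369) * z ^ 6 + ((-158 : ℂ)/369) * z ^ 7 + ((61 : ℂ)/123) * z ^ 8 + ((-191 : ℂ)/369) * z ^ 9 + ((20 : ℂ)/41) * z ^ 10 + ((-121 : ℂ)/369) * z ^ 11) * h1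
  exact one_ne_zero h

lemma cert22 (z : ℂ) (h1 : z ^ 22 = 1)
    (h2 : z ^ 12 - z ^ 11 + 2 * z ^ 10 - 2 * z ^ 9 + 2 * z ^ 8 - z ^ 7 + z ^ 6 - z ^ 5 + 2 * z ^ 4 - 2 * z ^ 3 + 2 * z ^ 2 - z + 1 = 0) : False := by
  have h : (1 : ℂ) = 0 := by
    linear_combination (((1069 : ℂ)/2451) + ((736 : ℂ)/2451) * z + ((100 : ℂ)/2451) * z ^ 2 + ((-404 : ℂ)/2451) * z ^ 3 + ((-755 : ℂ)/2451) * z ^ 4 + ((-632 : ℂ)/2451) * z ^ 5 + ((-755 : ℂ)/2451) * z ^ 6 + ((-404 : ℂ)/2451) * z ^ 7 + ((100 : ℂ)/2451) * z ^ 8 + ((736 : ℂ)/2451) * z ^ 9 + ((1069 : ℂ)/2451) * z ^ 10 + ((166 : ℂ)/2451) * z ^ 11 + ((-812 : ℂ)/2451) * z ^ 12 + ((-803 : ℂ)/2451) * z ^ 13 + ((499 : ℂ)/2451) * z ^ 14 + ((793 : ℂ)/2451) * z ^ 15 + ((271 : ℂ)/2451) * z ^ 16 + ((793 : ℂ)/2451)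 * z ^ 17 + ((499 : ℂ)/2451) * z ^ 18 + ((-803 : ℂ)/2451) * z ^ 19 + ((-812 : ℂ)/2451) * z ^ 20 + ((166 : ℂ)/2451) * z ^ 21) * h2 + (((-1382 : ℂ)/2451) + ((-111 : ℂ)/817) * z + ((1502 : ℂ)/2451) * z ^ 2 + ((-390 : ℂ)/817) * z ^ 3 + ((515 : ℂ)/2451) * z ^ 4 + ((-482 : ℂ)/2451) * z ^ 5 + ((-292 : ℂ)/2451) * z ^ 6 + ((-644 : ℂ)/2451) * z ^ 7 + ((218 : ℂ)/817) * z ^ 8 + ((-341 : ℂ)/2451) * z ^ 9 + ((326 : ℂ)/817) * z ^ 10 + ((-166 : ℂ)/2451) * z ^ 11) * h1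
  exact one_ne_zero h

lemma cert24 (z : ℂ) (h1 : z ^ 24 = 1)
    (h2 : z ^ 12 - z ^ 11 + 2 * z ^ 10 - 2 * z ^ 9 + 2 * z ^ 8 - z ^ 7 + z ^ 6 - z ^ 5 + 2 * z ^ 4 - 2 * z ^ 3 + 2 * z ^ 2 - z + 1 = 0) : False := by
  have h : (1 : ℂ) = 0 := by
    linear_combination (((55 : ℂ)/171) + ((97 : ℂ)/171) * z + ((-2 : ℂ)/171) * z ^ 2 + ((-188 : ℂ)/171) * z ^ 3 + ((-173 : ℂ)/171) * z ^ 4 + ((97 : ℂ)/171) * z ^ 5 + ((226 : ℂ)/171) * z ^ 6 + ((97 : ℂ)/171) * z ^ 7 + ((-173 : ℂ)/171) * z ^ 8 + ((-188 : ℂ)/171) * z ^ 9 + ((-2 : ℂ)/171) * z ^ 10 + ((97 : ℂ)/171) * z ^ 11 + ((55 : ℂ)/171) * z ^ 12 + ((-74 : ℂ)/171) * z ^ 13 + ((-2 : ℂ)/171) * z ^ 14 + ((154 : ℂ)/171) * z ^ 15 + ((169 : ℂ)/171) * z ^ 16 + ((-74 : ℂ)/171) * z ^ 17 + ((-287 :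 ℂ)/171) * z ^ 18 + ((-74 : ℂ)/171) * z ^ 19 + ((169 : ℂ)/171) * z ^ 20 + ((154 : ℂ)/171) * z ^ 21 + ((-2 : ℂ)/171) * z ^ 22 + ((-74 : ℂ)/171) * z ^ 23) * h2 + (((-116 : ℂ)/171) + ((14 : ℂ)/57) * z + ((11 : ℂ)/171) * z ^ 2 + ((-34 : ℂ)/57) * z ^ 3 + ((-73 : ℂ)/171) * z ^ 4 + ((37 : ℂ)/171) * z ^ 5 + ((113 : ℂ)/171) * z ^ 6 + ((79 : ℂ)/171) * z ^ 7 + ((-53 : ℂ)/57) * z ^ 8 + ((-8 : ℂ)/171) * z ^ 9 + ((-8 : ℂ)/19) * z ^ 10 + ((74 : ℂ)/171) * z ^ 11) * h1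
  exact one_ne_zero h

lemma cert26 (z : ℂ) (h1 : z ^ 26 = 1)
    (h2 : z ^ 12 - z ^ 11 + 2 * z ^ 10 - 2 * z ^ 9 + 2 * z ^ 8 - z ^ 7 + z ^ 6 - z ^ 5 + 2 * z ^ 4 - 2 * z ^ 3 + 2 * z ^ 2 - z + 1 = 0) : False := by
  have h : (1 : ℂ) = 0 := by
    linear_combination (((913 : ℂ)/3021) + ((436 : ℂ)/3021) * z + ((-1025 : ℂ)/3021) * z ^ 2 + ((-533 : ℂ)/3021) * z ^ 3 + ((-113 : ℂ)/3021) * z ^ 4 + ((-20 : ℂ)/3021) * z ^ 5 + ((229 : ℂ)/3021) * z ^ 6 + ((-704 : ℂ)/3021) * z ^ 7 + ((229 : ℂ)/3021) * z ^ 8 + ((-20 : ℂ)/3021) * z ^ 9 + ((-113 : ℂ)/3021) * z ^ 10 + ((-533 : ℂ)/3021) * z ^ 11 + ((-1025 : ℂ)/3021) * z ^ 12 + ((436 : ℂ)/3021) * z ^ 13 + ((913 : ℂ)/3021) * z ^ 14 + ((1519 : ℂ)/3021) * z ^ 15 + ((-56 : ℂ)/3021) * z ^ 16 + ((-590 : ℂ)/3021)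 * z ^ 17 + ((457 : ℂ)/3021) * z ^ 18 + ((-248 : ℂ)/3021) * z ^ 19 + ((-227 : ℂ)/3021) * z ^ 20 + ((-248 : ℂ)/3021) * z ^ 21 + ((457 : ℂ)/3021) * z ^ 22 + ((-590 : ℂ)/3021) * z ^ 23 + ((-56 : ℂ)/3021) * z ^ 24 + ((1519 : ℂ)/3021) * z ^ 25) * h2 + (((-2108 : ℂ)/3021) + ((-3 : ℂ)/19) * z + ((365 : ℂ)/3021) * z ^ 2 + ((-154 : ℂ)/1007) * z ^ 3 + ((-676 : ℂ)/3021) * z ^ 4 + ((1036 : ℂ)/3021) * z ^ 5 + ((-484 : ℂ)/3021) * z ^ 6 + ((-1265 : ℂ)/3021) * z ^ 7 + ((701 : ℂ)/1007) * z ^ 8 + ((-2504 : ℂ)/3021) * z ^ 9 + ((525 : ℂ)/1007) * z ^ 10 + ((-1519 : ℂ)/3021) * z ^ 11) * h1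
  exact one_ne_zero h

lemma cert28 (z : ℂ) (h1 : z ^ 28 = 1)
    (h2 : z ^ 12 - z ^ 11 + 2 * z ^ 10 - 2 * z ^ 9 + 2 * z ^ 8 - z ^ 7 + z ^ 6 - z ^ 5 + 2 * z ^ 4 - 2 * z ^ 3 + 2 * z ^ 2 - z + 1 = 0) : False := by
  have h : (1 : ℂ) = 0 := by
    linear_combination (((3938 : ℂ)/9519) + ((25 : ℂ)/57) * z + ((404 : ℂ)/9519) * z ^ 2 + ((-2266 : ℂ)/9519) * z ^ 3 + ((-2959 : ℂ)/9519) * z ^ 4 + ((-100 : ℂ)/9519) * z ^ 5 + ((1544 : ℂ)/9519) * z ^ 6 + ((-898 : ℂ)/9519) * z ^ 7 + ((-1876 : ℂ)/9519) * z ^ 8 + ((-898 : ℂ)/9519) * z ^ 9 + ((1544 : ℂ)/9519) * z ^ 10 + ((-100 : ℂ)/9519) * z ^ 11 + ((-2959 : ℂ)/9519) * z ^ 12 + ((-2266 : ℂ)/9519) * z ^ 13 + ((404 : ℂ)/9519) * z ^ 14 + ((25 : ℂ)/57) * z ^ 15 + ((3938 : ℂ)/9519) * z ^ 16 + ((1097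 : ℂ)/9519) * z ^ 17 + ((-2218 : ℂ)/9519) * z ^ 18 + ((-1069 : ℂ)/9519) * z ^ 19 + ((2798 : ℂ)/9519) * z ^ 20 + ((-271 : ℂ)/9519) * z ^ 21 + ((-3301 : ℂ)/9519) * z ^ 22 + ((-271 : ℂ)/9519) * z ^ 23 + ((2798 : ℂ)/9519) * z ^ 24 + ((-1069 : ℂ)/9519) * z ^ 25 + ((-2218 : ℂ)/9519) * z ^ 26 + ((1097 : ℂ)/9519) * z ^ 27) * h2 + (((-5581 : ℂ)/9519) + ((79 : ℂ)/3173) * z + ((4105 : ℂ)/9519) * z ^ 2 + ((-732 : ℂ)/3173) * z ^ 3 + ((-359 : ℂ)/9519) * z ^ 4 + ((1931 : ℂ)/9519) * z ^ 5 + ((829 : ℂ)/9519) * z ^ 6 + ((-1423 : ℂ)/9519) * z ^ 7 + ((921 : ℂ)/3173) * z ^ 8 + ((-3343 : ℂ)/9519) * z ^ 9 + ((1105 : ℂ)/3173) * z ^ 10 + ((-1097 : ℂ)/9519) * z ^ 11) * h1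
  exact one_ne_zero h

lemma cert30 (z : ℂ) (h1 : z ^ 30 = 1)
    (h2 : z ^ 12 - z ^ 11 + 2 * z ^ 10 - 2 * z ^ 9 + 2 * z ^ 8 - z ^ 7 + z ^ 6 - z ^ 5 + 2 * z ^ 4 - 2 * z ^ 3 + 2 * z ^ 2 - z + 1 = 0) : False := by
  have h : (1 : ℂ) = 0 := by
    linear_combination (((2903 : ℂ)/5301) + ((1619 : ℂ)/5301) * z + ((737 : ℂ)/5301) * z ^ 2 + ((1220 : ℂ)/5301) * z ^ 3 + ((395 : ℂ)/5301) * z ^ 4 + ((-1288 : ℂ)/5301) * z ^ 5 + ((-2911 : ℂ)/5301) * z ^ 6 + ((-2143 : ℂ)/5301) * z ^ 7 + ((1079 : ℂ)/5301) * z ^ 8 + ((2588 : ℂ)/5301) * z ^ 9 + ((1079 : ℂ)/5301) * z ^ 10 + ((-2143 : ℂ)/5301) * z ^ 11 + ((-2911 : ℂ)/5301) * z ^ 12 + ((-1288 : ℂ)/5301) * z ^ 13 + ((395 : ℂ)/5301) * z ^ 14 + ((1220 : ℂ)/5301) * z ^ 15 + ((737 : ℂ)/5301) * z ^ 16 + ((1619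 : ℂ)/5301) * z ^ 17 + ((2903 : ℂ)/5301) * z ^ 18 + ((1961 : ℂ)/5301) * z ^ 19 + ((-1657 : ℂ)/5301) * z ^ 20 + ((-3568 : ℂ)/5301) * z ^ 21 + ((-802 : ℂ)/5301) * z ^ 22 + ((1277 : ℂ)/5301) * z ^ 23 + ((1535 : ℂ)/5301) * z ^ 24 + ((1277 : ℂ)/5301) * z ^ 25 + ((-802 : ℂ)/5301) * z ^ 26 + ((-3568 : ℂ)/5301) * z ^ 27 + ((-1657 : ℂ)/5301) * z ^ 28 + ((1961 : ℂ)/5301) * z ^ 29) * h2 + (((-2398 : ℂ)/5301) + ((-428 : ℂ)/1767) * z + ((4924 : ℂ)/5301) * z ^ 2 + ((-695 : ℂ)/1767) * z ^ 3 + ((3217 : ℂ)/5301) * z ^ 4 + ((-382 : ℂ)/5301) * z ^ 5 + ((-515 : ℂ)/5301) * z ^ 6 + ((-2179 : ℂ)/5301) * z ^ 7 + ((1490 : ℂ)/1767) * z ^ 8 + ((-2011 : ℂ)/5301) * z ^ 9 + ((402 : ℂ)/589) * z ^ 10 + ((-1961 : ℂ)/5301) * z ^ 11) * h1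
  exact one_ne_zero h

lemma cert36 (z : ℂ) (h1 : z ^ 36 = 1)
    (h2 : z ^ 12 - z ^ 11 + 2 * z ^ 10 - 2 * z ^ 9 + 2 * z ^ 8 - z ^ 7 + z ^ 6 - z ^ 5 + 2 * z ^ 4 - 2 * z ^ 3 + 2 * z ^ 2 - z + 1 = 0) : False := by
  have h : (1 : ℂ) = 0 := by
    linear_combination (((6293 : ℂ)/18981) + ((-1543 : ℂ)/18981) * z + ((-5962 : ℂ)/18981) * z ^ 2 + ((-205 : ℂ)/513) * z ^ 3 + ((-6988 : ℂ)/18981) * z ^ 4 + ((-3082 : ℂ)/18981) * z ^ 5 + ((-4480 : ℂ)/18981) * z ^ 6 + ((-1714 : ℂ)/18981) * z ^ 7 + ((1391 : ℂ)/18981) * z ^ 8 + ((6779 : ℂ)/18981) * z ^ 9 + ((7205 : ℂ)/18981) * z ^ 10 + ((680 : ℂ)/18981) * z ^ 11 + ((-376 : ℂ)/18981) * z ^ 12 + ((680 : ℂ)/18981) * z ^ 13 + ((7205 : ℂ)/18981) * z ^ 14 + ((6779 : ℂ)/18981) * z ^ 15 + ((1391 : ℂ)/18981) * z ^ 16 +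 ((-1714 : ℂ)/18981) * z ^ 17 + ((-4480 : ℂ)/18981) * z ^ 18 + ((-3082 : ℂ)/18981) * z ^ 19 + ((-6988 : ℂ)/18981) * z ^ 20 + ((-205 : ℂ)/513) * z ^ 21 + ((-5962 : ℂ)/18981) * z ^ 22 + ((-1543 : ℂ)/18981) * z ^ 23 + ((6293 : ℂ)/18981) * z ^ 24 + ((3416 : ℂ)/18981) * z ^ 25 + ((-1687 : ℂ)/18981) * z ^ 26 + ((-2968 : ℂ)/18981) * z ^ 27 + ((5153 : ℂ)/18981) * z ^ 28 + ((7349 : ℂ)/18981) * z ^ 29 + ((2189 : ℂ)/18981) * z ^ 30 + ((7349 : ℂ)/18981) * z ^ 31 + ((5153 : ℂ)/18981) * z ^ 32 + ((-2968 : ℂ)/18981) * z ^ 33 + ((-1687 : ℂ)/18981) * z ^ 34 + ((3416 : ℂ)/18981) * z ^ 35) * h2 + (((-12688 : ℂ)/18981) + ((-2612 : ℂ)/6327) * z + ((8167 : ℂ)/18981) * z ^ 2 + ((-5765 : ℂ)/6327) * z ^ 3 + ((4345 : ℂ)/18981) * z ^ 4 + ((-8719 : ℂ)/18981) * z ^ 5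 + ((-116 : ℂ)/513) * z ^ 6 + ((-6466 : ℂ)/18981) * z ^ 7 + ((695 : ℂ)/6327) * z ^ 8 + ((-5551 : ℂ)/18981) * z ^ 9 + ((189 : ℂ)/703) * z ^ 10 + ((-3416 : ℂ)/18981) * z ^ 11) * h1
  exact one_ne_zero h

lemma cert42 (z : ℂ) (h1 : z ^ 42 = 1)
    (h2 : z ^ 12 - z ^ 11 + 2 * z ^ 10 - 2 * z ^ 9 + 2 * z ^ 8 - z ^ 7 + z ^ 6 - z ^ 5 + 2 * z ^ 4 - 2 * z ^ 3 + 2 * z ^ 2 - z + 1 = 0) : False := by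
  have h : (1 : ℂ) = 0 := by
    linear_combination (((115967 : ℂ)/301473) + ((63032 : ℂ)/301473) * z + ((-46939 : ℂ)/301473) * z ^ 2 + ((-88360 : ℂ)/301473) * z ^ 3 + ((-74812 : ℂ)/301473) * z ^ 4 + ((11903 : ℂ)/301473) * z ^ 5 + ((35255 : ℂ)/301473) * z ^ 6 + ((-23323 : ℂ)/301473) * z ^ 7 + ((-37705 : ℂ)/301473) * z ^ 8 + ((-14659 : ℂ)/301473) * z ^ 9 + ((27104 : ℂ)/301473) * z ^ 10 + ((-22810 : ℂ)/301473) * z ^ 11 + ((-63754 : ℂ)/301473) * z ^ 12 + ((-20416 : ℂ)/301473) * z ^ 13 + ((68486 : ℂ)/301473) * z ^ 14 + ((138386 : ℂ)/301473) * z ^ 15 + ((68486 : ℂ)/301473) * z ^ 16 + ((-20416 : ℂ)/301473) * z ^ 17 + ((-63754 : ℂ)/301473) * z ^ 18 + ((-22810 : ℂ)/301473) * z ^ 19 + ((27104 : ℂ)/301473) * z ^ 20 + ((-14659 : ℂ)/301473) * z ^ 21 + ((-37705 : ℂ)/301473) * z ^ 22 + ((-23323 : ℂ)/301473) * z ^ 23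 + ((35255 : ℂ)/301473) * z ^ 24 + ((11903 : ℂ)/301473) * z ^ 25 + ((-74812 : ℂ)/301473) * z ^ 26 + ((-88360 : ℂ)/301473) * z ^ 27 + ((-46939 : ℂ)/301473) * z ^ 28 + ((63032 : ℂ)/301473) * z ^ 29 + ((115967 : ℂ)/301473) * z ^ 30 + ((71753 : ℂ)/301473) * z ^ 31 + ((-25393 : ℂ)/301473) * z ^ 32 + ((-26116 : ℂ)/301473) * z ^ 33 + ((75155 : ℂ)/301473) * z ^ 34 + ((959 : ℂ)/301473) * z ^ 35 + ((-88549 : ℂ)/301473) * z ^ 36 + ((959 : ℂ)/301473) * z ^ 37 + ((75155 : ℂ)/301473) * z ^ 38 + ((-26116 : ℂ)/301473) * z ^ 39 + ((-25393 : ℂ)/301473) * z ^ 40 + ((71753 : ℂ)/301473) * z ^ 41) * h2 + (((-185506 : ℂ)/301473) + ((-17645 : ℂ)/100491) * z + ((121963 : ℂ)/301473) * z ^ 2 + ((-49097 : ℂ)/100491) * z ^ 3 + ((25540 : ℂ)/301473) * z ^ 4 + ((13970 : ℂ)/301473) * z ^ 5 + ((9505 : ℂ)/301473) * z ^ 6 +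 ((-67864 : ℂ)/301473) * z ^ 7 + ((31007 : ℂ)/100491) * z ^ 8 + ((-142783 : ℂ)/301473) * z ^ 9 + ((10794 : ℂ)/33497) * z ^ 10 + ((-71753 : ℂ)/301473) * z ^ 11) * h1
  exact one_ne_zero h

set_option maxRecDepth 10000 in
lemma totient_mem : ∀ d ∈ Finset.Icc 3 288, d.totient ≤ 12 →
    d ∈ ([3,4,5,6,7,8,9,10,11,12,13,14,15,16,18,20,21,22,24,26,28,30,36,42] : List ℕ) := by
  decide

lemma R_root_aux (d : ℕ) (hd0 : 0 < d) (htot : d.totient ≤ 12) (z : ℂ)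
    (hdn : z ^ d = 1)
    (h : z ^ 12 - z ^ 11 + 2 * z ^ 10 - 2 * z ^ 9 + 2 * z ^ 8 - z ^ 7 + z ^ 6 - z ^ 5
      + 2 * z ^ 4 - 2 * z ^ 3 + 2 * z ^ 2 - z + 1 = 0) : False := by
  have hb : d ≤ 288 := by have := (totient_aux d).1; nlinarith
  have hd3 : 3 ≤ d := by
    by_contra hlt
    push_neg at hlt
    interval_cases d
    · rw [pow_one] at hdn
      rw [hdn] at h; norm_num at h
    · have hfac : (z - 1) * (z + 1) = 0 := by linear_combination hdn
      rcases mul_eq_zero.mp hfac with h1 | h1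
      · rw [sub_eq_zero] at h1; rw [h1] at h; norm_num at h
      · have h1' : z = -1 := eq_neg_of_add_eq_zero_left h1
        rw [h1'] at h; norm_num at h
  have hmem := totient_mem d (Finset.mem_Icc.mpr ⟨hd3, hb⟩) htot
  fin_cases hmem
  · exact cert3 z hdn h
  · exact cert4 z hdn h
  · exact cert5 z hdn h
  · exact cert6 z hdn h
  · exact cert7 z hdn h
  · exact cert8 z hdn h
  · exact cert9 z hdn h
  · exact cert10 z hdn h
  · exact cert11 z hdn h
  · exact cert12 z hdn h
  · exact cert13 z hdn h
  · exact cert14 z hdn h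
  · exact cert15 z hdn h
  · exact cert16 z hdn h
  · exact cert18 z hdn h
  · exact cert20 z hdn h
  · exact cert21 z hdn h
  · exact cert22 z hdn h
  · exact cert24 z hdn h
  · exact cert26 z hdn h
  · exact cert28 z hdn h
  · exact cert30 z hdn h
  · exact cert36 z hdn h
  · exact cert42 z hdn h

lemma R_ne_zero {n : ℕ} (hn : n ≠ 0) {z : ℂ} (hz : z ^ n = 1) :
    z ^ 12 - z ^ 11 + 2 * z ^ 10 - 2 * z ^ 9 + 2 * z ^ 8 - z ^ 7 + z ^ 6 - z ^ 5
      + 2 * z ^ 4 - 2 * z ^ 3 + 2 * z ^ 2 - z + 1 ≠ 0 := by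
  intro h
  have hfin : IsOfFinOrder z := isOfFinOrder_iff_pow_eq_one.2 ⟨n, Nat.pos_of_ne_zero hn, hz⟩
  have hd0 : 0 < orderOf z := hfin.orderOf_pos
  have hdn : z ^ orderOf z = 1 := pow_orderOf_eq_one z
  have prim : IsPrimitiveRoot z (orderOf z) := IsPrimitiveRoot.orderOf z
  have hdvd : minpoly ℚ z ∣ Rpoly := minpoly.dvd ℚ z (Rpoly_aeval z h)
  have hdeg : (minpoly ℚ z).natDegree ≤ 12 := by
    have := Polynomial.natDegree_le_of_dvd hdvd Rpoly_ne_zero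
    rwa [Rpoly_natDegree] at this
  have hcyc : cyclotomic (orderOf z) ℚ = minpoly ℚ z :=
    cyclotomic_eq_minpoly_rat prim hd0
  have htot : (orderOf z).totient ≤ 12 := by
    have := natDegree_cyclotomic (orderOf z) ℚ
    rw [hcyc] at this
    omega
  exact R_root_aux (orderOf z) hd0 htot z hdn h
-- Equiv between Fin n and ZMod n
def EZ (n : ℕ) [NeZero n] : Fin n ≃ ZMod n where
  toFun j := (j.val : ZMod n)
  invFun x := ⟨x.val, x.val_lt⟩
  left_inv j := by
    ext
    simp [ZMod.val_natCast, Nat.mod_eq_of_lt j.is_lt]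
  right_inv x := ZMod.natCast_rightInverse x

lemma EZ_val {n : ℕ} [NeZero n] (j : Fin n) : (EZ n j).val = j.val := by
  simp [EZ, ZMod.val_natCast, Nat.mod_eq_of_lt j.is_lt]

section Graph

variable {n : ℕ}

lemma cast_eq_iff (hn16 : 16 ≤ n) {s s' : ℕ} (hs7 : s ≤ 7) (ht7 : s' ≤ 7) :
    ((s : ZMod n) = (s' : ZMod n)) ↔ s = s' := by
  constructor
  · intro h
    have h1 : (s : ZMod n).val = s := ZMod.val_cast_of_lt (by omega)
    have h2 : (s' : ZMod n).val = s' := ZMod.val_cast_of_lt (by omega)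
    rw [← h1, ← h2, h]
  · intro h; rw [h]

lemma cast_ne_neg (hn16 : 16 ≤ n) {s s' : ℕ} (hs : 1 ≤ s) (hs7 : s ≤ 7)
    (ht : 1 ≤ s') (ht7 : s' ≤ 7) : (s : ZMod n) ≠ -(s' : ZMod n) := by
  intro hEq
  have h0 : ((s + s' : ℕ) : ZMod n) = 0 := by push_cast; rw [hEq]; ring
  have hval : ((s + s' : ℕ) : ZMod n).val = s + s' := ZMod.val_cast_of_lt (by omega)
  rw [h0, ZMod.val_zero] at hval
  omega

lemma cast_ne_zero (hn16 : 16 ≤ n) {s : ℕ} (hs : 1 ≤ s) (hs7 : s ≤ 7) :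
    (s : ZMod n) ≠ 0 := by
  intro h
  have hval : (s : ZMod n).val = s := ZMod.val_cast_of_lt (by omega)
  rw [h, ZMod.val_zero] at hval
  omega

open Classical in
lemma adj_sum [NeZero n] {F : Type*} [Field F] (hn16 : 16 ≤ n) (u : ZMod n → F) (i : Fin n) :
    ∑ j : Fin n, (if (circ n ({1, 2, 4, 5, 6, 7} : Finset ℕ)).Adj i j then (1:F) else 0)
        * u ((j.val : ZMod n))
      = ∑ s ∈ ({1, 2, 4, 5, 6, 7} : Finset ℕ),
          (u ((i.val : ZMod n) + (s : ZMod n)) + u ((i.val : ZMod n) - (s : ZMod n))) := by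
  classical
  have hS : ∀ s ∈ ({1, 2, 4, 5, 6, 7} : Finset ℕ), 1 ≤ s ∧ s ≤ 7 := by decide
  set S6 : Finset ℕ := {1, 2, 4, 5, 6, 7} with hS6
  set x : ZMod n := (i.val : ZMod n) with hx
  set T : Finset (ZMod n) := S6.biUnion (fun s => {x + (s : ZMod n), x - (s : ZMod n)}) with hT
  have hmemT : ∀ y : ZMod n, y ∈ T ↔ ∃ s ∈ S6, y = x + (s:ZMod n) ∨ y = x - (s:ZMod n) := by
    intro y
    simp only [hT, Finset.mem_biUnion, Finset.mem_insert, Finset.mem_singleton]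
  have hadj : ∀ j : Fin n, (circ n S6).Adj i j ↔ ((j.val : ZMod n)) ∈ T := by
    intro j
    rw [hmemT]
    constructor
    · rintro ⟨hij, s, hs, hcase⟩
      refine ⟨s, hs, ?_⟩
      rcases hcase with h | h
      · right; linear_combination -h
      · left; linear_combination h
    · rintro ⟨s, hs, hcase⟩
      obtain ⟨hs1, hs7⟩ := hS s hs
      have hne : i ≠ j := by
        intro hEq
        subst hEq
        rcases hcase with h | h
        · exact cast_ne_zero hn16 hs1 hs7 (by linear_combination -h)
        · exact cast_ne_zero hn16 hs1 hs7 (by linear_combination h)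
      refine ⟨hne, s, hs, ?_⟩
      rcases hcase with h | h
      · right; linear_combination h
      · left; linear_combination -h
  have step1 : ∑ j : Fin n, (if (circ n S6).Adj i j then (1:F) else 0) * u ((j.val : ZMod n))
      = ∑ y : ZMod n, (if y ∈ T then (1:F) else 0) * u y := by
    rw [← Equiv.sum_comp (EZ n) (fun y => (if y ∈ T then (1:F) else 0) * u y)]
    refine Finset.sum_congr rfl fun j _ => ?_
    have : (EZ n) j = (j.val : ZMod n) := rfl
    rw [this]
    congr 1
    exact if_congr (hadj j) rfl rfl
  rw [step1]
  have step2 : ∑ y : ZMod n, (if y ∈ T then (1:F) else 0) * u y = ∑ y ∈ T, u y := by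
    simp only [ite_mul, one_mul, zero_mul]
    rw [Finset.sum_ite_mem, Finset.univ_inter]
  rw [step2]
  have hdisj : (↑S6 : Set ℕ).PairwiseDisjoint
      (fun s : ℕ => ({x + (s : ZMod n), x - (s : ZMod n)} : Finset (ZMod n))) := by
    intro s hs s' hs' hss'
    obtain ⟨hs1, hs7⟩ := hS s (by exact_mod_cast hs)
    obtain ⟨ht1, ht7⟩ := hS s' (by exact_mod_cast hs')
    simp only [Function.onFun]
    rw [Finset.disjoint_left]
    intro a ha ha'
    simp only [Finset.mem_insert, Finset.mem_singleton] at ha ha'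
    rcases ha with h1 | h1 <;> rcases ha' with h2 | h2
    · rw [h1] at h2
      have : (s : ZMod n) = (s' : ZMod n) := by linear_combination h2
      exact hss' ((cast_eq_iff hn16 hs7 ht7).mp this)
    · rw [h1] at h2
      have : (s : ZMod n) = -(s' : ZMod n) := by linear_combination h2
      exact cast_ne_neg hn16 hs1 hs7 ht1 ht7 this
    · rw [h1] at h2
      have : (s' : ZMod n) = -(s : ZMod n) := by linear_combination -h2
      exact cast_ne_neg hn16 ht1 ht7 hs1 hs7 this
    · rw [h1] at h2
      have : (s : ZMod n) = (s' : ZMod n) := by linear_combination -h2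
      exact hss' ((cast_eq_iff hn16 hs7 ht7).mp this)
  rw [hT, Finset.sum_biUnion hdisj]
  refine Finset.sum_congr rfl fun s hs => ?_
  obtain ⟨hs1, hs7⟩ := hS s hs
  have hpair : x + (s : ZMod n) ≠ x - (s : ZMod n) := by
    intro h
    have : (s : ZMod n) = -(s : ZMod n) := by linear_combination h
    exact cast_ne_neg hn16 hs1 hs7 hs1 hs7 this
  rw [Finset.sum_pair hpair]

end Graph

section DFT

variable {n : ℕ} [NeZero n] {ζ : ℂ}

lemma pow_mod (hζ : ζ ^ n = 1) (a : ℕ) : ζ ^ (a % n) = ζ ^ a := by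
  conv_rhs => rw [← Nat.div_add_mod a n]
  rw [pow_add, pow_mul, hζ, one_pow, one_mul]

lemma e_add (hζ : ζ ^ n = 1) (x y : ZMod n) :
    ζ ^ (x + y).val = ζ ^ x.val * ζ ^ y.val := by
  rw [ZMod.val_add, pow_mod hζ, pow_add]

lemma e_nat (hζ : ζ ^ n = 1) (s : ℕ) : ζ ^ ((s : ZMod n)).val = ζ ^ s := by
  rw [ZMod.val_natCast, pow_mod hζ]

lemma e_nat_mul (hζ : ζ ^ n = 1) (s : ℕ) (t : ZMod n) :
    ζ ^ (((s : ZMod n)) * t).val = (ζ ^ t.val) ^ s := by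
  induction s with
  | zero => simp
  | succ k ih =>
      have : ((k + 1 : ℕ) : ZMod n) * t = ((k : ℕ) : ZMod n) * t + t := by push_cast; ring
      rw [this, e_add hζ, ih, pow_succ]

lemma e_neg_mul (hζ : ζ ^ n = 1) (x : ZMod n) : ζ ^ (-x).val * ζ ^ x.val = 1 := by
  rw [← e_add hζ, neg_add_cancel, ZMod.val_zero, pow_zero]

lemma e_eq_one_iff (hζ : IsPrimitiveRoot ζ n) (x : ZMod n) :
    ζ ^ x.val = 1 ↔ x = 0 := by
  constructor
  · intro h
    have hlt := x.val_lt
    by_contra hx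
    have hpos : 0 < x.val := by
      rcases Nat.eq_zero_or_pos x.val with h0 | h0
      · exact absurd ((ZMod.val_eq_zero x).mp h0) hx
      · exact h0
    exact hζ.pow_ne_one_of_pos_of_lt hpos.ne' hlt h
  · intro h; rw [h, ZMod.val_zero, pow_zero]

lemma sum_val_pow (c : ℂ) : ∑ t : ZMod n, c ^ (ZMod.val t) = ∑ k ∈ Finset.range n, c ^ k := by
  rw [← Equiv.sum_comp (EZ n) (fun t => c ^ t.val)]
  simp only [EZ_val]
  exact Fin.sum_univ_eq_sum_range _ n

lemma orth (hζ : IsPrimitiveRoot ζ n) (d : ZMod n) (hd : d ≠ 0) :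
    ∑ t : ZMod n, ζ ^ (d * t).val = 0 := by
  have hζ1 : ζ ^ n = 1 := hζ.pow_eq_one
  have step : ∀ t : ZMod n, ζ ^ (d * t).val = (ζ ^ d.val) ^ t.val := by
    intro t
    have ht : d * t = ((t.val : ℕ) : ZMod n) * d := by
      rw [ZMod.natCast_rightInverse t]; ring
    rw [ht, e_nat_mul hζ1]
  simp only [step]
  rw [sum_val_pow]
  have hne1 : ζ ^ d.val ≠ 1 := fun h => hd ((e_eq_one_iff hζ d).mp h)
  rw [geom_sum_eq hne1]
  have : (ζ ^ d.val) ^ n = 1 := by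
    rw [← pow_mul, mul_comm, pow_mul, hζ1, one_pow]
  rw [this]
  simp

lemma orth_sum (hζ : IsPrimitiveRoot ζ n) (d : ZMod n) :
    ∑ t : ZMod n, ζ ^ (d * t).val = if d = 0 then (n : ℂ) else 0 := by
  by_cases hd : d = 0
  · simp only [hd, if_pos, zero_mul, ZMod.val_zero, pow_zero]
    rw [Finset.sum_const, Finset.card_univ, ZMod.card]
    simp
  · rw [if_neg hd]; exact orth hζ d hd

lemma e_half (hζ : IsPrimitiveRoot ζ n) (hn16 : 16 ≤ n) (heven : Even n) :
    ζ ^ ((((n / 2 : ℕ)) : ZMod n)).val = -1 := by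
  have hζ1 : ζ ^ n = 1 := hζ.pow_eq_one
  rw [e_nat hζ1]
  have h2 : 2 * (n / 2) = n := by
    obtain ⟨k, hk⟩ := heven; omega
  have hsq : (ζ ^ (n / 2)) ^ 2 = 1 := by
    rw [← pow_mul, mul_comm, h2, hζ1]
  have hne : ζ ^ (n / 2) ≠ 1 := hζ.pow_ne_one_of_pos_of_lt (by omega) (by omega)
  have hfac : (ζ ^ (n/2) - 1) * (ζ ^ (n/2) + 1) = 0 := by linear_combination hsq
  rcases mul_eq_zero.mp hfac with h | h
  · exact absurd (by linear_combination h) hne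
  · linear_combination h

end DFT

section Parity

variable {n : ℕ} [NeZero n]

lemma par_mod {R : Type*} [CommRing R] (heven : 2 ∣ n) (a : ℕ) :
    ((-1 : R)) ^ (a % n) = (-1) ^ a := by
  rw [neg_one_pow_eq_pow_mod_two, Nat.mod_mod_of_dvd _ heven, ← neg_one_pow_eq_pow_mod_two]

lemma par_add {R : Type*} [CommRing R] (heven : 2 ∣ n) (x : ZMod n) (s : ℕ) :
    (-1 : R) ^ ((x + (s : ZMod n)).val) = (-1) ^ (x.val) * (-1) ^ s := by
  rw [ZMod.val_add, par_mod heven, ZMod.val_natCast, pow_add, par_mod heven]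

lemma neg_one_sq_pow {R : Type*} [CommRing R] (s : ℕ) :
    (-1 : R) ^ s * (-1) ^ s = 1 := by
  rw [← pow_add]
  exact Even.neg_one_pow ⟨s, rfl⟩

lemma par_sub {R : Type*} [CommRing R] (heven : 2 ∣ n) (x : ZMod n)
    (s : ℕ) (hs : s ≤ n) :
    (-1 : R) ^ ((x - (s : ZMod n)).val) = (-1) ^ (x.val) * (-1) ^ s := by
  have hcast : x - (s : ZMod n) = x + ((n - s : ℕ) : ZMod n) := by
    have : ((n - s : ℕ) : ZMod n) = ((n : ℕ) : ZMod n) - (s : ZMod n) := by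
      push_cast [Nat.cast_sub hs]
      ring
    rw [this, ZMod.natCast_self]
    ring
  rw [hcast, par_add heven]
  congr 1
  have h1 : (-1 : R) ^ (n - s) * (-1) ^ s = (-1) ^ n := by
    rw [← pow_add]
    congr 1
    omega
  have h2 : (-1 : R) ^ n = 1 := Even.neg_one_pow (by obtain ⟨k, hk⟩ := heven; exact ⟨k, by omega⟩)
  calc (-1 : R) ^ (n - s) = (-1 : R) ^ (n-s) * ((-1)^s * (-1)^s) := by rw [neg_one_sq_pow]; ring
    _ = ((-1 : R) ^ (n-s) * (-1)^s) * (-1)^s := by ring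
    _ = (-1) ^ s := by rw [h1, h2, one_mul]

open Classical in
lemma mulVec_v (hn16 : 16 ≤ n) (heven : Even n) :
    (adjMat (circ n ({1, 2, 4, 5, 6, 7} : Finset ℕ))).mulVec
      (fun i : Fin n => (-1 : ℚ) ^ (i.val)) = 0 := by
  have h2n : 2 ∣ n := heven.two_dvd
  funext i
  have h0 : (adjMat (circ n ({1,2,4,5,6,7} : Finset ℕ))).mulVec
      (fun i : Fin n => (-1 : ℚ) ^ (i.val)) i
      = ∑ j : Fin n, (if (circ n ({1,2,4,5,6,7} : Finset ℕ)).Adj i j then (1:ℚ) else 0)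
          * (fun x : ZMod n => (-1 : ℚ) ^ x.val) ((j.val : ZMod n)) := by
    simp only [Matrix.mulVec, dotProduct, adjMat, Matrix.of_apply]
    refine Finset.sum_congr rfl fun j _ => ?_
    congr 1
    simp [ZMod.val_natCast, Nat.mod_eq_of_lt j.is_lt]
  rw [h0, adj_sum hn16 (fun x : ZMod n => (-1 : ℚ) ^ x.val) i]
  have hstep : ∀ s ∈ ({1,2,4,5,6,7} : Finset ℕ),
      ((-1 : ℚ) ^ ((i.val : ZMod n) + (s : ZMod n)).val + (-1:ℚ) ^ ((i.val : ZMod n) - (s:ZMod n)).val)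
        = (-1:ℚ)^((i.val : ZMod n)).val * ((-1)^s + (-1)^s) := by
    intro s hs
    have hs7 : s ≤ 7 ∧ 1 ≤ s := by fin_cases hs <;> omega
    rw [par_add h2n, par_sub h2n _ _ (by omega)]
    ring
  rw [Finset.sum_congr rfl hstep]
  rw [← Finset.mul_sum]
  have : ∑ s ∈ ({1,2,4,5,6,7} : Finset ℕ), ((-1:ℚ)^s + (-1)^s) = 0 := by
    rw [Finset.sum_insert (by decide), Finset.sum_insert (by decide),
      Finset.sum_insert (by decide), Finset.sum_insert (by decide),
      Finset.sum_insert (by decide), Finset.sum_singleton]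
    norm_num
  rw [this, mul_zero]
  rfl

end Parity

section Unique

variable {n : ℕ} [NeZero n] {ζ : ℂ}

lemma lambda_ne_zero' (hn0 : n ≠ 0) (μ : ℂ) (hμn : μ ^ n = 1) (hμm1 : μ ≠ -1) :
    ∑ s ∈ ({1,2,4,5,6,7} : Finset ℕ), (μ ^ s + (μ ^ s)⁻¹) ≠ 0 := by
  have hμ0 : μ ≠ 0 := by
    intro h
    rw [h, zero_pow hn0] at hμn
    exact zero_ne_one hμn
  have hexp : ∑ s ∈ ({1,2,4,5,6,7} : Finset ℕ), (μ ^ s + (μ ^ s)⁻¹)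
      = (μ^1 + (μ^1)⁻¹) + ((μ^2 + (μ^2)⁻¹) + ((μ^4 + (μ^4)⁻¹)
        + ((μ^5 + (μ^5)⁻¹) + ((μ^6 + (μ^6)⁻¹) + (μ^7 + (μ^7)⁻¹))))) := by
    rw [Finset.sum_insert (by decide), Finset.sum_insert (by decide),
      Finset.sum_insert (by decide), Finset.sum_insert (by decide),
      Finset.sum_insert (by decide), Finset.sum_singleton]
  rw [hexp]
  by_cases hμ1 : μ = 1
  · rw [hμ1]; norm_num
  · intro hΛ0
    have i1 : μ^7 * (μ^1)⁻¹ = μ^6 := by field_simp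
    have i2 : μ^7 * (μ^2)⁻¹ = μ^5 := by field_simp
    have i4 : μ^7 * (μ^4)⁻¹ = μ^3 := by field_simp
    have i5 : μ^7 * (μ^5)⁻¹ = μ^2 := by field_simp
    have i6 : μ^7 * (μ^6)⁻¹ = μ^1 := by field_simp
    have i7 : μ^7 * (μ^7)⁻¹ = 1 := by field_simp
    have h77 : μ ^ 7 * ((μ^1 + (μ^1)⁻¹) + ((μ^2 + (μ^2)⁻¹) + ((μ^4 + (μ^4)⁻¹)
        + ((μ^5 + (μ^5)⁻¹) + ((μ^6 + (μ^6)⁻¹) + (μ^7 + (μ^7)⁻¹)))))) = 0 := by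
      rw [hΛ0, mul_zero]
    have hsplit : μ ^ 7 * ((μ^1 + (μ^1)⁻¹) + ((μ^2 + (μ^2)⁻¹) + ((μ^4 + (μ^4)⁻¹)
        + ((μ^5 + (μ^5)⁻¹) + ((μ^6 + (μ^6)⁻¹) + (μ^7 + (μ^7)⁻¹))))))
        = (μ^8 + μ^9 + μ^11 + μ^12 + μ^13 + μ^14)
          + (μ^7*(μ^1)⁻¹ + μ^7*(μ^2)⁻¹ + μ^7*(μ^4)⁻¹ + μ^7*(μ^5)⁻¹ + μ^7*(μ^6)⁻¹
            + μ^7*(μ^7)⁻¹) := by ring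
    rw [hsplit, i1, i2, i4, i5, i6, i7] at h77
    have hP : μ^14 + μ^13 + μ^12 + μ^11 + μ^9 + μ^8 + μ^6 + μ^5 + μ^3 + μ^2 + μ + 1 = 0 := by
      linear_combination h77
    have hfac2 : (μ + 1)^2 * (μ^12 - μ^11 + 2*μ^10 - 2*μ^9 + 2*μ^8 - μ^7 + μ^6 - μ^5
        + 2*μ^4 - 2*μ^3 + 2*μ^2 - μ + 1) = 0 := by linear_combination hP
    have hμp1 : μ + 1 ≠ 0 := fun h => hμm1 (by linear_combination h)
    rcases mul_eq_zero.mp hfac2 with h | h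
    · exact hμp1 (pow_eq_zero_iff (two_ne_zero) |>.mp h)
    · exact R_ne_zero hn0 hμn h

lemma pow_ne_neg_one (hn16 : 16 ≤ n) (heven : Even n) (hζ : IsPrimitiveRoot ζ n)
    (t : ZMod n) (ht : t ≠ ((n / 2 : ℕ) : ZMod n)) : ζ ^ t.val ≠ -1 := by
  intro hμm1
  apply ht
  have h2 : ζ ^ (((n / 2 : ℕ) : ZMod n)).val = -1 := e_half hζ hn16 heven
  have hval : t.val = (((n / 2 : ℕ) : ZMod n)).val := by
    apply hζ.pow_inj t.val_lt (((n / 2 : ℕ) : ZMod n)).val_lt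
    rw [h2, hμm1]
  calc t = ((t.val : ℕ) : ZMod n) := (ZMod.natCast_rightInverse t).symm
    _ = ((((n / 2 : ℕ) : ZMod n)).val : ZMod n) := by rw [hval]
    _ = ((n / 2 : ℕ) : ZMod n) := ZMod.natCast_rightInverse _

open Classical in
lemma kernel_unique (hn16 : 16 ≤ n) (heven : Even n) (hζ : IsPrimitiveRoot ζ n)
    (w : Fin n → ℚ)
    (hw : (adjMat (circ n ({1,2,4,5,6,7} : Finset ℕ))).mulVec w = 0) :
    ∃ c : ℚ, w = c • (fun i : Fin n => (-1 : ℚ) ^ (i.val)) := by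
  have hζ1 : ζ ^ n = 1 := hζ.pow_eq_one
  have hn0 : n ≠ 0 := by omega
  set W : ZMod n → ℂ := fun x => ((w ((EZ n).symm x) : ℚ) : ℂ) with hW
  have hWE : ∀ j : Fin n, W ((j.val : ZMod n)) = (w j : ℂ) := by
    intro j
    have : ((j.val : ZMod n)) = EZ n j := rfl
    rw [this]
    simp only [hW, Equiv.symm_apply_apply]
  have key : ∀ x : ZMod n, ∑ s ∈ ({1,2,4,5,6,7} : Finset ℕ),
      (W (x + (s : ZMod n)) + W (x - (s : ZMod n))) = 0 := by
    intro x
    have h0 := congrFun hw ((EZ n).symm x)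
    simp only [Matrix.mulVec, dotProduct, adjMat, Matrix.of_apply, Pi.zero_apply] at h0
    have h2 := congrArg (fun q : ℚ => (q : ℂ)) h0
    push_cast [apply_ite (fun q : ℚ => (q : ℂ))] at h2
    have h3 : ∑ j : Fin n, (if (circ n ({1,2,4,5,6,7} : Finset ℕ)).Adj ((EZ n).symm x) j
        then (1:ℂ) else 0) * W ((j.val : ZMod n)) = 0 := by
      have hsc : ∑ j : Fin n, (if (circ n ({1,2,4,5,6,7} : Finset ℕ)).Adj ((EZ n).symm x) j
          then (1:ℂ) else 0) * W ((j.val : ZMod n))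
          = ∑ j : Fin n, (if (circ n ({1,2,4,5,6,7} : Finset ℕ)).Adj ((EZ n).symm x) j
          then (1:ℂ) else 0) * ((w j : ℚ) : ℂ) :=
        Finset.sum_congr rfl fun j _ => by rw [hWE j]
      rw [hsc]
      exact h2
    rw [adj_sum hn16 W ((EZ n).symm x)] at h3
    have hx : (((((EZ n).symm x) : Fin n).val : ZMod n)) = x := Equiv.apply_symm_apply (EZ n) x
    rwa [hx] at h3
  set m0 : ZMod n := ((n / 2 : ℕ) : ZMod n) with hm0
  set Wh : ZMod n → ℂ := fun t => ∑ x : ZMod n, W x * ζ ^ (x * t).val with hWh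
  -- Claim A
  have claimA : ∀ t : ZMod n, t ≠ m0 → Wh t = 0 := by
    intro t ht
    set μ : ℂ := ζ ^ t.val with hμ
    have hsum0 : ∑ x : ZMod n, ζ ^ (x*t).val
        * (∑ s ∈ ({1,2,4,5,6,7} : Finset ℕ), (W (x + (s:ZMod n)) + W (x - (s:ZMod n)))) = 0 := by
      simp only [key, mul_zero, Finset.sum_const_zero]
    have hswap : ∑ x : ZMod n, ζ ^ (x*t).val
        * (∑ s ∈ ({1,2,4,5,6,7} : Finset ℕ), (W (x + (s:ZMod n)) + W (x - (s:ZMod n))))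
        = ∑ s ∈ ({1,2,4,5,6,7} : Finset ℕ), ∑ x : ZMod n,
            (ζ ^ (x*t).val * W (x + (s:ZMod n)) + ζ ^ (x*t).val * W (x - (s:ZMod n))) := by
      simp only [Finset.mul_sum, mul_add]
      rw [Finset.sum_comm]
    have hper : ∀ s ∈ ({1,2,4,5,6,7} : Finset ℕ), ∑ x : ZMod n,
        (ζ ^ (x*t).val * W (x + (s:ZMod n)) + ζ ^ (x*t).val * W (x - (s:ZMod n)))
        = (μ^s + (μ^s)⁻¹) * Wh t := by
      intro s _
      have ha : ζ ^ (((s : ZMod n)) * t).val = μ ^ s := e_nat_mul hζ1 s t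
      have hainv : ζ ^ (-(((s : ZMod n)) * t)).val = (μ ^ s)⁻¹ := by
        have := e_neg_mul hζ1 (((s : ZMod n)) * t)
        rw [ha] at this
        exact eq_inv_of_mul_eq_one_left this
      rw [Finset.sum_add_distrib]
      have hfirst : ∑ x : ZMod n, ζ ^ (x*t).val * W (x + (s:ZMod n))
          = (μ^s)⁻¹ * Wh t := by
        rw [← Equiv.sum_comp (Equiv.subRight ((s : ZMod n)))
          (fun x => ζ ^ (x*t).val * W (x + (s:ZMod n)))]
        simp only [Equiv.subRight_apply, sub_add_cancel]
        rw [hWh, Finset.mul_sum]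
        refine Finset.sum_congr rfl fun y _ => ?_
        have harg : (y - (s:ZMod n)) * t = y * t + (-(((s:ZMod n)) * t)) := by ring
        rw [harg, e_add hζ1, hainv]
        ring
      have hsecond : ∑ x : ZMod n, ζ ^ (x*t).val * W (x - (s:ZMod n))
          = (μ^s) * Wh t := by
        rw [← Equiv.sum_comp (Equiv.addRight ((s : ZMod n)))
          (fun x => ζ ^ (x*t).val * W (x - (s:ZMod n)))]
        simp only [Equiv.coe_addRight, add_sub_cancel_right]
        rw [hWh, Finset.mul_sum]
        refine Finset.sum_congr rfl fun y _ => ?_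
        have harg : (y + (s:ZMod n)) * t = y * t + (((s:ZMod n)) * t) := by ring
        rw [harg, e_add hζ1, ha]
        ring
      rw [hfirst, hsecond]
      ring
    have hfin : (∑ s ∈ ({1,2,4,5,6,7} : Finset ℕ), (μ^s + (μ^s)⁻¹)) * Wh t = 0 := by
      rw [Finset.sum_mul, ← Finset.sum_congr rfl hper, ← hswap, hsum0]
    rcases mul_eq_zero.mp hfin with h | h
    · have hμn : (ζ ^ t.val) ^ n = 1 := by rw [← pow_mul, mul_comm, pow_mul, hζ1, one_pow]
      exact absurd h (lambda_ne_zero' hn0 (ζ ^ t.val) hμn (pow_ne_neg_one hn16 heven hζ t ht))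
    · exact h
  -- Claim B
  have claimB : ∀ x : ZMod n, (n : ℂ) * W x = Wh m0 * (-1 : ℂ) ^ (x.val) := by
    intro x
    have hinv : ∑ t : ZMod n, Wh t * ζ ^ (-(x * t)).val = (n:ℂ) * W x := by
      calc ∑ t : ZMod n, Wh t * ζ ^ (-(x*t)).val
          = ∑ t : ZMod n, ∑ y : ZMod n, W y * (ζ ^ (y*t).val * ζ ^ (-(x*t)).val) := by
            refine Finset.sum_congr rfl fun t _ => ?_
            rw [hWh, Finset.sum_mul]
            refine Finset.sum_congr rfl fun y _ => ?_
            ring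
        _ = ∑ t : ZMod n, ∑ y : ZMod n, W y * ζ ^ ((y - x)*t).val := by
            refine Finset.sum_congr rfl fun t _ => Finset.sum_congr rfl fun y _ => ?_
            have harg : (y - x) * t = y * t + (-(x * t)) := by ring
            rw [harg, e_add hζ1]
        _ = ∑ y : ZMod n, ∑ t : ZMod n, W y * ζ ^ ((y - x)*t).val := Finset.sum_comm
        _ = ∑ y : ZMod n, W y * (if y - x = 0 then (n:ℂ) else 0) := by
            refine Finset.sum_congr rfl fun y _ => ?_
            rw [← Finset.mul_sum, orth_sum hζ]
        _ = (n:ℂ) * W x := by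
            simp only [sub_eq_zero, mul_ite, mul_zero]
            rw [Finset.sum_ite_eq' Finset.univ x (fun y => W y * (n:ℂ))]
            rw [if_pos (Finset.mem_univ x)]
            ring
    have hsingle : ∑ t : ZMod n, Wh t * ζ ^ (-(x * t)).val = Wh m0 * ζ ^ (-(x * m0)).val := by
      apply Finset.sum_eq_single m0
      · intro t _ ht
        rw [claimA t ht, zero_mul]
      · intro h
        exact absurd (Finset.mem_univ m0) h
    have hlast : ζ ^ (-(x * m0)).val = (-1 : ℂ) ^ (x.val) := by
      have h1 : ζ ^ (x * m0).val = (-1:ℂ) ^ (x.val) := by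
        have harg : x * m0 = ((x.val : ℕ) : ZMod n) * m0 := by
          rw [ZMod.natCast_rightInverse x]
        rw [harg, e_nat_mul hζ1, hm0, e_half hζ hn16 heven]
      have h2 := e_neg_mul hζ1 (x * m0)
      rw [h1] at h2
      have h3 : ((-1:ℂ) ^ (x.val)) * ((-1:ℂ) ^ (x.val)) = 1 := neg_one_sq_pow _
      calc ζ ^ (-(x * m0)).val
          = ζ ^ (-(x * m0)).val * (((-1:ℂ) ^ (x.val)) * ((-1:ℂ) ^ (x.val))) := by
            rw [h3]; ring
        _ = (ζ ^ (-(x * m0)).val * ((-1:ℂ) ^ (x.val))) * ((-1:ℂ) ^ (x.val)) := by ring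
        _ = (-1:ℂ) ^ (x.val) := by rw [h2, one_mul]
    rw [← hinv, hsingle, hlast]
  -- Conclude
  have hcn0 : (n:ℂ) ≠ 0 := Nat.cast_ne_zero.mpr hn0
  refine ⟨w ((EZ n).symm 0), ?_⟩
  funext i
  have hx := claimB (EZ n i)
  have h00 := claimB 0
  rw [ZMod.val_zero, pow_zero, mul_one] at h00
  rw [← h00] at hx
  have hWi : W (EZ n i) = (w i : ℂ) := by
    rw [hW]
    simp only [Equiv.symm_apply_apply]
  have hval : (EZ n i).val = i.val := EZ_val i
  rw [hWi, hval] at hx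
  have hW0 : W 0 = (w ((EZ n).symm 0) : ℂ) := rfl
  rw [hW0] at hx
  have hfinal : (w i : ℂ) = ((w ((EZ n).symm 0) * (-1 : ℚ) ^ (i.val) : ℚ) : ℂ) := by
    push_cast
    have hx' : (n:ℂ) * (w i : ℂ) = (n:ℂ) * ((w ((EZ n).symm 0) : ℂ) * (-1) ^ (i.val : ℕ)) := by
      linear_combination hx
    exact mul_left_cancel₀ hcn0 hx'
  have : w i = w ((EZ n).symm 0) * (-1 : ℚ) ^ (i.val) := by exact_mod_cast hfinal
  simp only [Pi.smul_apply, smul_eq_mul]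
  exact this

end Unique

end CircNutAux

/-- For every even `n ≥ 16`, the circulant graph
`Circ(n, {1,2,4,5,6,7})` is a nut graph. -/
theorem circulant_nut_124567
    (n : ℕ) (hn : 16 ≤ n) (hneven : Even n) :
    IsNutGraph (circ n ({1, 2, 4, 5, 6, 7} : Finset ℕ)) := by
  have hNZ : NeZero n := ⟨by omega⟩
  have hζ : IsPrimitiveRoot (Complex.exp (2 * Real.pi * Complex.I / n)) n :=
    Complex.isPrimitiveRoot_exp n (by omega)
  exact ⟨by omega, fun i : Fin n => (-1 : ℚ) ^ (i.val),
    fun i => pow_ne_zero _ (by norm_num),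
    CircNutAux.mulVec_v hn hneven,
    fun w hw => CircNutAux.kernel_unique hn hneven hζ w hw⟩
end

section
/- For every even integer n ≥ 8 there exists a set S ⊆ {1, …, n/2 − 1} such that the circulant graph Circ(n, S) is a 4-regular nut graph. -/
open Finset Polynomial

/- ### Auxiliary lemmas -/

private lemma nut_nz {n k : ℕ} [NeZero n] (hk : 0 < k) (hkn : k < n) : (k : ZMod n) ≠ 0 := by
  intro h
  rw [ZMod.natCast_eq_zero_iff] at h
  exact absurd (Nat.le_of_dvd hk h) (not_le.mpr hkn)

private lemma nut_pow_congr {a b : ℕ} (h : a % 2 = b % 2) : (-1:ℚ)^a = (-1)^b := by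
  conv_lhs => rw [← Nat.div_add_mod a 2]
  conv_rhs => rw [← Nat.div_add_mod b 2]
  rw [h, pow_add, pow_add, pow_mul, pow_mul]
  norm_num

private lemma nut_mod2 {n k : ℕ} (h2 : 2 ∣ n) (hn : n ≠ 0) : (k % n) % 2 = k % 2 := by
  have : k % n ≡ k [MOD n] := Nat.mod_modEq k n
  exact Nat.ModEq.of_dvd h2 this

private lemma nut_pow_val {n : ℕ} [NeZero n] (h2 : 2 ∣ n) (k : ℕ) :
    (-1:ℚ) ^ ((k : ZMod n)).val = (-1) ^ k := by
  rw [ZMod.val_natCast]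
  exact nut_pow_congr (nut_mod2 h2 (NeZero.ne n))

private lemma nut_pow_add {n : ℕ} [NeZero n] (h2 : 2 ∣ n) (x y : ZMod n) :
    (-1:ℚ) ^ ((x + y).val) = (-1) ^ x.val * (-1) ^ y.val := by
  have : x + y = (((x.val + y.val : ℕ)) : ZMod n) := by
    rw [Nat.cast_add, ZMod.natCast_zmod_val, ZMod.natCast_zmod_val]
  rw [this, nut_pow_val h2, pow_add]

private lemma nut_sub_natCast {n : ℕ} [NeZero n] (x : ZMod n) {a : ℕ} (h : a ≤ n) :
    x - (a : ZMod n) = x + ((n - a : ℕ) : ZMod n) := by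
  have h0 : ((a : ℕ) : ZMod n) + ((n - a : ℕ) : ZMod n) = 0 := by
    rw [← Nat.cast_add, Nat.add_sub_cancel' h, ZMod.natCast_self]
  linear_combination -h0

private lemma nut_pow_nsub {n a : ℕ} (h2 : 2 ∣ n) (h : a ≤ n) :
    (-1:ℚ) ^ (n - a) = (-1) ^ a := by
  have h1 : (-1:ℚ)^(n-a) * (-1)^a = 1 := by
    rw [← pow_add, Nat.sub_add_cancel h]
    exact Even.neg_one_pow (even_iff_two_dvd.mpr h2)
  have h2' : (-1:ℚ)^a * (-1)^a = 1 := by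
    rw [← pow_add]; exact Even.neg_one_pow ⟨a, rfl⟩
  calc (-1:ℚ)^(n-a) = (-1)^(n-a) * ((-1)^a * (-1)^a) := by rw [h2', mul_one]
    _ = ((-1)^(n-a) * (-1)^a) * (-1)^a := by ring
    _ = (-1)^a := by rw [h1, one_mul]

private lemma nut_pow_plus {n : ℕ} [NeZero n] (h2 : 2 ∣ n) (x : ZMod n) (k : ℕ) :
    (-1:ℚ) ^ ((x + (k : ZMod n)).val) = (-1) ^ x.val * (-1) ^ k := by
  rw [nut_pow_add h2, nut_pow_val h2]

private lemma nut_pow_minus {n : ℕ} [NeZero n] (h2 : 2 ∣ n) (x : ZMod n) {k : ℕ} (hk : k ≤ n) :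
    (-1:ℚ) ^ ((x - (k : ZMod n)).val) = (-1) ^ x.val * (-1) ^ k := by
  rw [nut_sub_natCast x hk, nut_pow_add h2, nut_pow_val h2, nut_pow_nsub h2 hk]

private lemma nut_iota_inj {n : ℕ} [NeZero n] {i j : Fin n}
    (h : ((i.val : ℕ) : ZMod n) = ((j.val : ℕ) : ZMod n)) : i = j := by
  have h2 := congrArg ZMod.val h
  rw [ZMod.val_cast_of_lt i.isLt, ZMod.val_cast_of_lt j.isLt] at h2
  exact Fin.ext h2

open Classical in
private lemma nut_adj_iff {n a : ℕ} (ha : 1 ≤ a) (hb : 2*a + 4 ≤ n) (i j : Fin n) :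
    (circ n {a, a+1}).Adj i j ↔
      (((j.val : ℕ) : ZMod n) = ((i.val : ℕ) : ZMod n) + (a : ZMod n) ∨
       ((j.val : ℕ) : ZMod n) = ((i.val : ℕ) : ZMod n) - (a : ZMod n) ∨
       ((j.val : ℕ) : ZMod n) = ((i.val : ℕ) : ZMod n) + ((a : ZMod n) + 1) ∨
       ((j.val : ℕ) : ZMod n) = ((i.val : ℕ) : ZMod n) - ((a : ZMod n) + 1)) := by
  haveI : NeZero n := ⟨by omega⟩
  have hanz : ((a : ℕ) : ZMod n) ≠ 0 := nut_nz ha (by omega)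
  have ha1nz : ((a : ZMod n) + 1) ≠ 0 := by
    have := nut_nz (n := n) (k := a+1) (by omega) (by omega)
    intro h; apply this; push_cast; linear_combination h
  constructor
  · rintro ⟨hne, s, hs, h⟩
    simp only [Finset.mem_insert, Finset.mem_singleton] at hs
    rcases hs with rfl | rfl
    · rcases h with h | h
      · right; left; linear_combination -h
      · left; linear_combination h
    · rcases h with h | h
      · right; right; right; push_cast at h; linear_combination -h
      · right; right; left; push_cast at h; linear_combination h
  · intro h
    rcases h with h | h | h | h
    · refine ⟨fun he => hanz ?_, a, by simp, Or.inr (by linear_combination h)⟩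
      subst he; linear_combination -h
    · refine ⟨fun he => hanz ?_, a, by simp, Or.inl (by linear_combination -h)⟩
      subst he; linear_combination h
    · refine ⟨fun he => ha1nz ?_, a+1, by simp, Or.inr (by push_cast; linear_combination h)⟩
      subst he; linear_combination -h
    · refine ⟨fun he => ha1nz ?_, a+1, by simp, Or.inl (by push_cast; linear_combination -h)⟩
      subst he; linear_combination h

open Classical in
private lemma nut_adj_sum {M : Type*} [AddCommMonoid M] {n a : ℕ} (ha : 1 ≤ a)
    (hb : 2*a + 4 ≤ n) (i : Fin n) (f : ZMod n → M) :
    (∑ j : Fin n, if (circ n {a, a+1}).Adj i j then f ((j.val : ℕ) : ZMod n) else 0) =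
      f (((i.val : ℕ) : ZMod n) + (a : ZMod n)) + f (((i.val : ℕ) : ZMod n) - (a : ZMod n))
        + f (((i.val : ℕ) : ZMod n) + ((a : ZMod n) + 1))
        + f (((i.val : ℕ) : ZMod n) - ((a : ZMod n) + 1)) := by
  haveI : NeZero n := ⟨by omega⟩
  set x : ZMod n := ((i.val : ℕ) : ZMod n) with hx
  have d1 : x + (a : ZMod n) ≠ x - (a : ZMod n) := by
    intro h
    apply nut_nz (n := n) (k := 2*a) (by omega) (by omega)
    push_cast; linear_combination h
  have d2 : x + (a : ZMod n) ≠ x + ((a : ZMod n) + 1) := by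
    intro h
    apply nut_nz (n := n) (k := 1) (by omega) (by omega)
    push_cast; linear_combination -h
  have d3 : x + (a : ZMod n) ≠ x - ((a : ZMod n) + 1) := by
    intro h
    apply nut_nz (n := n) (k := 2*a+1) (by omega) (by omega)
    push_cast; linear_combination h
  have d4 : x - (a : ZMod n) ≠ x + ((a : ZMod n) + 1) := by
    intro h
    apply nut_nz (n := n) (k := 2*a+1) (by omega) (by omega)
    push_cast; linear_combination -h
  have d5 : x - (a : ZMod n) ≠ x - ((a : ZMod n) + 1) := by
    intro h
    apply nut_nz (n := n) (k := 1) (by omega) (by omega)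
    push_cast; linear_combination h
  have d6 : x + ((a : ZMod n) + 1) ≠ x - ((a : ZMod n) + 1) := by
    intro h
    apply nut_nz (n := n) (k := 2*a+2) (by omega) (by omega)
    push_cast; linear_combination h
  let e : Fin n ≃ ZMod n :=
    { toFun := fun j => ((j.val : ℕ) : ZMod n)
      invFun := fun y => ⟨y.val, y.val_lt⟩
      left_inv := fun j => Fin.ext (ZMod.val_cast_of_lt j.isLt)
      right_inv := fun y => ZMod.natCast_zmod_val y }
  let T : Finset (ZMod n) :=
    {x + (a : ZMod n), x - (a : ZMod n), x + ((a : ZMod n) + 1), x - ((a : ZMod n) + 1)}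
  have step1 : (∑ j : Fin n, if (circ n {a, a+1}).Adj i j then f ((j.val : ℕ) : ZMod n) else 0)
      = ∑ y : ZMod n, (if y ∈ T then f y else 0) := by
    refine Fintype.sum_bijective e e.bijective _ _ fun j => ?_
    have hT : (circ n {a, a+1}).Adj i j ↔ e j ∈ T := by
      rw [nut_adj_iff ha hb i j]
      simp only [T, e, Finset.mem_insert, Finset.mem_singleton, Equiv.coe_fn_mk]
      exact Iff.rfl
    by_cases h : (circ n {a, a+1}).Adj i j
    · rw [if_pos h, if_pos (hT.1 h)]; rfl
    · rw [if_neg h, if_neg (fun hm => h (hT.2 hm))]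
  rw [step1, Finset.sum_ite_mem, Finset.univ_inter]
  have hm1 : x + (a : ZMod n) ∉
      ({x - (a : ZMod n), x + ((a : ZMod n) + 1), x - ((a : ZMod n) + 1)} : Finset (ZMod n)) := by
    simp [d1, d2, d3]
  have hm2 : x - (a : ZMod n) ∉
      ({x + ((a : ZMod n) + 1), x - ((a : ZMod n) + 1)} : Finset (ZMod n)) := by
    simp [d4, d5]
  have hm3 : x + ((a : ZMod n) + 1) ∉ ({x - ((a : ZMod n) + 1)} : Finset (ZMod n)) := by
    simp [d6]
  rw [show T = insert (x + (a : ZMod n)) {x - (a : ZMod n), x + ((a : ZMod n) + 1),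
      x - ((a : ZMod n) + 1)} from rfl,
    Finset.sum_insert hm1, Finset.sum_insert hm2, Finset.sum_insert hm3, Finset.sum_singleton]
  simp only [add_assoc]

open Classical in
private lemma nut_main {n a : ℕ} (hn : 8 ≤ n) (h2 : 2 ∣ n) (ha : 1 ≤ a) (hb : 2*a + 4 ≤ n)
    (hco : Nat.Coprime (2*a+1) n) :
    IsNutGraph (circ n {a, a+1}) ∧ IsRegularGraph (circ n {a, a+1}) 4 := by
  haveI : NeZero n := ⟨by omega⟩
  -- mulVec entries
  have hmul : ∀ (w : Fin n → ℚ) (i : Fin n),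
      (adjMat (circ n {a, a+1})).mulVec w i =
        (fun y : ZMod n => w ⟨y.val, y.val_lt⟩) (((i.val : ℕ) : ZMod n) + (a : ZMod n))
        + (fun y : ZMod n => w ⟨y.val, y.val_lt⟩) (((i.val : ℕ) : ZMod n) - (a : ZMod n))
        + (fun y : ZMod n => w ⟨y.val, y.val_lt⟩) (((i.val : ℕ) : ZMod n) + ((a : ZMod n) + 1))
        + (fun y : ZMod n => w ⟨y.val, y.val_lt⟩) (((i.val : ℕ) : ZMod n) - ((a : ZMod n) + 1)) := by
    intro w i
    have hwj : ∀ j : Fin n, (fun y : ZMod n => w ⟨y.val, y.val_lt⟩) ((j.val : ℕ) : ZMod n) = w j := by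
      intro j
      simp only
      congr 1
      exact Fin.ext (ZMod.val_cast_of_lt j.isLt)
    have step : (adjMat (circ n {a, a+1})).mulVec w i
        = ∑ j : Fin n, (if (circ n {a, a+1}).Adj i j then
            (fun y : ZMod n => w ⟨y.val, y.val_lt⟩) ((j.val : ℕ) : ZMod n) else 0) := by
      simp only [Matrix.mulVec, dotProduct, adjMat, Matrix.of_apply, ite_mul, one_mul,
        zero_mul]
      beta_reduce
      refine Finset.sum_congr rfl fun j _ => ?_
      by_cases h : (circ n {a, a+1}).Adj i j
      · rw [if_pos h, if_pos h]; exact (hwj j).symm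
      · rw [if_neg h, if_neg h]
    exact step.trans (nut_adj_sum ha hb i (fun y : ZMod n => w ⟨y.val, y.val_lt⟩))
  have hreg : IsRegularGraph (circ n {a, a+1}) 4 := by
    intro i
    have h1 : degOf (circ n {a, a+1}) i
        = ∑ j : Fin n, if (circ n {a, a+1}).Adj i j then
            (fun _ : ZMod n => (1:ℕ)) ((j.val : ℕ) : ZMod n) else 0 := by
      rw [degOf, Finset.card_filter]
    rw [h1]
    exact (nut_adj_sum ha hb i (fun _ => (1:ℕ))).trans rfl
  refine ⟨⟨by omega, fun i : Fin n => (-1:ℚ)^(i.val), fun i => pow_ne_zero _ (by norm_num), ?_, ?_⟩,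
    hreg⟩
  · -- the alternating vector is in the kernel
    funext i
    have hc : ((a : ZMod n) + 1) = ((a + 1 : ℕ) : ZMod n) := by push_cast; ring
    have key : ∀ y : ZMod n,
        (fun y : ZMod n => ((fun i : Fin n => (-1:ℚ)^(i.val)) (⟨y.val, y.val_lt⟩ : Fin n))) y
          = (-1:ℚ)^(y.val) := fun y => rfl
    rw [Pi.zero_apply, hmul (fun i : Fin n => (-1:ℚ)^(i.val)) i]
    rw [key, key, key, key, hc, nut_pow_plus h2 _ a,
      nut_pow_minus h2 _ (show a ≤ n by omega),
      nut_pow_plus h2 _ (a+1), nut_pow_minus h2 _ (show a+1 ≤ n by omega), pow_succ]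
    ring
  · -- uniqueness of the kernel vector
    intro w hw
    set W : ZMod n → ℚ := fun y => w ⟨y.val, y.val_lt⟩ with hWdef
    have h0 : ∀ x : ZMod n, W (x + (a : ZMod n)) + W (x - (a : ZMod n))
        + W (x + ((a : ZMod n) + 1)) + W (x - ((a : ZMod n) + 1)) = 0 := by
      intro x
      have hcf := congrFun hw (⟨x.val, x.val_lt⟩ : Fin n)
      rw [hmul w (⟨x.val, x.val_lt⟩ : Fin n), Pi.zero_apply] at hcf
      have e0 : ((Fin.val (⟨x.val, x.val_lt⟩ : Fin n) : ℕ) : ZMod n) = x :=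
        ZMod.natCast_zmod_val x
      rw [e0] at hcf
      exact hcf
    set u : ZMod n → ℚ := fun y => W y + W (y + 1) with hudef
    have hu : ∀ x : ZMod n, u (x + ((2*a+1 : ℕ) : ZMod n)) = - u x := by
      intro x
      have h := h0 (x + ((a : ZMod n) + 1))
      have e1 : x + ((a : ZMod n)+1) + (a : ZMod n) = x + ((2*a+1 : ℕ) : ZMod n) := by
        push_cast; ring
      have e2 : x + ((a : ZMod n)+1) - (a : ZMod n) = x + 1 := by ring
      have e3 : x + ((a : ZMod n)+1) + ((a : ZMod n)+1)
          = (x + ((2*a+1 : ℕ) : ZMod n)) + 1 := by push_cast; ring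
      have e4 : x + ((a : ZMod n)+1) - ((a : ZMod n)+1) = x := by ring
      rw [e1, e2, e3, e4] at h
      simp only [u]
      linarith [h]
    have hk : ∀ (k : ℕ) (x : ZMod n),
        u (x + ((k * (2*a+1) : ℕ) : ZMod n)) = (-1)^k * u x := by
      intro k
      induction k with
      | zero => intro x; simp
      | succ k ih =>
        intro x
        have e1 : x + (((k+1) * (2*a+1) : ℕ) : ZMod n)
            = (x + ((k * (2*a+1) : ℕ) : ZMod n)) + ((2*a+1 : ℕ) : ZMod n) := by
          push_cast; ring
        rw [e1, hu, ih, pow_succ]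
        ring
    have huval : ∀ x : ZMod n, u x = (-1)^(x.val) * u 0 := by
      intro x
      set c : (ZMod n)ˣ := ZMod.unitOfCoprime (2*a+1) hco with hcdef
      set k : ℕ := (x * ((c⁻¹ : (ZMod n)ˣ) : ZMod n)).val with hkdef
      have hcx : ((k * (2*a+1) : ℕ) : ZMod n) = x := by
        rw [Nat.cast_mul, ZMod.natCast_zmod_val]
        have hcc : ((2*a+1 : ℕ) : ZMod n) = (c : ZMod n) :=
          (ZMod.coe_unitOfCoprime _ hco).symm
        rw [hcc]
        calc x * ((c⁻¹ : (ZMod n)ˣ) : ZMod n) * (c : ZMod n)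
            = x * (((c⁻¹ : (ZMod n)ˣ) : ZMod n) * (c : ZMod n)) := by ring
          _ = x := by rw [← Units.val_mul, inv_mul_cancel, Units.val_one, mul_one]
      have hpar : (-1:ℚ)^k = (-1)^(x.val) := by
        have hval : x.val = (k * (2*a+1)) % n := by rw [← hcx, ZMod.val_natCast]
        have m1 : k * (2*a+1) ≡ x.val [MOD n] := by
          rw [hval]; exact (Nat.mod_modEq _ _).symm
        have m2 : k * (2*a+1) % 2 = x.val % 2 := Nat.ModEq.of_dvd h2 m1
        have m3 : k * (2*a+1) = 2*(k*a) + k := by ring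
        exact nut_pow_congr (by omega)
      have hres := hk k 0
      rw [zero_add, hcx] at hres
      rw [hres, hpar]
    have hsum0 : (∑ y : ZMod n, (-1:ℚ)^(y.val) * u y) = 0 := by
      have split : ∀ y : ZMod n, (-1:ℚ)^(y.val) * u y
          = (-1)^(y.val) * W y + (-1)^(y.val) * W (y+1) := by
        intro y; simp only [u]; ring
      rw [Finset.sum_congr rfl fun y _ => split y, Finset.sum_add_distrib]
      have reidx : (∑ y : ZMod n, (-1:ℚ)^(y.val) * W (y+1))
          = ∑ z : ZMod n, (-1:ℚ)^((z - 1).val) * W z := by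
        refine Fintype.sum_bijective (Equiv.addRight (1 : ZMod n))
          (Equiv.bijective _) _ _ fun y => ?_
        simp
      rw [reidx]
      have hterm : ∀ z : ZMod n, (-1:ℚ)^((z - 1).val) * W z = -((-1)^(z.val) * W z) := by
        intro z
        have h1 : (-1:ℚ)^((z - ((1:ℕ) : ZMod n)).val) = (-1)^(z.val) * (-1)^(1:ℕ) :=
          nut_pow_minus h2 z (by omega)
        rw [show ((1:ℕ) : ZMod n) = (1 : ZMod n) from Nat.cast_one] at h1
        rw [h1]; ring
      rw [Finset.sum_congr rfl fun z _ => hterm z, Finset.sum_neg_distrib]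
      ring
    have hsumn : (∑ y : ZMod n, (-1:ℚ)^(y.val) * u y) = n * u 0 := by
      have hpt : ∀ y : ZMod n, (-1:ℚ)^(y.val) * u y = u 0 := by
        intro y
        rw [huval y, ← mul_assoc, ← pow_add]
        rw [Even.neg_one_pow ⟨y.val, rfl⟩, one_mul]
      rw [Finset.sum_congr rfl fun y _ => hpt y, Finset.sum_const, Finset.card_univ,
        ZMod.card, nsmul_eq_mul]
    have hu0 : u 0 = 0 := by
      have hne : (n:ℚ) ≠ 0 := Nat.cast_ne_zero.2 (by omega)
      have h := hsum0
      rw [hsumn] at h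
      exact (mul_eq_zero.1 h).resolve_left hne
    have hWstep : ∀ x : ZMod n, W (x + 1) = - W x := by
      intro x
      have h := huval x
      rw [hu0, mul_zero] at h
      simp only [u] at h
      linarith
    have hWnat : ∀ k : ℕ, W ((k : ZMod n)) = (-1)^k * W 0 := by
      intro k
      induction k with
      | zero => simp
      | succ k ih =>
        have e1 : ((k+1 : ℕ) : ZMod n) = ((k : ℕ) : ZMod n) + 1 := by push_cast; ring
        rw [e1, hWstep, ih, pow_succ]
        ring
    refine ⟨W 0, funext fun i => ?_⟩
    have h1 : w i = W ((i.val : ℕ) : ZMod n) := by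
      simp only [W]
      congr 1
      exact (Fin.ext (ZMod.val_cast_of_lt i.isLt)).symm
    have h2' : W ((i.val : ℕ) : ZMod n) = (-1)^(i.val) * W 0 := by
      rw [hWnat i.val]
    rw [h1, h2']
    simp only [Pi.smul_apply, smul_eq_mul]
    ring

/-- For every even `n ≥ 8` there exists `S ⊆ {1,…,n/2−1}` such
that `Circ(n, S)` is a `4`-regular nut graph. -/
theorem exists_4_regular_circulant_nut
    (n : ℕ) (hn : 8 ≤ n) (hneven : Even n) :
    ∃ S : Finset ℕ, S ⊆ Finset.Icc 1 (n / 2 - 1) ∧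
      IsNutGraph (circ n S) ∧ IsRegularGraph (circ n S) 4 := by
  obtain ⟨m, hm⟩ := hneven
  rcases Nat.even_or_odd (n / 2) with he | ho
  · obtain ⟨q, hq⟩ := he
    obtain ⟨p, rfl⟩ : ∃ p, n = 4*p + 8 := ⟨n/4 - 2, by omega⟩
    have hco : Nat.Coprime (2*(p+1)+1) (4*p+8) := by
      rw [show 2*(p+1)+1 = 2*p+3 from by ring, show 4*p+8 = 2*(2*p+4) from by ring]
      have c1 : Nat.Coprime (2*p+3) 2 := Nat.coprime_two_right.2 ⟨p+1, by ring⟩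
      have c2 : Nat.Coprime (2*p+3+1) (2*p+3) := by simp
      rw [show 2*p+3+1 = 2*p+4 from by ring] at c2
      exact Nat.Coprime.mul_right c1 c2.symm
    have hmain := nut_main (n := 4*p+8) (a := p+1) (by omega) ⟨2*p+4, by ring⟩
      (by omega) (by omega) hco
    refine ⟨{p+1, p+1+1}, ?_, hmain.1, hmain.2⟩
    intro s hs
    simp only [Finset.mem_insert, Finset.mem_singleton] at hs
    rw [Finset.mem_Icc]
    rcases hs with rfl | rfl <;> omega
  · obtain ⟨q, hq⟩ := ho
    obtain ⟨r, rfl, hr⟩ : ∃ r, n = 4*r + 2 ∧ 2 ≤ r := ⟨n/4, by omega⟩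
    have hco : Nat.Coprime (2*(r+1)+1) (4*r+2) := by
      rw [show 2*(r+1)+1 = 2*r+3 from by ring, show 4*r+2 = 2*(2*r+1) from by ring]
      have c1 : Nat.Coprime (2*r+3) 2 := Nat.coprime_two_right.2 ⟨r+1, by ring⟩
      have c2 : Nat.Coprime (2*r+1+2) (2*r+1) :=
        (Nat.coprime_self_add_left).2 (Nat.coprime_two_left.2 ⟨r, by ring⟩)
      rw [show 2*r+1+2 = 2*r+3 from by ring] at c2
      exact Nat.Coprime.mul_right c1 c2
    have hmain := nut_main (n := 4*r+2) (a := r+1) (by omega) ⟨2*r+1, by ring⟩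
      (by omega) (by omega) hco
    refine ⟨{r+1, r+1+1}, ?_, hmain.1, hmain.2⟩
    intro s hs
    simp only [Finset.mem_insert, Finset.mem_singleton] at hs
    rw [Finset.mem_Icc]
    rcases hs with rfl | rfl <;> omega
end
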